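/- arXiv:1405.2681 — 8 statements merged into one kernel-verified Lean document; each statement's English description precedes it below -/
import Mathlib

section
/- Let λ > 0 and let m̲ ≥ 2 be an integer with N ≥ m̲ almost surely (so m̲ = essinf N > 1). Assume E[(min_{1≤i≤p} Σ_{j=1}^p (A_1)_{ij})^{−λ}] < ∞ and E[∏_{k=1}^{m̲} (min_{1≤i≤p} Σ_{j=1}^p (A_k)_{ij})^{−λ}] < ∞. Then: (1) φ(t) = O(‖t‖^{−m̲λ}) as ‖t‖ → ∞; (2) for every fixed nonzero y ∈ [0,∞)^p, P(y·Z ≤ x) = O(x^{m̲λ}) as x → 0; and (3) for every fixed nonzero y ∈ [0,∞)^p and every 0 < λ₁ < λ, E[(y·Z)^{−m̲λ₁}] < ∞. -/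
open MeasureTheory ProbabilityTheory Filter
open scoped ENNReal Topology

private lemma hm_lemA (h : ℝ → ℝ) (hanti : Antitone h) (h0 : ∀ s, 0 ≤ h s) (h1 : ∀ s, h s ≤ 1)
    (lam K : ℝ) (hlam : 0 < lam) (hK : 1 ≤ K)
    (hrec : ∀ s c : ℝ, 0 ≤ s → 0 < c → c ≤ 1 → h s ≤ 2 * (h (s * c)) ^ 2 + K * c ^ lam)
    (hsmall : ∃ S₁ : ℝ, 1 ≤ S₁ ∧ h S₁ ≤ 1 / 16) :
    ∃ β C : ℝ, 0 < β ∧ β ≤ lam / 4 ∧ 1 ≤ C ∧ ∀ u : ℝ, 0 < u → h u ≤ C * u ^ (-β) := by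
  obtain ⟨S₁, hS₁, hS₁small⟩ := hsmall
  set S : ℝ := max (max S₁ 4) ((8 * K) ^ (4 / lam)) with hSdef
  have hS4 : (4:ℝ) ≤ S := le_max_of_le_left (le_max_right _ _)
  have hSS₁ : S₁ ≤ S := le_max_of_le_left (le_max_left _ _)
  have hS1 : (1:ℝ) < S := lt_of_lt_of_le (by norm_num) hS4
  have hS0 : (0:ℝ) < S := lt_trans one_pos hS1
  have hSK : (8 * K) ^ (4 / lam) ≤ S := le_max_right _ _
  have hlogS : 0 < Real.log S := Real.log_pos hS1
  set β : ℝ := min (lam / 4) (Real.log 2 / Real.log S) with hβdef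
  have hβpos : 0 < β := lt_min (by positivity) (div_pos (Real.log_pos one_lt_two) hlogS)
  have hβlam : β ≤ lam / 4 := min_le_left _ _
  have h8K0 : (0:ℝ) < 8 * K := by linarith
  have key1 : 8 * K ≤ S ^ (lam / 4) := by
    have e1 : (4 / lam) * (lam / 4) = 1 := by field_simp
    calc 8 * K = (8 * K) ^ ((4 / lam) * (lam / 4)) := by rw [e1, Real.rpow_one]
      _ = ((8 * K) ^ (4 / lam)) ^ (lam / 4) := Real.rpow_mul h8K0.le _ _
      _ ≤ S ^ (lam / 4) := Real.rpow_le_rpow (Real.rpow_nonneg h8K0.le _) hSK (by positivity)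
  have key2 : S ^ (2 * β) ≤ 4 := by
    have hb2 : 2 * β ≤ 2 * (Real.log 2 / Real.log S) :=
      mul_le_mul_of_nonneg_left (min_le_right _ _) (by norm_num)
    rw [Real.rpow_def_of_pos hS0]
    have : Real.log S * (2 * β) ≤ 2 * Real.log 2 := by
      have := mul_le_mul_of_nonneg_left hb2 hlogS.le
      calc Real.log S * (2 * β) ≤ Real.log S * (2 * (Real.log 2 / Real.log S)) := this
        _ = 2 * Real.log 2 := by field_simp
    calc Real.exp (Real.log S * (2 * β)) ≤ Real.exp (2 * Real.log 2) := Real.exp_le_exp.2 this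
      _ = 4 := by
          rw [show (2:ℝ) * Real.log 2 = Real.log 4 by
            rw [show (4:ℝ) = 2 ^ (2:ℕ) by norm_num, Real.log_pow]; push_cast; ring]
          exact Real.exp_log (by norm_num)
  have main : ∀ n : ℕ, ∀ s : ℝ, S ≤ s → s ≤ S ^ ((2:ℝ) ^ (n + 1)) → h s ≤ (1/4) * s ^ (-β) := by
    intro n
    induction n with
    | zero =>
      intro s hs hs2
      have hspos : (0:ℝ) < s := lt_of_lt_of_le hS0 hs
      have hsmall' : h s ≤ 1/16 := le_trans (hanti (le_trans hSS₁ hs)) hS₁small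
      have hsle : s ≤ S ^ (2:ℝ) := by rw [pow_one] at hs2; exact hs2
      have h4 : (1:ℝ)/4 ≤ s ^ (-β) := by
        have l1 : s ^ β ≤ S ^ (2 * β) := by
          calc s ^ β ≤ (S ^ (2:ℝ)) ^ β :=
                Real.rpow_le_rpow hspos.le hsle hβpos.le
            _ = S ^ (2 * β) := by rw [← Real.rpow_mul hS0.le]
        have l2 : s ^ β ≤ 4 := le_trans l1 key2
        have hspow : 0 < s ^ β := Real.rpow_pos_of_pos hspos _
        rw [Real.rpow_neg hspos.le]
        calc (1:ℝ)/4 = 4⁻¹ := by norm_num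
          _ ≤ (s ^ β)⁻¹ := by
              apply inv_anti₀ hspow l2
      nlinarith [h4]
    | succ n ih =>
      intro s hs hs2
      rcases le_or_gt s (S ^ ((2:ℝ) ^ (n + 1))) with hle | hgt
      · exact ih s hs hle
      · have hs1 : (1:ℝ) < s := lt_of_lt_of_le hS1 hs
        have hspos : (0:ℝ) < s := by linarith
        have hsqrt_def : s * s ^ (-(1/2):ℝ) = s ^ ((1/2):ℝ) := by
          conv_lhs => rw [show s * s ^ (-(1/2):ℝ) = s ^ (1:ℝ) * s ^ (-(1/2):ℝ) by rw [Real.rpow_one]]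
          rw [← Real.rpow_add hspos]
          norm_num
        have hcpos : 0 < s ^ (-(1/2):ℝ) := Real.rpow_pos_of_pos hspos _
        have hcle : s ^ (-(1/2):ℝ) ≤ 1 := Real.rpow_le_one_of_one_le_of_nonpos hs1.le (by norm_num)
        have hrec' := hrec s (s ^ (-(1/2):ℝ)) (by linarith) hcpos hcle
        rw [hsqrt_def] at hrec'
        have hS2s : S ^ (2:ℝ) ≤ s := by
          have h2n : (2:ℝ) ≤ (2:ℝ) ^ (n + 1) := by
            calc (2:ℝ) = 2 ^ 1 := (pow_one 2).symm
              _ ≤ 2 ^ (n + 1) := pow_le_pow_right₀ one_le_two (by omega)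
          have := Real.rpow_le_rpow_of_exponent_le hS1.le h2n
          linarith [hgt]
        have hu1 : S ≤ s ^ ((1/2):ℝ) := by
          calc S = (S ^ (2:ℝ)) ^ ((1/2):ℝ) := by
                rw [← Real.rpow_mul hS0.le]; norm_num
            _ ≤ s ^ ((1/2):ℝ) := Real.rpow_le_rpow (Real.rpow_nonneg hS0.le _) hS2s (by norm_num)
        have hu2 : s ^ ((1/2):ℝ) ≤ S ^ ((2:ℝ) ^ (n + 1)) := by
          calc s ^ ((1/2):ℝ) ≤ (S ^ ((2:ℝ) ^ (n + 1 + 1))) ^ ((1/2):ℝ) :=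
                Real.rpow_le_rpow hspos.le hs2 (by norm_num)
            _ = S ^ ((2:ℝ) ^ (n + 1)) := by
                rw [← Real.rpow_mul hS0.le]
                congr 1
                rw [pow_succ]
                ring
        have ihu := ih _ hu1 hu2
        have hu_rpow : (s ^ ((1/2):ℝ)) ^ (-β) * (s ^ ((1/2):ℝ)) ^ (-β) = s ^ (-β) := by
          rw [← Real.rpow_mul hspos.le, ← Real.rpow_add hspos]
          congr 1
          ring
        have hKs : K * (s ^ (-(1/2):ℝ)) ^ lam ≤ (1/8) * s ^ (-β) := by
          have heq : (s ^ (-(1/2):ℝ)) ^ lam = s ^ (-(lam/2)) := by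
            rw [← Real.rpow_mul hspos.le]
            congr 1
            ring
          have hKb : 8 * K ≤ s ^ (lam/2 - β) := by
            calc 8 * K ≤ S ^ (lam/4) := key1
              _ ≤ s ^ (lam/4) := Real.rpow_le_rpow hS0.le hs (by positivity)
              _ ≤ s ^ (lam/2 - β) := Real.rpow_le_rpow_of_exponent_le hs1.le (by linarith)
          have hmulpos : (0:ℝ) < s ^ (-(lam/2)) := Real.rpow_pos_of_pos hspos _
          have : (8 * K) * s ^ (-(lam/2)) ≤ s ^ (lam/2 - β) * s ^ (-(lam/2)) :=
            mul_le_mul_of_nonneg_right hKb hmulpos.le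
          have heq2 : s ^ (lam/2 - β) * s ^ (-(lam/2)) = s ^ (-β) := by
            rw [← Real.rpow_add hspos]
            congr 1
            ring
          rw [heq]
          rw [heq2] at this
          linarith
        have hsq : (h (s ^ ((1/2):ℝ))) ^ 2 ≤ (1/16) * s ^ (-β) := by
          have hb := h0 (s ^ ((1/2):ℝ))
          have : (h (s ^ ((1/2):ℝ))) ^ 2 ≤ ((1/4) * (s ^ ((1/2):ℝ)) ^ (-β)) ^ 2 := by
            apply pow_le_pow_left₀ hb ihu
          calc (h (s ^ ((1/2):ℝ))) ^ 2 ≤ ((1/4) * (s ^ ((1/2):ℝ)) ^ (-β)) ^ 2 := this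
            _ = (1/16) * ((s ^ ((1/2):ℝ)) ^ (-β) * (s ^ ((1/2):ℝ)) ^ (-β)) := by ring
            _ = (1/16) * s ^ (-β) := by rw [hu_rpow]
        calc h s ≤ 2 * (h (s ^ ((1/2):ℝ))) ^ 2 + K * (s ^ (-(1/2):ℝ)) ^ lam := hrec'
          _ ≤ 2 * ((1/16) * s ^ (-β)) + (1/8) * s ^ (-β) := by
              have := hKs
              nlinarith [hsq]
          _ = (1/4) * s ^ (-β) := by ring
  have hglobal : ∀ s, S ≤ s → h s ≤ (1/4) * s ^ (-β) := by
    intro s hs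
    obtain ⟨n, hn⟩ := pow_unbounded_of_one_lt s (one_lt_two : (1:ℝ) < 2)
    refine main n s hs ?_
    have c1 : ((n:ℝ) + 1) ≤ (2:ℝ) ^ (n + 1) := by
      have := Nat.lt_two_pow_self (n := n + 1)
      exact_mod_cast this.le
    calc s ≤ 2 ^ n := hn.le
      _ ≤ 2 ^ (n + 1) := pow_le_pow_right₀ one_le_two (by omega)
      _ = (2:ℝ) ^ (((n:ℕ) + 1 : ℕ) : ℝ) := by rw [Real.rpow_natCast]
      _ ≤ (2:ℝ) ^ ((2:ℝ) ^ (n + 1)) := by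
          apply Real.rpow_le_rpow_of_exponent_le one_le_two
          push_cast
          exact c1
      _ ≤ S ^ ((2:ℝ) ^ (n + 1)) := by
          apply Real.rpow_le_rpow (by norm_num) (by linarith) (by positivity)
  have hCS : (1:ℝ) ≤ S ^ β := by
    rw [← Real.rpow_zero S]
    exact Real.rpow_le_rpow_of_exponent_le hS1.le hβpos.le
  refine ⟨β, S ^ β, hβpos, hβlam, hCS, ?_⟩
  intro u hu
  rcases le_or_gt S u with hSu | hSu
  · have := hglobal u hSu
    have h14 : (1:ℝ)/4 ≤ S ^ β := by linarith
    calc h u ≤ (1/4) * u ^ (-β) := this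
      _ ≤ S ^ β * u ^ (-β) :=
        mul_le_mul_of_nonneg_right h14 (Real.rpow_nonneg hu.le _)
  · have hub : u ^ β ≤ S ^ β := Real.rpow_le_rpow hu.le hSu.le hβpos.le
    have hupow : 0 < u ^ β := Real.rpow_pos_of_pos hu _
    have : (1:ℝ) ≤ S ^ β * u ^ (-β) := by
      rw [Real.rpow_neg hu.le, ← div_eq_mul_inv]
      exact (one_le_div hupow).2 hub
    calc h u ≤ 1 := h1 u
      _ ≤ S ^ β * u ^ (-β) := this

private lemma hm_lemB (h : ℝ → ℝ) (h1 : ∀ s, h s ≤ 1) (lam : ℝ) (hlam : 0 < lam)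
    (m : ℕ) (hm : 2 ≤ m) (KD1 : ℝ) (hKD1 : 1 ≤ KD1)
    (hboot : ∀ γ C : ℝ, 0 < γ → γ ≤ lam → 1 ≤ C → (∀ u, 0 < u → h u ≤ C * u ^ (-γ)) →
      ∀ s, 0 < s → h s ≤ C ^ m * KD1 * s ^ (-((m:ℝ) * γ)))
    (hinit : ∃ β C : ℝ, 0 < β ∧ β ≤ lam / 4 ∧ 1 ≤ C ∧ ∀ u, 0 < u → h u ≤ C * u ^ (-β)) :
    ∃ C : ℝ, 1 ≤ C ∧ ∀ s, 0 < s → h s ≤ C * s ^ (-((m:ℝ) * lam)) := by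
  obtain ⟨β, C₀, hβ, hβlam, hC₀, hbd⟩ := hinit
  have hm1 : (1:ℝ) < (m:ℝ) := by exact_mod_cast lt_of_lt_of_le one_lt_two hm
  have lower : ∀ γ γ' C : ℝ, 0 < γ' → γ' ≤ γ → 1 ≤ C → (∀ u, 0 < u → h u ≤ C * u ^ (-γ)) →
      ∀ u, 0 < u → h u ≤ C * u ^ (-γ') := by
    intro γ γ' C hγ' hle hC hb u hu
    rcases le_or_gt 1 u with h1u | h1u
    · exact (hb u hu).trans (mul_le_mul_of_nonneg_left
        (Real.rpow_le_rpow_of_exponent_le h1u (by linarith)) (by linarith))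
    · have hge : (1:ℝ) ≤ u ^ (-γ') :=
        Real.one_le_rpow_of_pos_of_le_one_of_nonpos hu h1u.le (by linarith)
      calc h u ≤ 1 := h1 u
        _ ≤ C * u ^ (-γ') := by nlinarith
  have claim : ∀ n : ℕ, ∃ C : ℝ, 1 ≤ C ∧
      ∀ u, 0 < u → h u ≤ C * u ^ (-(min lam ((m:ℝ) ^ n * β))) := by
    intro n; induction n with
    | zero =>
      refine ⟨C₀, hC₀, ?_⟩
      have : min lam ((m:ℝ) ^ 0 * β) = β := by
        rw [pow_zero, one_mul]
        exact min_eq_right (by linarith)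
      rw [this]
      exact hbd
    | succ n ih =>
      obtain ⟨C, hC, hb⟩ := ih
      have hγpos : 0 < min lam ((m:ℝ) ^ n * β) := lt_min hlam (by positivity)
      have hγlam : min lam ((m:ℝ) ^ n * β) ≤ lam := min_le_left _ _
      have hb2 := hboot _ C hγpos hγlam hC hb
      have hCm : (1:ℝ) ≤ C ^ m * KD1 := by
        have : (1:ℝ) ≤ C ^ m := one_le_pow₀ hC -- fix below
        nlinarith
      refine ⟨C ^ m * KD1, hCm, ?_⟩
      apply lower ((m:ℝ) * min lam ((m:ℝ) ^ n * β)) _ _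
          (lt_min hlam (by positivity)) ?_ hCm hb2
      rcases le_total lam ((m:ℝ) ^ n * β) with hc | hc
      · rw [min_eq_left hc]
        calc min lam ((m:ℝ) ^ (n+1) * β) ≤ lam := min_le_left _ _
          _ ≤ (m:ℝ) * lam := le_mul_of_one_le_left hlam.le hm1.le
      · rw [min_eq_right hc]
        calc min lam ((m:ℝ) ^ (n+1) * β) ≤ (m:ℝ) ^ (n+1) * β := min_le_right _ _
          _ = (m:ℝ) * ((m:ℝ) ^ n * β) := by ring
  obtain ⟨n, hn⟩ := pow_unbounded_of_one_lt (lam / β) hm1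
  obtain ⟨C, hC, hb⟩ := claim n
  have hmin : min lam ((m:ℝ) ^ n * β) = lam := by
    apply min_eq_left
    rw [div_lt_iff₀ hβ] at hn
    linarith
  rw [hmin] at hb
  have hCm : (1:ℝ) ≤ C ^ m * KD1 := by
    have : (1:ℝ) ≤ C ^ m := one_le_pow₀ hC
    nlinarith
  exact ⟨C ^ m * KD1, hCm, fun s hs => hboot lam C hlam le_rfl hC hb s hs⟩

set_option maxHeartbeats 2000000 in
/-- **Theorem 2.2 (Harmonic moments), second part.** Let `Z ∈ [0,∞)^p` be an a.s. positive
solution with Laplace transform `φ` satisfying `φ(t) = E ∏_{k=1}^N φ(t A_k)`.  If `m̲ ≥ 2`,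
`N ≥ m̲` a.s., `E[(min_i Σ_j (A_1)_{ij})^{-λ}] < ∞` and
`E[∏_{k=1}^{m̲} (min_i Σ_j (A_k)_{ij})^{-λ}] < ∞`, then `φ(t) = O(‖t‖^{-m̲λ})`,
`P(y·Z ≤ x) = O(x^{m̲λ})` and `E[(y·Z)^{-m̲λ₁}] < ∞` for `0 < λ₁ < λ`. -/
theorem harmonic_moments_second
    {Ω : Type*} [MeasurableSpace Ω] (μ : Measure Ω) [IsProbabilityMeasure μ]
    {p : ℕ} (hp : 0 < p)
    (N : Ω → ℕ) (hN : ∀ ω, 1 ≤ N ω) (hNmeas : Measurable N)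
    (A : ℕ → Ω → Fin p → Fin p → ℝ) (hApos : ∀ k ω i j, 0 ≤ A k ω i j)
    (hAmeas : ∀ k, Measurable (A k))
    (Z : Ω → Fin p → ℝ) (hZmeas : Measurable Z)
    (hZpos : ∀ᵐ ω ∂μ, ∀ j, 0 < Z ω j)
    (φ : (Fin p → ℝ) → ℝ)
    (hφ : ∀ t : Fin p → ℝ, φ t = ∫ ω, Real.exp (-(∑ j, t j * Z ω j)) ∂μ)
    (hfe : ∀ t : Fin p → ℝ, (∀ j, 0 ≤ t j) →
      φ t = ∫ ω, ∏ k ∈ Finset.Icc 1 (N ω), φ (fun j => ∑ i, t i * A k ω i j) ∂μ)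
    (lam : ℝ) (hlam : 0 < lam)
    (m : ℕ) (hm : 2 ≤ m) (hNm : ∀ᵐ ω ∂μ, m ≤ N ω)
    (hmom : ∫⁻ ω, (ENNReal.ofReal (⨅ i, ∑ j, A 1 ω i j)) ^ (-lam) ∂μ < ⊤)
    (hmomprod : ∫⁻ ω, ∏ k ∈ Finset.Icc 1 m,
        (ENNReal.ofReal (⨅ i, ∑ j, A k ω i j)) ^ (-lam) ∂μ < ⊤) :
    (∃ C > 0, ∃ T > 0, ∀ t : Fin p → ℝ, (∀ j, 0 ≤ t j) → T ≤ ∑ j, t j →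
      φ t ≤ C * (∑ j, t j) ^ (-((m : ℝ) * lam))) ∧
    (∀ y : Fin p → ℝ, (∀ j, 0 ≤ y j) → y ≠ 0 →
      ∃ C > 0, ∃ x₀ > 0, ∀ x : ℝ, 0 < x → x ≤ x₀ →
        (μ {ω | ∑ j, y j * Z ω j ≤ x}).toReal ≤ C * x ^ ((m : ℝ) * lam)) ∧
    (∀ y : Fin p → ℝ, (∀ j, 0 ≤ y j) → y ≠ 0 → ∀ lam₁ : ℝ, 0 < lam₁ → lam₁ < lam →
      ∫⁻ ω, ENNReal.ofReal ((∑ j, y j * Z ω j) ^ (-((m : ℝ) * lam₁))) ∂μ < ⊤) := by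
  classical
  haveI : Nonempty (Fin p) := ⟨⟨0, hp⟩⟩
  -- row-sum minima
  set M : ℕ → Ω → ℝ := fun k ω => ⨅ i, ∑ j, A k ω i j with hMdef
  have hM' : ∀ k ω, M k ω = ⨅ i, ∑ j, A k ω i j := fun _ _ => rfl
  have hMnn : ∀ k ω, 0 ≤ M k ω := fun k ω =>
    le_ciInf fun i => Finset.sum_nonneg fun j _ => hApos k ω i j
  have hMmeas : ∀ k, Measurable (M k) := fun k =>
    Measurable.iInf fun i => Finset.measurable_sum _ fun j _ =>
      ((measurable_pi_apply j).comp ((measurable_pi_apply i).comp (hAmeas k)))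
  have hMle : ∀ k ω i, M k ω ≤ ∑ j, A k ω i j := fun k ω i =>
    ciInf_le (Finite.bddBelow_range _) i
  -- interval bookkeeping
  have hIccN : ∀ n : ℕ, Finset.Icc 1 n = Finset.Ioc 0 n := by
    intro n; ext x; simp only [Finset.mem_Icc, Finset.mem_Ioc]; omega
  have hIocne : (Finset.Ioc 1 m).Nonempty := ⟨2, by simp only [Finset.mem_Ioc]; omega⟩
  have hIoc01 : Finset.Ioc 0 1 = ({1} : Finset ℕ) := by
    ext x; simp only [Finset.mem_Ioc, Finset.mem_singleton]; omega
  have hsplit1m : ∀ f : ℕ → ℝ, ∏ k ∈ Finset.Icc 1 m, f k = f 1 * ∏ k ∈ Finset.Ioc 1 m, f k := by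
    intro f
    rw [hIccN m, ← Finset.prod_Ioc_consecutive f (Nat.zero_le 1) (by omega : 1 ≤ m),
      hIoc01, Finset.prod_singleton]
  -- W and D
  set W : Ω → ℝ := fun ω => (Finset.Ioc 1 m).sup' hIocne (fun k => M k ω) with hWdef
  have hWmeas : Measurable W := by
    have he : W = fun ω => ⨆ k : {x // x ∈ Finset.Ioc 1 m}, M k ω := by
      funext ω
      show (Finset.Ioc 1 m).sup' hIocne (fun k => M k ω) = _
      rw [Finset.sup'_eq_csSup_image, Set.image_eq_range, iSup]
      rfl
    rw [he]
    exact Measurable.iSup fun k => hMmeas k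
  have hW_eq : ∀ ω, ∃ k₀ ∈ Finset.Ioc 1 m, W ω = M k₀ ω := by
    intro ω
    obtain ⟨k₀, hk₀, he⟩ := Finset.exists_mem_eq_sup' hIocne (fun k => M k ω)
    exact ⟨k₀, hk₀, he⟩
  have hMleW : ∀ ω k, k ∈ Finset.Ioc 1 m → M k ω ≤ W ω := by
    intro ω k hk
    show M k ω ≤ (Finset.Ioc 1 m).sup' hIocne fun k => M k ω
    exact Finset.le_sup' (fun k => M k ω) hk
  have hWnn : ∀ ω, 0 ≤ W ω := by
    intro ω; obtain ⟨k₀, hk₀, he⟩ := hW_eq ω; rw [he]; exact hMnn _ _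
  set D : Ω → ℝ := fun ω => ∏ k ∈ Finset.Icc 1 m, M k ω with hDdef
  have hDnn : ∀ ω, 0 ≤ D ω := fun ω => Finset.prod_nonneg fun k _ => hMnn k ω
  have hDmeas : Measurable D := Finset.measurable_prod _ fun k _ => hMmeas k
  -- moment integrals
  have hLM : ∫⁻ ω, (ENNReal.ofReal (M 1 ω)) ^ (-lam) ∂μ < ⊤ := hmom
  have hLD : ∫⁻ ω, (ENNReal.ofReal (D ω)) ^ (-lam) ∂μ < ⊤ := by
    have he : ∀ ω, (ENNReal.ofReal (D ω)) ^ (-lam)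
        = ∏ k ∈ Finset.Icc 1 m, (ENNReal.ofReal (M k ω)) ^ (-lam) := by
      intro ω
      rw [show D ω = ∏ k ∈ Finset.Icc 1 m, M k ω from rfl,
        ENNReal.ofReal_prod_of_nonneg (fun k _ => hMnn k ω),
        ← ENNReal.prod_rpow_of_ne_top (fun k _ => ENNReal.ofReal_ne_top)]
    calc ∫⁻ ω, (ENNReal.ofReal (D ω)) ^ (-lam) ∂μ
        = ∫⁻ ω, ∏ k ∈ Finset.Icc 1 m, (ENNReal.ofReal (M k ω)) ^ (-lam) ∂μ :=
          lintegral_congr he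
      _ < ⊤ := hmomprod
  set KM : ℝ := (∫⁻ ω, (ENNReal.ofReal (M 1 ω)) ^ (-lam) ∂μ).toReal with hKMdef
  set KD : ℝ := (∫⁻ ω, (ENNReal.ofReal (D ω)) ^ (-lam) ∂μ).toReal with hKDdef
  have hKMnn : 0 ≤ KM := ENNReal.toReal_nonneg
  have hKDnn : 0 ≤ KD := ENNReal.toReal_nonneg
  -- Markov inequality
  have markov : ∀ f : Ω → ℝ, Measurable f → ∀ c : ℝ, 0 < c →
      μ {ω | f ω ≤ c} ≤ ENNReal.ofReal (c ^ lam) * ∫⁻ ω, (ENNReal.ofReal (f ω)) ^ (-lam) ∂μ := by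
    intro f hf c hc
    have hpt : ∀ ω ∈ {ω | f ω ≤ c},
        (ENNReal.ofReal c) ^ (-lam) ≤ (ENNReal.ofReal (f ω)) ^ (-lam) := by
      intro ω hω
      rw [ENNReal.rpow_neg, ENNReal.rpow_neg]
      exact ENNReal.inv_le_inv.2 (ENNReal.rpow_le_rpow (ENNReal.ofReal_le_ofReal hω) hlam.le)
    have h1 : (ENNReal.ofReal c) ^ (-lam) * μ {ω | f ω ≤ c}
        ≤ ∫⁻ ω, (ENNReal.ofReal (f ω)) ^ (-lam) ∂μ := by
      calc (ENNReal.ofReal c) ^ (-lam) * μ {ω | f ω ≤ c}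
          = ∫⁻ _ω in {ω | f ω ≤ c}, (ENNReal.ofReal c) ^ (-lam) ∂μ :=
            (setLIntegral_const _ _).symm
        _ ≤ ∫⁻ ω in {ω | f ω ≤ c}, (ENNReal.ofReal (f ω)) ^ (-lam) ∂μ :=
            setLIntegral_mono (hf.ennreal_ofReal.pow_const _) hpt
        _ ≤ ∫⁻ ω, (ENNReal.ofReal (f ω)) ^ (-lam) ∂μ := setLIntegral_le_lintegral _ _
    have hcpos : (0:ℝ≥0∞) < (ENNReal.ofReal c) ^ lam :=
      ENNReal.rpow_pos (ENNReal.ofReal_pos.2 hc) ENNReal.ofReal_ne_top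
    have hc0 : (ENNReal.ofReal c) ^ (-lam) ≠ 0 := by
      rw [ENNReal.rpow_neg]
      exact ENNReal.inv_ne_zero.2 (ENNReal.rpow_ne_top_of_nonneg hlam.le ENNReal.ofReal_ne_top)
    have hctop : (ENNReal.ofReal c) ^ (-lam) ≠ ⊤ := by
      rw [ENNReal.rpow_neg]
      exact ENNReal.inv_ne_top.2 hcpos.ne'
    calc μ {ω | f ω ≤ c}
        = ((ENNReal.ofReal c) ^ (-lam))⁻¹ * ((ENNReal.ofReal c) ^ (-lam) * μ {ω | f ω ≤ c}) := by
          rw [← mul_assoc, ENNReal.inv_mul_cancel hc0 hctop, one_mul]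
      _ ≤ ((ENNReal.ofReal c) ^ (-lam))⁻¹ * ∫⁻ ω, (ENNReal.ofReal (f ω)) ^ (-lam) ∂μ :=
          mul_le_mul_right h1 _
      _ = ENNReal.ofReal (c ^ lam) * ∫⁻ ω, (ENNReal.ofReal (f ω)) ^ (-lam) ∂μ := by
          rw [ENNReal.rpow_neg, inv_inv, ENNReal.ofReal_rpow_of_pos hc]
  have markovR : ∀ f : Ω → ℝ, Measurable f →
      (∫⁻ ω, (ENNReal.ofReal (f ω)) ^ (-lam) ∂μ) ≠ ⊤ → ∀ c : ℝ, 0 < c →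
      (μ {ω | f ω ≤ c}).toReal ≤ c ^ lam * (∫⁻ ω, (ENNReal.ofReal (f ω)) ^ (-lam) ∂μ).toReal := by
    intro f hf hLtop c hc
    have h1 := markov f hf c hc
    have h3 : ENNReal.ofReal (c ^ lam) * ∫⁻ ω, (ENNReal.ofReal (f ω)) ^ (-lam) ∂μ ≠ ⊤ :=
      ENNReal.mul_ne_top ENNReal.ofReal_ne_top hLtop
    calc (μ {ω | f ω ≤ c}).toReal
        ≤ (ENNReal.ofReal (c ^ lam) * ∫⁻ ω, (ENNReal.ofReal (f ω)) ^ (-lam) ∂μ).toReal :=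
          ENNReal.toReal_mono h3 h1
      _ = c ^ lam * (∫⁻ ω, (ENNReal.ofReal (f ω)) ^ (-lam) ∂μ).toReal := by
          rw [ENNReal.toReal_mul, ENNReal.toReal_ofReal (Real.rpow_nonneg hc.le _)]
  -- basic φ facts
  have hZnn : ∀ᵐ ω ∂μ, ∀ j, 0 ≤ Z ω j := hZpos.mono fun ω hω j => (hω j).le
  have measexp : ∀ t : Fin p → ℝ, Measurable fun ω => Real.exp (-(∑ j, t j * Z ω j)) := by
    intro t
    exact Real.measurable_exp.comp (Measurable.neg (Finset.measurable_sum _ fun j _ =>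
      measurable_const.mul ((measurable_pi_apply j).comp hZmeas)))
  have intexp : ∀ t : Fin p → ℝ, (∀ j, 0 ≤ t j) →
      Integrable (fun ω => Real.exp (-(∑ j, t j * Z ω j))) μ := by
    intro t ht
    refine (integrable_const (1:ℝ)).mono' (measexp t).aestronglyMeasurable ?_
    filter_upwards [hZnn] with ω hω
    rw [Real.norm_eq_abs, abs_of_pos (Real.exp_pos _), Real.exp_le_one_iff]
    have : 0 ≤ ∑ j, t j * Z ω j := Finset.sum_nonneg fun j _ => mul_nonneg (ht j) (hω j)
    linarith
  have φnonneg : ∀ t, 0 ≤ φ t := fun t => by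
    rw [hφ t]; exact integral_nonneg fun ω => (Real.exp_pos _).le
  have φle1 : ∀ t : Fin p → ℝ, (∀ j, 0 ≤ t j) → φ t ≤ 1 := by
    intro t ht
    rw [hφ t]
    calc ∫ ω, Real.exp (-(∑ j, t j * Z ω j)) ∂μ ≤ ∫ _ω, (1:ℝ) ∂μ := by
          apply integral_mono_ae (intexp t ht) (integrable_const 1)
          filter_upwards [hZnn] with ω hω
          rw [Real.exp_le_one_iff]
          have : 0 ≤ ∑ j, t j * Z ω j := Finset.sum_nonneg fun j _ => mul_nonneg (ht j) (hω j)
          linarith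
      _ = 1 := by simp
  have φmeas : Measurable φ := by
    have hφfun : φ = fun t => ∫ ω, Real.exp (-(∑ j, t j * Z ω j)) ∂μ := funext hφ
    rw [hφfun]
    have hsm : StronglyMeasurable fun q : (Fin p → ℝ) × Ω =>
        Real.exp (-(∑ j, q.1 j * Z q.2 j)) := by
      apply Measurable.stronglyMeasurable
      exact Real.measurable_exp.comp (Measurable.neg (Finset.measurable_sum _ fun j _ =>
        ((measurable_pi_apply j).comp measurable_fst).mul
          ((measurable_pi_apply j).comp (hZmeas.comp measurable_snd))))
    exact hsm.integral_prod_right'.measurable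
  have intbdd : ∀ f : Ω → ℝ, Measurable f → (∀ ω, 0 ≤ f ω) → (∀ ω, f ω ≤ 1) →
      Integrable f μ := by
    intro f hf h0 h1
    refine (integrable_const (1:ℝ)).mono' hf.aestronglyMeasurable (ae_of_all _ fun ω => ?_)
    rw [Real.norm_eq_abs, abs_of_nonneg (h0 ω)]
    exact h1 ω
  -- the decreasing majorant h
  have hwitness : ∀ s : ℝ, (∀ j : Fin p, 0 ≤ (fun _ : Fin p => max s 0) j) ∧
      s ≤ ∑ j : Fin p, (fun _ : Fin p => max s 0) j := by
    intro s
    constructor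
    · intro j; exact le_max_right _ _
    · calc s ≤ max s 0 := le_max_left _ _
        _ ≤ (p:ℝ) * max s 0 := le_mul_of_one_le_left (le_max_right _ _) (by exact_mod_cast hp)
        _ = ∑ _j : Fin p, max s 0 := by
            rw [Finset.sum_const, Finset.card_univ, Fintype.card_fin, nsmul_eq_mul]
  obtain ⟨h, hP1, hsup_le⟩ :
      ∃ h : ℝ → ℝ,
        (∀ t : Fin p → ℝ, (∀ j, 0 ≤ t j) → ∀ s, s ≤ ∑ j, t j → φ t ≤ h s) ∧
        (∀ s b : ℝ, (∀ t : Fin p → ℝ, (∀ j, 0 ≤ t j) → s ≤ ∑ j, t j → φ t ≤ b) → h s ≤ b) := by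
    have hne : ∀ s : ℝ,
        {x | ∃ t : Fin p → ℝ, (∀ j, 0 ≤ t j) ∧ s ≤ ∑ j, t j ∧ φ t = x}.Nonempty := by
      intro s
      exact ⟨φ (fun _ => max s 0), ⟨fun _ => max s 0, (hwitness s).1, (hwitness s).2, rfl⟩⟩
    have hbdd : ∀ s : ℝ,
        BddAbove {x | ∃ t : Fin p → ℝ, (∀ j, 0 ≤ t j) ∧ s ≤ ∑ j, t j ∧ φ t = x} := by
      intro s
      refine ⟨1, ?_⟩
      rintro x ⟨t, ht0, _, rfl⟩
      exact φle1 t ht0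
    refine ⟨fun s =>
      sSup {x | ∃ t : Fin p → ℝ, (∀ j, 0 ≤ t j) ∧ s ≤ ∑ j, t j ∧ φ t = x}, ?_, ?_⟩
    · intro t ht0 s hsum
      exact le_csSup (hbdd s) ⟨t, ht0, hsum, rfl⟩
    · intro s b hb
      apply csSup_le (hne s)
      rintro x ⟨t, ht0, hsum, rfl⟩
      exact hb t ht0 hsum
  have hanti : Antitone h := by
    intro s s' hss'
    apply hsup_le
    intro t ht0 hsum
    exact hP1 t ht0 s (le_trans hss' hsum)
  have h_le1 : ∀ s, h s ≤ 1 := fun s => hsup_le s 1 fun t ht0 _ => φle1 t ht0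
  have h_nn : ∀ s, 0 ≤ h s := by
    intro s
    exact le_trans (φnonneg _) (hP1 (fun _ => max s 0) (hwitness s).1 s (hwitness s).2)
  have hhmeas : Measurable h := hanti.measurable
  -- integrability helpers
  have meas_prodh : ∀ s : ℝ, Measurable fun ω => ∏ k ∈ Finset.Icc 1 m, h (s * M k ω) :=
    fun s => Finset.measurable_prod _ fun k _ => hhmeas.comp (measurable_const.mul (hMmeas k))
  have int_prodh : ∀ s : ℝ, Integrable (fun ω => ∏ k ∈ Finset.Icc 1 m, h (s * M k ω)) μ := by
    intro s
    exact intbdd _ (meas_prodh s) (fun ω => Finset.prod_nonneg fun k _ => h_nn _)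
      (fun ω => Finset.prod_le_one (fun k _ => h_nn _) (fun k _ => h_le1 _))
  have meas_MW : ∀ s : ℝ, Measurable fun ω => h (s * M 1 ω) * h (s * W ω) := fun s =>
    (hhmeas.comp (measurable_const.mul (hMmeas 1))).mul (hhmeas.comp (measurable_const.mul hWmeas))
  have int_MW : ∀ s : ℝ, Integrable (fun ω => h (s * M 1 ω) * h (s * W ω)) μ := by
    intro s
    exact intbdd _ (meas_MW s) (fun ω => mul_nonneg (h_nn _) (h_nn _))
      (fun ω => mul_le_one₀ (h_le1 _) (h_nn _) (h_le1 _))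
  -- the functional inequality for h
  have step4 : ∀ s : ℝ, 0 ≤ s → h s ≤ ∫ ω, ∏ k ∈ Finset.Icc 1 m, h (s * M k ω) ∂μ := by
    intro s hs
    apply hsup_le
    intro t ht0 hts
    have harg_nn : ∀ (k : ℕ) (ω : Ω) (j : Fin p), 0 ≤ ∑ i, t i * A k ω i j :=
      fun k ω j => Finset.sum_nonneg fun i _ => mul_nonneg (ht0 i) (hApos k ω i j)
    have hargsum : ∀ (k : ℕ) (ω : Ω), s * M k ω ≤ ∑ j, ∑ i, t i * A k ω i j := by
      intro k ω
      have e1 : ∑ j, ∑ i, t i * A k ω i j = ∑ i, t i * ∑ j, A k ω i j := by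
        rw [Finset.sum_comm]
        exact Finset.sum_congr rfl fun i _ => (Finset.mul_sum _ _ _).symm
      rw [e1]
      calc s * M k ω ≤ (∑ i, t i) * M k ω := mul_le_mul_of_nonneg_right hts (hMnn k ω)
        _ = ∑ i, t i * M k ω := by rw [Finset.sum_mul]
        _ ≤ ∑ i, t i * ∑ j, A k ω i j :=
            Finset.sum_le_sum fun i _ => mul_le_mul_of_nonneg_left (hMle k ω i) (ht0 i)
    have hfactor : ∀ (k : ℕ) (ω : Ω), φ (fun j => ∑ i, t i * A k ω i j) ≤ h (s * M k ω) :=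
      fun k ω => hP1 _ (harg_nn k ω) _ (hargsum k ω)
    have measφA : ∀ k : ℕ, Measurable fun ω => φ (fun j => ∑ i, t i * A k ω i j) := by
      intro k
      apply φmeas.comp
      apply measurable_pi_lambda
      intro j
      exact Finset.measurable_sum _ fun i _ =>
        measurable_const.mul ((measurable_pi_apply j).comp
          ((measurable_pi_apply i).comp (hAmeas k)))
    have φA0 : ∀ (k : ℕ) (ω : Ω), 0 ≤ φ (fun j => ∑ i, t i * A k ω i j) := fun k ω => φnonneg _
    have φA1 : ∀ (k : ℕ) (ω : Ω), φ (fun j => ∑ i, t i * A k ω i j) ≤ 1 :=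
      fun k ω => φle1 _ (harg_nn k ω)
    have measPm : Measurable fun ω => ∏ k ∈ Finset.Icc 1 m, φ (fun j => ∑ i, t i * A k ω i j) :=
      Finset.measurable_prod _ fun k _ => measφA k
    have intPm : Integrable (fun ω => ∏ k ∈ Finset.Icc 1 m,
        φ (fun j => ∑ i, t i * A k ω i j)) μ :=
      intbdd _ measPm (fun ω => Finset.prod_nonneg fun k _ => φA0 k ω)
        (fun ω => Finset.prod_le_one (fun k _ => φA0 k ω) (fun k _ => φA1 k ω))
    have measPN : Measurable fun ω => ∏ k ∈ Finset.Icc 1 (N ω),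
        φ (fun j => ∑ i, t i * A k ω i j) := by
      have he : (fun ω => ∏ k ∈ Finset.Icc 1 (N ω), φ (fun j => ∑ i, t i * A k ω i j))
          = (fun q : Ω × ℕ => ∏ k ∈ Finset.Icc 1 q.2,
              φ (fun j => ∑ i, t i * A k q.1 i j)) ∘ (fun ω => (ω, N ω)) := rfl
      rw [he]
      have hNω : Measurable fun ω : Ω => (ω, N ω) := measurable_id.prodMk hNmeas
      have hF : Measurable fun q : Ω × ℕ => ∏ k ∈ Finset.Icc 1 q.2,
          φ (fun j => ∑ i, t i * A k q.1 i j) :=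
        measurable_from_prod_countable_left fun n => by
          show Measurable fun a : Ω => ∏ k ∈ Finset.Icc 1 n, φ (fun j => ∑ i, t i * A k a i j)
          exact Finset.measurable_prod _ fun k _ => measφA k
      exact hF.comp hNω
    have intPN : Integrable (fun ω => ∏ k ∈ Finset.Icc 1 (N ω),
        φ (fun j => ∑ i, t i * A k ω i j)) μ :=
      intbdd _ measPN (fun ω => Finset.prod_nonneg fun k _ => φA0 k ω)
        (fun ω => Finset.prod_le_one (fun k _ => φA0 k ω) (fun k _ => φA1 k ω))
    calc φ t = ∫ ω, ∏ k ∈ Finset.Icc 1 (N ω), φ (fun j => ∑ i, t i * A k ω i j) ∂μ := hfe t ht0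
      _ ≤ ∫ ω, ∏ k ∈ Finset.Icc 1 m, φ (fun j => ∑ i, t i * A k ω i j) ∂μ := by
          apply integral_mono_ae intPN intPm
          filter_upwards [hNm] with ω hω
          rw [hIccN (N ω), hIccN m,
            ← Finset.prod_Ioc_consecutive _ (Nat.zero_le m) hω]
          apply mul_le_of_le_one_right (Finset.prod_nonneg fun k _ => φA0 k ω)
          exact Finset.prod_le_one (fun k _ => φA0 k ω) (fun k _ => φA1 k ω)
      _ ≤ ∫ ω, ∏ k ∈ Finset.Icc 1 m, h (s * M k ω) ∂μ := by
          apply integral_mono intPm (int_prodh s)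
          intro ω
          exact Finset.prod_le_prod (fun k _ => φA0 k ω) (fun k _ => hfactor k ω)
  have step5 : ∀ s : ℝ, 0 ≤ s → h s ≤ ∫ ω, h (s * M 1 ω) * h (s * W ω) ∂μ := by
    intro s hs
    refine (step4 s hs).trans (integral_mono (int_prodh s) (int_MW s) ?_)
    intro ω
    show ∏ k ∈ Finset.Icc 1 m, h (s * M k ω) ≤ h (s * M 1 ω) * h (s * W ω)
    obtain ⟨k₀, hk₀, hWk⟩ := hW_eq ω
    rw [hsplit1m (fun k => h (s * M k ω))]
    apply mul_le_mul_of_nonneg_left ?_ (h_nn _)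
    calc ∏ k ∈ Finset.Ioc 1 m, h (s * M k ω) ≤ h (s * M k₀ ω) := by
          rw [← Finset.mul_prod_erase _ _ hk₀]
          apply mul_le_of_le_one_right (h_nn _)
          exact Finset.prod_le_one (fun k _ => h_nn _) (fun k _ => h_le1 _)
      _ = h (s * W ω) := by rw [hWk]
  -- choice of R₀
  have hR0 : ∃ R₀ : ℝ, 1 ≤ R₀ ∧ (μ {ω | R₀ < M 1 ω}).toReal ≤ 1/2 := by
    have hmono : Antitone fun n : ℕ => {ω | (n:ℝ) < M 1 ω} := by
      intro a b hab ω hω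
      simp only [Set.mem_setOf_eq] at *
      have : (a:ℝ) ≤ (b:ℝ) := by exact_mod_cast hab
      linarith
    have hiInter : ⋂ n : ℕ, {ω | (n:ℝ) < M 1 ω} = ∅ := by
      ext ω
      simp only [Set.mem_iInter, Set.mem_setOf_eq, Set.mem_empty_iff_false, iff_false, not_forall,
        not_lt]
      obtain ⟨n, hn⟩ := exists_nat_gt (M 1 ω)
      exact ⟨n, hn.le⟩
    have htend := tendsto_measure_iInter_atTop
      (fun n => (measurableSet_lt measurable_const (hMmeas 1)).nullMeasurableSet)
      hmono ⟨0, measure_ne_top μ _⟩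
    rw [hiInter, measure_empty] at htend
    have hev := htend.eventually_le_const
      (show (0:ℝ≥0∞) < ENNReal.ofReal (1/2) by simp)
    obtain ⟨n, hn⟩ := hev.exists
    refine ⟨max (n:ℝ) 1, le_max_right _ _, ?_⟩
    have hsub : {ω | max (n:ℝ) 1 < M 1 ω} ⊆ {ω | (n:ℝ) < M 1 ω} := by
      intro ω hω
      simp only [Set.mem_setOf_eq] at *
      exact lt_of_le_of_lt (le_max_left _ _) hω
    exact ENNReal.toReal_le_of_le_ofReal (by norm_num)
      (le_trans (measure_mono hsub) hn)
  obtain ⟨R₀, hR₀1, hR₀half⟩ := hR0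
  have hR₀0 : (0:ℝ) < R₀ := lt_of_lt_of_le one_pos hR₀1
  -- the key recursive inequality
  set K3 : ℝ := 2 * (R₀ ^ lam * KD + KM) + 1 with hK3def
  have hK3ge1 : 1 ≤ K3 := by
    have : 0 ≤ R₀ ^ lam := Real.rpow_nonneg hR₀0.le _
    nlinarith
  have heart : ∀ s c : ℝ, 0 ≤ s → 0 < c → c ≤ 1 →
      h s ≤ 2 * (h (s * c)) ^ 2 + K3 * c ^ lam := by
    intro s c hs hc hc1
    set B2 : Set Ω := {ω | W ω < c ∧ M 1 ω ≤ R₀} with hB2def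
    set B3 : Set Ω := {ω | R₀ < M 1 ω} with hB3def
    set B4 : Set Ω := {ω | M 1 ω < c} with hB4def
    have hB2 : MeasurableSet B2 :=
      (measurableSet_lt hWmeas measurable_const).inter
        (measurableSet_le (hMmeas 1) measurable_const)
    have hB3 : MeasurableSet B3 := measurableSet_lt measurable_const (hMmeas 1)
    have hB4 : MeasurableSet B4 := measurableSet_lt (hMmeas 1) measurable_const
    have hpt : ∀ ω, h (s * M 1 ω) * h (s * W ω) ≤ (h (s * c)) ^ 2 +
        (B2.indicator (fun _ => (1:ℝ)) ω +
          (B3.indicator (fun _ => h s) ω + B4.indicator (fun _ => (1:ℝ)) ω)) := by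
      intro ω
      have hind2 : 0 ≤ B2.indicator (fun _ => (1:ℝ)) ω :=
        Set.indicator_nonneg (fun _ _ => zero_le_one) ω
      have hind3 : 0 ≤ B3.indicator (fun _ => h s) ω :=
        Set.indicator_nonneg (fun _ _ => h_nn s) ω
      have hind4 : 0 ≤ B4.indicator (fun _ => (1:ℝ)) ω :=
        Set.indicator_nonneg (fun _ _ => zero_le_one) ω
      have hsq : 0 ≤ (h (s * c)) ^ 2 := sq_nonneg _
      rcases lt_or_ge (W ω) c with hW | hW
      · rcases le_or_gt (M 1 ω) R₀ with hMR | hMR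
        · have hmem : ω ∈ B2 := ⟨hW, hMR⟩
          have hLHS : h (s * M 1 ω) * h (s * W ω) ≤ 1 :=
            mul_le_one₀ (h_le1 _) (h_nn _) (h_le1 _)
          rw [Set.indicator_of_mem hmem]
          linarith
        · have hmem : ω ∈ B3 := hMR
          have hLHS : h (s * M 1 ω) * h (s * W ω) ≤ h s := by
            calc h (s * M 1 ω) * h (s * W ω) ≤ h (s * M 1 ω) * 1 :=
                  mul_le_mul_of_nonneg_left (h_le1 _) (h_nn _)
              _ = h (s * M 1 ω) := mul_one _
              _ ≤ h s := hanti (le_mul_of_one_le_right hs (by linarith))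
          rw [Set.indicator_of_mem hmem]
          linarith
      · rcases lt_or_ge (M 1 ω) c with hMc | hMc
        · have hmem : ω ∈ B4 := hMc
          have hLHS : h (s * M 1 ω) * h (s * W ω) ≤ 1 :=
            mul_le_one₀ (h_le1 _) (h_nn _) (h_le1 _)
          rw [Set.indicator_of_mem hmem]
          linarith
        · have l1 : h (s * M 1 ω) ≤ h (s * c) := hanti (mul_le_mul_of_nonneg_left hMc hs)
          have l2 : h (s * W ω) ≤ h (s * c) := hanti (mul_le_mul_of_nonneg_left hW hs)
          have hLHS : h (s * M 1 ω) * h (s * W ω) ≤ (h (s * c)) ^ 2 := by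
            rw [sq]
            exact mul_le_mul l1 l2 (h_nn _) (h_nn _)
          linarith
    have int2 : Integrable (B2.indicator fun _ => (1:ℝ)) μ := (integrable_const 1).indicator hB2
    have int3 : Integrable (B3.indicator fun _ => h s) μ := (integrable_const _).indicator hB3
    have int4 : Integrable (B4.indicator fun _ => (1:ℝ)) μ := (integrable_const 1).indicator hB4
    have hint : ∫ ω, h (s * M 1 ω) * h (s * W ω) ∂μ ≤ (h (s * c)) ^ 2 +
        ((μ B2).toReal + ((μ B3).toReal * h s + (μ B4).toReal)) := by
      calc ∫ ω, h (s * M 1 ω) * h (s * W ω) ∂μ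
          ≤ ∫ ω, ((h (s * c)) ^ 2 + (B2.indicator (fun _ => (1:ℝ)) ω +
              (B3.indicator (fun _ => h s) ω + B4.indicator (fun _ => (1:ℝ)) ω))) ∂μ :=
            integral_mono (int_MW s)
              ((integrable_const _).add (int2.add (int3.add int4))) hpt
        _ = (h (s * c)) ^ 2 + ((μ B2).toReal + ((μ B3).toReal * h s + (μ B4).toReal)) := by
            have I1 : ∫ ω, ((h (s * c)) ^ 2 + (B2.indicator (fun _ => (1:ℝ)) ω +
                (B3.indicator (fun _ => h s) ω + B4.indicator (fun _ => (1:ℝ)) ω))) ∂μ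
                = ∫ _ω, (h (s * c)) ^ 2 ∂μ + ∫ ω, (B2.indicator (fun _ => (1:ℝ)) ω +
                  (B3.indicator (fun _ => h s) ω + B4.indicator (fun _ => (1:ℝ)) ω)) ∂μ :=
              integral_add (integrable_const _) (int2.add (int3.add int4))
            have I2 : ∫ ω, (B2.indicator (fun _ => (1:ℝ)) ω +
                (B3.indicator (fun _ => h s) ω + B4.indicator (fun _ => (1:ℝ)) ω)) ∂μ
                = ∫ ω, B2.indicator (fun _ => (1:ℝ)) ω ∂μ +
                  ∫ ω, (B3.indicator (fun _ => h s) ω + B4.indicator (fun _ => (1:ℝ)) ω) ∂μ :=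
              integral_add int2 (int3.add int4)
            have I3 : ∫ ω, (B3.indicator (fun _ => h s) ω + B4.indicator (fun _ => (1:ℝ)) ω) ∂μ
                = ∫ ω, B3.indicator (fun _ => h s) ω ∂μ +
                  ∫ ω, B4.indicator (fun _ => (1:ℝ)) ω ∂μ :=
              integral_add int3 int4
            rw [I1, I2, I3, integral_indicator_const _ hB2, integral_indicator_const _ hB3,
              integral_indicator_const _ hB4, integral_const]
            simp [measure_univ, smul_eq_mul, measureReal_def]
    have mB4 : (μ B4).toReal ≤ c ^ lam * KM := by
      have hsub : B4 ⊆ {ω | M 1 ω ≤ c} := by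
        intro ω hω
        simp only [hB4def, Set.mem_setOf_eq] at *
        exact le_of_lt hω
      calc (μ B4).toReal ≤ (μ {ω | M 1 ω ≤ c}).toReal :=
            ENNReal.toReal_mono (measure_ne_top μ _) (measure_mono hsub)
        _ ≤ c ^ lam * KM := markovR (M 1) (hMmeas 1) hLM.ne c hc
    have mB2 : (μ B2).toReal ≤ R₀ ^ lam * c ^ lam * KD := by
      have hsub : B2 ⊆ {ω | D ω ≤ R₀ * c ^ (m - 1)} := by
        rintro ω ⟨hWc, hMR⟩
        simp only [Set.mem_setOf_eq]
        rw [show D ω = ∏ k ∈ Finset.Icc 1 m, M k ω from rfl, hsplit1m (fun k => M k ω)]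
        have h2 : ∏ k ∈ Finset.Ioc 1 m, M k ω ≤ c ^ (m - 1) := by
          have hcard : (Finset.Ioc 1 m).card = m - 1 := Nat.card_Ioc 1 m
          calc ∏ k ∈ Finset.Ioc 1 m, M k ω ≤ ∏ _k ∈ Finset.Ioc 1 m, c :=
                Finset.prod_le_prod (fun k _ => hMnn k ω)
                  (fun k hk => le_of_lt (lt_of_le_of_lt (hMleW ω k hk) hWc))
            _ = c ^ (m - 1) := by rw [Finset.prod_const, hcard]
        exact mul_le_mul hMR h2 (Finset.prod_nonneg fun k _ => hMnn k ω) (by linarith)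
      have hδ : (0:ℝ) < R₀ * c ^ (m - 1) := by positivity
      calc (μ B2).toReal ≤ (μ {ω | D ω ≤ R₀ * c ^ (m - 1)}).toReal :=
            ENNReal.toReal_mono (measure_ne_top μ _) (measure_mono hsub)
        _ ≤ (R₀ * c ^ (m - 1)) ^ lam * KD := markovR D hDmeas hLD.ne _ hδ
        _ ≤ R₀ ^ lam * c ^ lam * KD := by
            apply mul_le_mul_of_nonneg_right ?_ hKDnn
            rw [Real.mul_rpow hR₀0.le (by positivity)]
            apply mul_le_mul_of_nonneg_left ?_ (Real.rpow_nonneg hR₀0.le _)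
            have h1 : c ^ (m - 1) ≤ c := by
              calc c ^ (m - 1) ≤ c ^ 1 := pow_le_pow_of_le_one hc.le hc1 (by omega)
                _ = c := pow_one c
            exact Real.rpow_le_rpow (by positivity) h1 hlam.le
    have hXnn : (0:ℝ) ≤ c ^ lam := Real.rpow_nonneg hc.le _
    have hYnn : (0:ℝ) ≤ R₀ ^ lam := Real.rpow_nonneg hR₀0.le _
    have e3 : (μ B3).toReal * h s ≤ (1/2) * h s :=
      mul_le_mul_of_nonneg_right hR₀half (h_nn s)
    have hmain := (step5 s hs).trans hint
    nlinarith [h_nn s, sq_nonneg (h (s * c))]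
  -- h is eventually small
  set Zinf : Ω → ℝ := fun ω => ⨅ j, Z ω j with hZidef
  have hZimeas : Measurable Zinf :=
    Measurable.iInf fun j => (measurable_pi_apply j).comp hZmeas
  have hZinn : ∀ᵐ ω ∂μ, 0 < Zinf ω := by
    filter_upwards [hZpos] with ω hω
    have he : Finset.univ.inf' Finset.univ_nonempty (fun j => Z ω j) = ⨅ j, Z ω j :=
      Finset.inf'_univ_eq_ciInf _
    rw [show Zinf ω = ⨅ j, Z ω j from rfl, ← he, Finset.lt_inf'_iff]
    exact fun j _ => hω j
  have hZile : ∀ ω j, Zinf ω ≤ Z ω j := fun ω j => ciInf_le (Finite.bddBelow_range _) j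
  have htendG : Tendsto (fun n : ℕ => ∫ ω, Real.exp (-((n:ℝ) * Zinf ω)) ∂μ) atTop (𝓝 0) := by
    have h0' : (0:ℝ) = ∫ (_ : Ω), (0:ℝ) ∂μ := by simp
    rw [h0']
    apply tendsto_integral_of_dominated_convergence (fun _ => (1:ℝ))
    · intro n
      exact (Real.measurable_exp.comp
        ((measurable_const.mul hZimeas)).neg).aestronglyMeasurable
    · exact integrable_const 1
    · intro n
      filter_upwards [hZinn] with ω hω
      rw [Real.norm_eq_abs, abs_of_pos (Real.exp_pos _), Real.exp_le_one_iff]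
      have : 0 ≤ (n:ℝ) * Zinf ω := mul_nonneg (Nat.cast_nonneg n) hω.le
      linarith
    · filter_upwards [hZinn] with ω hω
      have h1 : Tendsto (fun n : ℕ => (n:ℝ) * Zinf ω) atTop atTop :=
        tendsto_natCast_atTop_atTop.atTop_mul_const hω
      have h2 : Tendsto (fun n : ℕ => -((n:ℝ) * Zinf ω)) atTop atBot :=
        tendsto_neg_atTop_atBot.comp h1
      exact Real.tendsto_exp_atBot.comp h2
  have hsmallh : ∃ S₁ : ℝ, 1 ≤ S₁ ∧ h S₁ ≤ 1/16 := by
    have hev := htendG.eventually_le_const (show (0:ℝ) < 1/16 by norm_num)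
    obtain ⟨n, hn⟩ := hev.exists
    refine ⟨max (n:ℝ) 1, le_max_right _ _, le_trans ?_ hn⟩
    apply hsup_le
    intro t ht0 hts
    rw [hφ t]
    have intn : Integrable (fun ω => Real.exp (-((n:ℝ) * Zinf ω))) μ := by
      refine (integrable_const (1:ℝ)).mono'
        ((Real.measurable_exp.comp ((measurable_const.mul hZimeas)).neg)).aestronglyMeasurable ?_
      filter_upwards [hZinn] with ω hω
      rw [Real.norm_eq_abs, abs_of_pos (Real.exp_pos _), Real.exp_le_one_iff]
      have : 0 ≤ (n:ℝ) * Zinf ω := mul_nonneg (Nat.cast_nonneg n) hω.le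
      linarith
    apply integral_mono_ae (intexp t ht0) intn
    filter_upwards [hZinn] with ω hω
    apply Real.exp_le_exp.2
    have l1 : (n:ℝ) * Zinf ω ≤ (∑ j, t j) * Zinf ω :=
      mul_le_mul_of_nonneg_right (le_trans (le_max_left _ _) hts) hω.le
    have l2 : (∑ j, t j) * Zinf ω ≤ ∑ j, t j * Z ω j := by
      rw [Finset.sum_mul]
      exact Finset.sum_le_sum fun j _ => mul_le_mul_of_nonneg_left (hZile ω j) (ht0 j)
    linarith
  -- a.e. positivity of the M k
  have haepos : ∀ᵐ ω ∂μ, ∀ k ∈ Finset.Icc 1 m, 0 < M k ω := by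
    have hmeasI : Measurable fun ω => ∏ k ∈ Finset.Icc 1 m, (ENNReal.ofReal (M k ω)) ^ (-lam) :=
      Finset.measurable_prod _ fun k _ => ((hMmeas k).ennreal_ofReal.pow_const _)
    have hae := ae_lt_top hmeasI hmomprod.ne
    filter_upwards [hae] with ω hω k hk
    rcases (hMnn k ω).lt_or_eq with hpos | heq
    · exact hpos
    · exfalso
      have hfactor_top : (ENNReal.ofReal (M k ω)) ^ (-lam) = ⊤ := by
        rw [← heq, ENNReal.ofReal_zero, ENNReal.zero_rpow_of_neg (neg_lt_zero.2 hlam)]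
      have hne0 : ∀ j ∈ (Finset.Icc 1 m).erase k, (ENNReal.ofReal (M j ω)) ^ (-lam) ≠ 0 := by
        intro j _
        intro hzero
        rw [ENNReal.rpow_eq_zero_iff] at hzero
        rcases hzero with ⟨_, hl⟩ | ⟨htop, _⟩
        · linarith
        · exact ENNReal.ofReal_ne_top htop
      have htop : ∏ k ∈ Finset.Icc 1 m, (ENNReal.ofReal (M k ω)) ^ (-lam) = ⊤ := by
        rw [← Finset.mul_prod_erase _ _ hk, hfactor_top,
          ENNReal.top_mul (Finset.prod_ne_zero_iff.2 hne0)]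
      rw [htop] at hω
      exact lt_irrefl ⊤ hω
  have hDpos_ae : ∀ᵐ ω ∂μ, 0 < D ω := by
    filter_upwards [haepos] with ω hω
    exact Finset.prod_pos fun k hk => hω k hk
  -- real rpow vs ENNReal rpow
  have ofReal_rpow_le : ∀ x : ℝ, 0 ≤ x →
      ENNReal.ofReal (x ^ (-lam)) ≤ (ENNReal.ofReal x) ^ (-lam) := by
    intro x hx
    rcases hx.lt_or_eq with hpos | heq
    · rw [ENNReal.ofReal_rpow_of_pos hpos]
    · rw [← heq, Real.zero_rpow (by linarith : -lam ≠ 0), ENNReal.ofReal_zero]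
      exact zero_le
  have intDlam : Integrable (fun ω => (D ω) ^ (-lam)) μ := by
    constructor
    · exact (hDmeas.pow_const _).aestronglyMeasurable
    · rw [hasFiniteIntegral_iff_ofReal (ae_of_all _ fun ω => Real.rpow_nonneg (hDnn ω) _)]
      calc ∫⁻ ω, ENNReal.ofReal ((D ω) ^ (-lam)) ∂μ
          ≤ ∫⁻ ω, (ENNReal.ofReal (D ω)) ^ (-lam) ∂μ :=
            lintegral_mono fun ω => ofReal_rpow_le _ (hDnn ω)
        _ < ⊤ := hLD
  have intDval : ∫ ω, (D ω) ^ (-lam) ∂μ ≤ KD := by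
    rw [integral_eq_lintegral_of_nonneg_ae (ae_of_all _ fun ω => Real.rpow_nonneg (hDnn ω) _)
      (hDmeas.pow_const _).aestronglyMeasurable]
    exact ENNReal.toReal_mono hLD.ne (lintegral_mono fun ω => ofReal_rpow_le _ (hDnn ω))
  -- bootstrap inequality
  have hbootP : ∀ γ C : ℝ, 0 < γ → γ ≤ lam → 1 ≤ C →
      (∀ u, 0 < u → h u ≤ C * u ^ (-γ)) →
      ∀ s, 0 < s → h s ≤ C ^ m * (KD + 1) * s ^ (-((m:ℝ) * γ)) := by
    intro γ C hγ hγlam hC hbd s hs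
    refine (step4 s hs.le).trans ?_
    have hint2 : Integrable (fun ω => C ^ m * s ^ (-((m:ℝ) * γ)) * (1 + (D ω) ^ (-lam))) μ :=
      (((integrable_const 1).add intDlam).const_mul _)
    have hpt : ∀ᵐ ω ∂μ, ∏ k ∈ Finset.Icc 1 m, h (s * M k ω)
        ≤ C ^ m * s ^ (-((m:ℝ) * γ)) * (1 + (D ω) ^ (-lam)) := by
      filter_upwards [haepos, hDpos_ae] with ω hω hDω
      have hcard : (Finset.Icc 1 m).card = m := by
        rw [Nat.card_Icc]; omega
      have l1 : ∏ k ∈ Finset.Icc 1 m, h (s * M k ω)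
          ≤ ∏ k ∈ Finset.Icc 1 m, (C * (s * M k ω) ^ (-γ)) :=
        Finset.prod_le_prod (fun k _ => h_nn _) (fun k hk => hbd _ (mul_pos hs (hω k hk)))
      have l2 : ∏ k ∈ Finset.Icc 1 m, (C * (s * M k ω) ^ (-γ))
          = C ^ m * ((s ^ m * D ω) ^ (-γ)) := by
        rw [Finset.prod_mul_distrib, Finset.prod_const, hcard]
        congr 1
        rw [Real.finset_prod_rpow _ _ (fun k _ => mul_nonneg hs.le (hMnn k ω)) _]
        congr 1
        rw [Finset.prod_mul_distrib, Finset.prod_const, hcard]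
      have l3 : (s ^ m * D ω) ^ (-γ) = s ^ (-((m:ℝ) * γ)) * (D ω) ^ (-γ) := by
        rw [Real.mul_rpow (by positivity) (hDnn ω)]
        congr 1
        rw [← Real.rpow_natCast s m, ← Real.rpow_mul hs.le]
        congr 1
        ring
      have l4 : (D ω) ^ (-γ) ≤ 1 + (D ω) ^ (-lam) := by
        rcases le_or_gt 1 (D ω) with hD1 | hD1
        · have h1' : (D ω) ^ (-γ) ≤ 1 :=
            Real.rpow_le_one_of_one_le_of_nonpos hD1 (by linarith)
          have h2' : 0 ≤ (D ω) ^ (-lam) := Real.rpow_nonneg (hDnn ω) _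
          linarith
        · have h1' : (D ω) ^ (-γ) ≤ (D ω) ^ (-lam) :=
            Real.rpow_le_rpow_of_exponent_ge hDω hD1.le (by linarith)
          linarith
      calc ∏ k ∈ Finset.Icc 1 m, h (s * M k ω)
          ≤ ∏ k ∈ Finset.Icc 1 m, (C * (s * M k ω) ^ (-γ)) := l1
        _ = C ^ m * ((s ^ m * D ω) ^ (-γ)) := l2
        _ = C ^ m * (s ^ (-((m:ℝ) * γ)) * (D ω) ^ (-γ)) := by rw [l3]
        _ ≤ C ^ m * (s ^ (-((m:ℝ) * γ)) * (1 + (D ω) ^ (-lam))) := by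
            apply mul_le_mul_of_nonneg_left ?_ (by positivity)
            exact mul_le_mul_of_nonneg_left l4 (Real.rpow_nonneg hs.le _)
        _ = C ^ m * s ^ (-((m:ℝ) * γ)) * (1 + (D ω) ^ (-lam)) := by ring
    calc ∫ ω, ∏ k ∈ Finset.Icc 1 m, h (s * M k ω) ∂μ
        ≤ ∫ ω, C ^ m * s ^ (-((m:ℝ) * γ)) * (1 + (D ω) ^ (-lam)) ∂μ :=
          integral_mono_ae (int_prodh s) hint2 hpt
      _ = C ^ m * s ^ (-((m:ℝ) * γ)) * (1 + ∫ ω, (D ω) ^ (-lam) ∂μ) := by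
          rw [integral_const_mul, integral_add (integrable_const 1) intDlam, integral_const]
          simp [measure_univ]
      _ ≤ C ^ m * (KD + 1) * s ^ (-((m:ℝ) * γ)) := by
          have hB : 1 + ∫ ω, (D ω) ^ (-lam) ∂μ ≤ KD + 1 := by linarith
          have hBnn : 0 ≤ 1 + ∫ ω, (D ω) ^ (-lam) ∂μ := by
            have : 0 ≤ ∫ ω, (D ω) ^ (-lam) ∂μ :=
              integral_nonneg fun ω => Real.rpow_nonneg (hDnn ω) _
            linarith
          have hCn : (0:ℝ) ≤ C ^ m := by positivity
          have hsn : (0:ℝ) ≤ s ^ (-((m:ℝ) * γ)) := Real.rpow_nonneg hs.le _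
          calc C ^ m * s ^ (-((m:ℝ) * γ)) * (1 + ∫ ω, (D ω) ^ (-lam) ∂μ)
              ≤ C ^ m * s ^ (-((m:ℝ) * γ)) * (KD + 1) :=
                mul_le_mul_of_nonneg_left hB (mul_nonneg hCn hsn)
            _ = C ^ m * (KD + 1) * s ^ (-((m:ℝ) * γ)) := by ring
  -- assemble via the abstract lemmas
  obtain ⟨βi, Ci, hβi, hβil, hCi, hbdi⟩ :=
    hm_lemA h hanti h_nn h_le1 lam K3 hlam hK3ge1 heart hsmallh
  obtain ⟨Cf, hCf, hbf⟩ := hm_lemB h h_le1 lam hlam m hm (KD + 1) (by linarith) hbootP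
    ⟨βi, Ci, hβi, hβil, hCi, hbdi⟩
  have part1 : ∀ t : Fin p → ℝ, (∀ j, 0 ≤ t j) → 1 ≤ ∑ j, t j →
      φ t ≤ Cf * (∑ j, t j) ^ (-((m:ℝ) * lam)) := by
    intro t ht0 hT
    exact (hP1 t ht0 _ le_rfl).trans (hbf _ (by linarith))
  -- part 2
  have part2 : ∀ y : Fin p → ℝ, (∀ j, 0 ≤ y j) → y ≠ 0 →
      ∃ C > 0, ∃ x₀ > 0, ∀ x : ℝ, 0 < x → x ≤ x₀ →
        (μ {ω | ∑ j, y j * Z ω j ≤ x}).toReal ≤ C * x ^ ((m:ℝ) * lam) := by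
    intro y hy0 hyne
    have hCf0 : (0:ℝ) < Cf := lt_of_lt_of_le one_pos hCf
    have hysum : 0 < ∑ j, y j := by
      obtain ⟨j₀, hj₀⟩ := Function.ne_iff.1 hyne
      exact Finset.sum_pos' (fun j _ => hy0 j)
        ⟨j₀, Finset.mem_univ _, lt_of_le_of_ne (hy0 j₀) (Ne.symm hj₀)⟩
    refine ⟨Real.exp 1 * Cf * (∑ j, y j) ^ (-((m:ℝ) * lam)), by positivity,
      ∑ j, y j, hysum, ?_⟩
    intro x hx hxle
    have ht0 : ∀ j, 0 ≤ y j / x := fun j => div_nonneg (hy0 j) hx.le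
    have htsum : ∑ j, y j / x = (∑ j, y j) / x := (Finset.sum_div _ _ _).symm
    have ht1 : 1 ≤ ∑ j, y j / x := by
      rw [htsum, le_div_iff₀ hx]
      linarith
    have hSmeas : MeasurableSet {ω | ∑ j, y j * Z ω j ≤ x} :=
      measurableSet_le (Finset.measurable_sum _ fun j _ =>
        measurable_const.mul ((measurable_pi_apply j).comp hZmeas)) measurable_const
    have hVpt : ∀ ω, ∑ j, (y j / x) * Z ω j = (∑ j, y j * Z ω j) / x := by
      intro ω
      rw [Finset.sum_div]
      exact Finset.sum_congr rfl fun j _ => by ring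
    have hindint : (μ {ω | ∑ j, y j * Z ω j ≤ x}).toReal
        = ∫ ω, Set.indicator {ω | ∑ j, y j * Z ω j ≤ x} (fun _ => (1:ℝ)) ω ∂μ := by
      rw [integral_indicator_const (1:ℝ) hSmeas]
      simp [measureReal_def]
    have hmono : ∫ ω, Set.indicator {ω | ∑ j, y j * Z ω j ≤ x} (fun _ => (1:ℝ)) ω ∂μ
        ≤ ∫ ω, Real.exp 1 * Real.exp (-(∑ j, (y j / x) * Z ω j)) ∂μ := by
      apply integral_mono ((integrable_const (1:ℝ)).indicator hSmeas)
        ((intexp _ ht0).const_mul _)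
      intro ω
      show Set.indicator {ω | ∑ j, y j * Z ω j ≤ x} (fun _ => (1:ℝ)) ω
        ≤ Real.exp 1 * Real.exp (-(∑ j, (y j / x) * Z ω j))
      by_cases hmem : ω ∈ {ω | ∑ j, y j * Z ω j ≤ x}
      · rw [Set.indicator_of_mem hmem, ← Real.exp_add]
        apply Real.one_le_exp
        rw [hVpt ω]
        have : (∑ j, y j * Z ω j) / x ≤ 1 := (div_le_one hx).2 hmem
        linarith
      · rw [Set.indicator_of_notMem hmem]
        positivity
    have hμφ : (μ {ω | ∑ j, y j * Z ω j ≤ x}).toReal ≤ Real.exp 1 * φ (fun j => y j / x) := by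
      rw [hindint, hφ (fun j => y j / x)]
      exact hmono.trans (le_of_eq (integral_const_mul _ _))
    have hφt := part1 (fun j => y j / x) ht0 ht1
    calc (μ {ω | ∑ j, y j * Z ω j ≤ x}).toReal
        ≤ Real.exp 1 * φ (fun j => y j / x) := hμφ
      _ ≤ Real.exp 1 * (Cf * (∑ j, y j / x) ^ (-((m:ℝ) * lam))) :=
          mul_le_mul_of_nonneg_left hφt (Real.exp_pos 1).le
      _ = Real.exp 1 * Cf * (∑ j, y j) ^ (-((m:ℝ) * lam)) * x ^ ((m:ℝ) * lam) := by
          rw [htsum]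
          have he : ((∑ j, y j) / x) ^ (-((m:ℝ) * lam))
              = (∑ j, y j) ^ (-((m:ℝ) * lam)) * x ^ ((m:ℝ) * lam) := by
            rw [Real.div_rpow hysum.le hx.le, div_eq_mul_inv, ← Real.rpow_neg hx.le, neg_neg]
          rw [he]
          ring
  -- part 3 via dyadic decomposition
  have tail_lemma : ∀ V : Ω → ℝ, Measurable V → (∀ᵐ ω ∂μ, 0 < V ω) →
      ∀ α βa C2 x₀ : ℝ, 0 < α → α < βa → 0 < C2 → 0 < x₀ →
      (∀ x : ℝ, 0 < x → x ≤ x₀ → (μ {ω | V ω ≤ x}).toReal ≤ C2 * x ^ βa) →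
      ∫⁻ ω, ENNReal.ofReal ((V ω) ^ (-α)) ∂μ < ⊤ := by
    intro V hVmeas hVpos α βa C2 x₀ hα hαβ hC2 hx₀ hP2
    have hw : (0:ℝ) < 1/2 := by norm_num
    have hw1 : (1/2:ℝ) < 1 := by norm_num
    have hSbig : MeasurableSet {ω | x₀ < V ω} := measurableSet_lt measurable_const hVmeas
    rw [← lintegral_add_compl (fun ω => ENNReal.ofReal (V ω ^ (-α))) hSbig]
    apply ENNReal.add_lt_top.2
    constructor
    · calc ∫⁻ ω in {ω | x₀ < V ω}, ENNReal.ofReal (V ω ^ (-α)) ∂μ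
          ≤ ∫⁻ _ω in {ω | x₀ < V ω}, ENNReal.ofReal (x₀ ^ (-α)) ∂μ := by
            apply setLIntegral_mono measurable_const
            intro ω hω
            apply ENNReal.ofReal_le_ofReal
            have hVω : 0 < V ω := lt_trans hx₀ hω
            rw [Real.rpow_neg hVω.le, Real.rpow_neg hx₀.le]
            exact inv_anti₀ (Real.rpow_pos_of_pos hx₀ α)
              (Real.rpow_le_rpow hx₀.le (le_of_lt hω) hα.le)
        _ = ENNReal.ofReal (x₀ ^ (-α)) * μ {ω | x₀ < V ω} := setLIntegral_const _ _
        _ ≤ ENNReal.ofReal (x₀ ^ (-α)) * 1 := mul_le_mul_right prob_le_one _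
        _ < ⊤ := by rw [mul_one]; exact ENNReal.ofReal_lt_top
    · have hcompl : {ω | x₀ < V ω}ᶜ = {ω | V ω ≤ x₀} := by
        ext ω; simp [not_lt]
      rw [hcompl]
      have hcover : {ω | V ω ≤ x₀} ⊆ {ω | V ω ≤ 0} ∪
          ⋃ n : ℕ, {ω | x₀ * (1/2:ℝ)^(n+1) < V ω ∧ V ω ≤ x₀ * (1/2:ℝ)^n} := by
        intro ω hω
        rcases le_or_gt (V ω) 0 with hv | hv
        · exact Or.inl hv
        · right
          have hex : ∃ n : ℕ, x₀ * (1/2:ℝ)^n < V ω := by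
            obtain ⟨n, hn⟩ := exists_pow_lt_of_lt_one (div_pos hv hx₀) hw1
            refine ⟨n, ?_⟩
            rw [mul_comm]
            exact (lt_div_iff₀ hx₀).1 hn
          have hfind := Nat.find_spec hex
          have hn₁ne : Nat.find hex ≠ 0 := by
            intro h0
            rw [h0, pow_zero, mul_one] at hfind
            exact absurd hω (not_le.2 hfind)
          obtain ⟨n, hn⟩ : ∃ n, Nat.find hex = n + 1 := ⟨Nat.find hex - 1, by omega⟩
          refine Set.mem_iUnion.2 ⟨n, ?_, ?_⟩
          · rw [← hn]; exact hfind
          · have := Nat.find_min hex (show n < Nat.find hex by omega)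
            exact not_lt.1 this
      have hnull : μ {ω | V ω ≤ 0} = 0 := by
        have h1 := hVpos
        rw [ae_iff] at h1
        convert h1 using 2
        ext ω
        simp [not_lt]
      calc ∫⁻ ω in {ω | V ω ≤ x₀}, ENNReal.ofReal (V ω ^ (-α)) ∂μ
          ≤ ∫⁻ ω in {ω | V ω ≤ 0} ∪
              ⋃ n : ℕ, {ω | x₀ * (1/2:ℝ)^(n+1) < V ω ∧ V ω ≤ x₀ * (1/2:ℝ)^n},
              ENNReal.ofReal (V ω ^ (-α)) ∂μ := lintegral_mono_set hcover
        _ ≤ ∫⁻ ω in {ω | V ω ≤ 0}, ENNReal.ofReal (V ω ^ (-α)) ∂μ +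
            ∫⁻ ω in ⋃ n : ℕ, {ω | x₀ * (1/2:ℝ)^(n+1) < V ω ∧ V ω ≤ x₀ * (1/2:ℝ)^n},
              ENNReal.ofReal (V ω ^ (-α)) ∂μ := lintegral_union_le _ _ _
        _ ≤ 0 + ∑' n : ℕ, ∫⁻ ω in {ω | x₀ * (1/2:ℝ)^(n+1) < V ω ∧ V ω ≤ x₀ * (1/2:ℝ)^n},
              ENNReal.ofReal (V ω ^ (-α)) ∂μ := by
            apply add_le_add
            · rw [setLIntegral_measure_zero _ _ hnull]
            · exact lintegral_iUnion_le _ _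
        _ ≤ ∑' n : ℕ, (ENNReal.ofReal (C2 * x₀ ^ (βa - α) * (1/2:ℝ) ^ (-α)) *
              (ENNReal.ofReal ((1/2:ℝ) ^ (βa - α))) ^ n) := by
            rw [zero_add]
            apply ENNReal.tsum_le_tsum
            intro n
            have hxn : (0:ℝ) < x₀ * (1/2:ℝ)^(n+1) := by positivity
            have hxn' : (0:ℝ) < x₀ * (1/2:ℝ)^n := by positivity
            have hAn : {ω | x₀ * (1/2:ℝ)^(n+1) < V ω ∧ V ω ≤ x₀ * (1/2:ℝ)^n}
                ⊆ {ω | V ω ≤ x₀ * (1/2:ℝ)^n} := by intro ω hω; exact hω.2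
            have hμAn : μ {ω | x₀ * (1/2:ℝ)^(n+1) < V ω ∧ V ω ≤ x₀ * (1/2:ℝ)^n}
                ≤ ENNReal.ofReal (C2 * (x₀ * (1/2:ℝ)^n) ^ βa) := by
              have hle := hP2 (x₀ * (1/2:ℝ)^n) hxn'
                (by
                  have : (1/2:ℝ)^n ≤ 1 := pow_le_one₀ hw.le hw1.le
                  nlinarith)
              exact le_trans (measure_mono hAn)
                ((ENNReal.le_ofReal_iff_toReal_le (measure_ne_top μ _) (by positivity)).2 hle)
            calc ∫⁻ ω in {ω | x₀ * (1/2:ℝ)^(n+1) < V ω ∧ V ω ≤ x₀ * (1/2:ℝ)^n},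
                  ENNReal.ofReal (V ω ^ (-α)) ∂μ
                ≤ ∫⁻ _ω in {ω | x₀ * (1/2:ℝ)^(n+1) < V ω ∧ V ω ≤ x₀ * (1/2:ℝ)^n},
                  ENNReal.ofReal ((x₀ * (1/2:ℝ)^(n+1)) ^ (-α)) ∂μ := by
                  apply setLIntegral_mono measurable_const
                  intro ω hω
                  apply ENNReal.ofReal_le_ofReal
                  have hVω : 0 < V ω := lt_trans hxn hω.1
                  rw [Real.rpow_neg hVω.le, Real.rpow_neg hxn.le]
                  exact inv_anti₀ (Real.rpow_pos_of_pos hxn α)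
                    (Real.rpow_le_rpow hxn.le (le_of_lt hω.1) hα.le)
              _ = ENNReal.ofReal ((x₀ * (1/2:ℝ)^(n+1)) ^ (-α)) *
                  μ {ω | x₀ * (1/2:ℝ)^(n+1) < V ω ∧ V ω ≤ x₀ * (1/2:ℝ)^n} :=
                  setLIntegral_const _ _
              _ ≤ ENNReal.ofReal ((x₀ * (1/2:ℝ)^(n+1)) ^ (-α)) *
                  ENNReal.ofReal (C2 * (x₀ * (1/2:ℝ)^n) ^ βa) := mul_le_mul_right hμAn _
              _ = ENNReal.ofReal ((x₀ * (1/2:ℝ)^(n+1)) ^ (-α) *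
                  (C2 * (x₀ * (1/2:ℝ)^n) ^ βa)) :=
                  (ENNReal.ofReal_mul (by positivity)).symm
              _ ≤ ENNReal.ofReal ((C2 * x₀ ^ (βa - α) * (1/2:ℝ) ^ (-α)) *
                  ((1/2:ℝ) ^ (βa - α)) ^ n) := by
                  apply ENNReal.ofReal_le_ofReal
                  apply le_of_eq
                  have e1 : ((x₀ * (1/2:ℝ)^(n+1)) : ℝ) ^ (-α)
                      = x₀ ^ (-α) * (1/2:ℝ) ^ (((n:ℝ)+1) * (-α)) := by
                    rw [Real.mul_rpow hx₀.le (by positivity)]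
                    congr 1
                    rw [← Real.rpow_natCast (1/2:ℝ) (n+1), ← Real.rpow_mul hw.le]
                    congr 1
                    push_cast
                    ring
                  have e2 : ((x₀ * (1/2:ℝ)^n) : ℝ) ^ βa
                      = x₀ ^ βa * (1/2:ℝ) ^ ((n:ℝ) * βa) := by
                    rw [Real.mul_rpow hx₀.le (by positivity)]
                    congr 1
                    rw [← Real.rpow_natCast (1/2:ℝ) n, ← Real.rpow_mul hw.le]
                  have e3 : (((1/2:ℝ) ^ (βa - α)) : ℝ) ^ n
                      = (1/2:ℝ) ^ ((n:ℝ) * (βa - α)) := by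
                    rw [← Real.rpow_natCast ((1/2:ℝ) ^ (βa - α)) n, ← Real.rpow_mul hw.le]
                    congr 1
                    ring
                  rw [e1, e2, e3]
                  rw [show x₀ ^ (-α) * (1/2:ℝ) ^ (((n:ℝ)+1) * (-α)) *
                      (C2 * (x₀ ^ βa * (1/2:ℝ) ^ ((n:ℝ) * βa)))
                      = C2 * (x₀ ^ (-α) * x₀ ^ βa) *
                        ((1/2:ℝ) ^ (((n:ℝ)+1) * (-α)) * (1/2:ℝ) ^ ((n:ℝ) * βa)) by ring]
                  rw [← Real.rpow_add hx₀, ← Real.rpow_add hw]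
                  rw [show C2 * x₀ ^ (βa - α) * (1/2:ℝ) ^ (-α) * (1/2:ℝ) ^ ((n:ℝ) * (βa - α))
                      = C2 * x₀ ^ (βa - α) * ((1/2:ℝ) ^ (-α) * (1/2:ℝ) ^ ((n:ℝ) * (βa - α)))
                      from by ring, ← Real.rpow_add hw]
                  congr 2
                  · ring
                  · ring
              _ = ENNReal.ofReal (C2 * x₀ ^ (βa - α) * (1/2:ℝ) ^ (-α)) *
                  (ENNReal.ofReal ((1/2:ℝ) ^ (βa - α))) ^ n := by
                  rw [ENNReal.ofReal_mul (by positivity), ENNReal.ofReal_pow (by positivity)]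
        _ < ⊤ := by
            rw [ENNReal.tsum_mul_left, ENNReal.tsum_geometric]
            apply ENNReal.mul_lt_top ENNReal.ofReal_lt_top
            rw [ENNReal.inv_lt_top]
            rw [tsub_pos_iff_lt]
            exact ENNReal.ofReal_lt_one.2 (Real.rpow_lt_one hw.le hw1 (by linarith))
  refine ⟨⟨Cf, by linarith, 1, one_pos, part1⟩, part2, ?_⟩
  intro y hy0 hyne lam₁ hlam₁ hlam₁lt
  obtain ⟨C2, hC2, x₀, hx₀, hP2⟩ := part2 y hy0 hyne
  have hm0 : (0:ℝ) < m := by exact_mod_cast (by omega : 0 < m)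
  have hVpos : ∀ᵐ ω ∂μ, 0 < ∑ j, y j * Z ω j := by
    filter_upwards [hZpos] with ω hω
    obtain ⟨j₀, hj₀⟩ := Function.ne_iff.1 hyne
    exact Finset.sum_pos' (fun j _ => mul_nonneg (hy0 j) (hω j).le)
      ⟨j₀, Finset.mem_univ _, mul_pos (lt_of_le_of_ne (hy0 j₀) (Ne.symm hj₀)) (hω j₀)⟩
  exact tail_lemma (fun ω => ∑ j, y j * Z ω j)
    (Finset.measurable_sum _ fun j _ => measurable_const.mul ((measurable_pi_apply j).comp hZmeas))
    hVpos ((m:ℝ) * lam₁) ((m:ℝ) * lam) C2 x₀ (mul_pos hm0 hlam₁)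
    (mul_lt_mul_of_pos_left hlam₁lt hm0) hC2 hx₀ hP2
end

section
/- Let m̲ ≥ 2 be an integer with N ≥ m̲ almost surely, and let a̲ > 0 be a constant such that (A_k)_{ij} ≥ a̲ almost surely for all i, j ∈ {1,…,p} and all 1 ≤ k ≤ m̲. Assume a̲ p m̲ < 1 and a̲ p < 1, so that γ := −log m̲ / log(a̲ p) ∈ (0,1) (in the paper this strict inequality is deduced from Assumption (H) together with P(N = m̲) > 0). Then there exists a constant C₁ > 0 such that φ(t) ≤ exp(−C₁ ‖t‖^γ) for all t ∈ [0,∞)^p with ‖t‖ sufficiently large, and for every fixed nonzero y ∈ [0,∞)^p there exists a constant C_{1,y} > 0 such that P(y·Z ≤ x) ≤ exp(−C_{1,y} x^{−γ/(1−γ)}) for all x > 0 sufficiently small. -/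
open MeasureTheory ProbabilityTheory Filter

set_option maxHeartbeats 1000000 in
/-- **Theorem 2.4(a) (the exponential case, upper bound).** Suppose `N ≥ m̲ ≥ 2` a.s.,
`(A_k)_{ij} ≥ a̲ > 0` a.s. for all `i,j` and `1 ≤ k ≤ m̲`, and `a̲ p m̲ < 1`, `a̲ p < 1`
(so that `γ = -log m̲ / log(a̲ p) ∈ (0,1)`).  Then there is `C₁ > 0` with
`φ(t) ≤ exp(-C₁ ‖t‖^γ)` for all `t ∈ [0,∞)^p` with `‖t‖` large enough, and for every fixed
nonzero `y ∈ [0,∞)^p` there is `C_{1,y} > 0` with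
`P(y·Z ≤ x) ≤ exp(-C_{1,y} x^{-γ/(1-γ)})` for all small `x > 0`. -/
theorem exponential_decay_upper
    {Ω : Type*} [MeasurableSpace Ω] (μ : Measure Ω) [IsProbabilityMeasure μ]
    {p : ℕ} (hp : 0 < p)
    (N : Ω → ℕ) (hN : ∀ ω, 1 ≤ N ω) (hNmeas : Measurable N)
    (A : ℕ → Ω → Fin p → Fin p → ℝ) (hApos : ∀ k ω i j, 0 ≤ A k ω i j)
    (hAmeas : ∀ k, Measurable (A k))
    (Z : Ω → Fin p → ℝ) (hZmeas : Measurable Z)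
    (hZpos : ∀ᵐ ω ∂μ, ∀ j, 0 < Z ω j)
    (φ : (Fin p → ℝ) → ℝ)
    (hφ : ∀ t : Fin p → ℝ, φ t = ∫ ω, Real.exp (-(∑ j, t j * Z ω j)) ∂μ)
    (hfe : ∀ t : Fin p → ℝ, (∀ j, 0 ≤ t j) →
      φ t = ∫ ω, ∏ k ∈ Finset.Icc 1 (N ω), φ (fun j => ∑ i, t i * A k ω i j) ∂μ)
    (m : ℕ) (hm : 2 ≤ m) (hNm : ∀ᵐ ω ∂μ, m ≤ N ω)
    (a : ℝ) (ha : 0 < a)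
    (hAa : ∀ᵐ ω ∂μ, ∀ k, 1 ≤ k → k ≤ m → ∀ i j, a ≤ A k ω i j)
    (hapm : a * p * m < 1) (hap : a * p < 1) :
    (∃ C₁ > 0, ∃ T > 0, ∀ t : Fin p → ℝ, (∀ j, 0 ≤ t j) → T ≤ ∑ j, t j →
      φ t ≤ Real.exp (-(C₁ * (∑ j, t j) ^ (-Real.log m / Real.log (a * p))))) ∧
    (∀ y : Fin p → ℝ, (∀ j, 0 ≤ y j) → y ≠ 0 →
      ∃ C > 0, ∃ x₀ > 0, ∀ x : ℝ, 0 < x → x ≤ x₀ →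
        μ {ω | ∑ j, y j * Z ω j ≤ x} ≤ ENNReal.ofReal (Real.exp (-(C *
          x ^ (-((-Real.log m / Real.log (a * p)) /
            (1 - (-Real.log m / Real.log (a * p))))))))) := by
  set γ := -Real.log m / Real.log (a * p) with hγdef
  have hpR : (0:ℝ) < p := by exact_mod_cast hp
  have hmR : (1:ℝ) < m := by
    have : (2:ℝ) ≤ m := by exact_mod_cast hm
    linarith
  have hap0 : (0:ℝ) < a * p := mul_pos ha hpR
  have hLneg : Real.log (a * p) < 0 := Real.log_neg hap0 hap
  have hlogm : 0 < Real.log m := Real.log_pos hmR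
  have hγL : γ * Real.log (a * p) = -Real.log m := by
    rw [hγdef, div_mul_cancel₀ _ hLneg.ne]
  have hγpos : 0 < γ := by
    rw [hγdef]
    exact div_pos_iff.mpr (Or.inr ⟨by linarith, hLneg⟩)
  have hγlt1 : γ < 1 := by
    have hlog : Real.log (a * p * m) < 0 :=
      Real.log_neg (mul_pos hap0 (by linarith : (0:ℝ) < m)) hapm
    rw [Real.log_mul hap0.ne' (by positivity : ((m:ℝ)) ≠ 0)] at hlog
    by_contra h
    push_neg at h
    have h2 : γ * Real.log (a * p) ≤ 1 * Real.log (a * p) :=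
      mul_le_mul_of_nonpos_right h hLneg.le
    rw [hγL, one_mul] at h2
    linarith
  -- integrability
  have hsummeas : ∀ t : Fin p → ℝ, Measurable fun ω => ∑ j, t j * Z ω j := by
    intro t
    exact Finset.measurable_sum _ fun j _ =>
      measurable_const.mul ((measurable_pi_apply j).comp hZmeas)
  have hint : ∀ t : Fin p → ℝ, (∀ j, 0 ≤ t j) →
      Integrable (fun ω => Real.exp (-(∑ j, t j * Z ω j))) μ := by
    intro t ht
    refine Integrable.mono' (integrable_const 1)
      ((((hsummeas t).neg).exp).aestronglyMeasurable) ?_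
    filter_upwards [hZpos] with ω hω
    rw [Real.norm_eq_abs, abs_of_pos (Real.exp_pos _)]
    refine Real.exp_le_one_iff.mpr ?_
    simp only [neg_nonpos]
    exact Finset.sum_nonneg fun j _ => mul_nonneg (ht j) (hω j).le
  have hφ0 : ∀ t, 0 ≤ φ t := by
    intro t; rw [hφ]
    exact integral_nonneg fun ω => (Real.exp_pos _).le
  have hφ1 : ∀ t : Fin p → ℝ, (∀ j, 0 ≤ t j) → φ t ≤ 1 := by
    intro t ht; rw [hφ]
    calc ∫ ω, Real.exp (-(∑ j, t j * Z ω j)) ∂μ ≤ ∫ _, (1:ℝ) ∂μ := by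
          refine integral_mono_of_nonneg (ae_of_all _ fun ω => (Real.exp_pos _).le)
            (integrable_const 1) ?_
          filter_upwards [hZpos] with ω hω
          refine Real.exp_le_one_iff.mpr ?_
          simp only [neg_nonpos]
          exact Finset.sum_nonneg fun j _ => mul_nonneg (ht j) (hω j).le
      _ = 1 := by simp
  have hφpos : ∀ t : Fin p → ℝ, (∀ j, 0 ≤ t j) → 0 < φ t := by
    intro t ht; rw [hφ]
    refine (integral_pos_iff_support_of_nonneg_ae
      (ae_of_all _ fun ω => (Real.exp_pos _).le) (hint t ht)).mpr ?_
    have hsup : Function.support (fun ω => Real.exp (-(∑ j, t j * Z ω j))) = Set.univ :=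
      Set.eq_univ_of_forall fun ω => (Real.exp_pos _).ne'
    rw [hsup]; simp
  have hmono : ∀ t t' : Fin p → ℝ, (∀ j, 0 ≤ t j) → (∀ j, t j ≤ t' j) → φ t' ≤ φ t := by
    intro t t' ht htt'
    rw [hφ, hφ]
    refine integral_mono_of_nonneg (ae_of_all _ fun ω => (Real.exp_pos _).le) (hint t ht) ?_
    filter_upwards [hZpos] with ω hω
    refine Real.exp_le_exp.mpr (neg_le_neg ?_)
    exact Finset.sum_le_sum fun j _ => mul_le_mul_of_nonneg_right (htt' j) (hω j).le
  -- the key inequality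
  have hkey : ∀ t : Fin p → ℝ, (∀ j, 0 ≤ t j) →
      φ t ≤ (φ (fun _ => a * ∑ j, t j)) ^ m := by
    intro t ht
    have hSnn : 0 ≤ ∑ j, t j := Finset.sum_nonneg fun j _ => ht j
    set c := φ (fun _ => a * ∑ j, t j) with hc
    have hc0 : 0 ≤ c := hφ0 _
    rw [hfe t ht]
    have hb : ∀ᵐ ω ∂μ,
        (∏ k ∈ Finset.Icc 1 (N ω), φ (fun j => ∑ i, t i * A k ω i j)) ≤ c ^ m := by
      filter_upwards [hNm, hAa] with ω hNω hAω
      rw [show (1:ℕ) = 0 + 1 from rfl, Finset.Icc_add_one_left_eq_Ioc]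
      rw [← Finset.prod_Ioc_consecutive _ (Nat.zero_le m) hNω]
      have h1 : (∏ k ∈ Finset.Ioc 0 m, φ (fun j => ∑ i, t i * A k ω i j)) ≤ c ^ m := by
        have hcm : c ^ m = ∏ _k ∈ Finset.Ioc 0 m, c := by
          rw [Finset.prod_const, Nat.card_Ioc, Nat.sub_zero]
        rw [hcm]
        refine Finset.prod_le_prod (fun k _ => hφ0 _) ?_
        intro k hk
        rw [Finset.mem_Ioc] at hk
        refine hmono _ _ (fun j => mul_nonneg ha.le hSnn) ?_
        intro j
        calc a * ∑ j', t j' = ∑ i, t i * a := by rw [← Finset.sum_mul, mul_comm]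
          _ ≤ ∑ i, t i * A k ω i j :=
            Finset.sum_le_sum fun i _ =>
              mul_le_mul_of_nonneg_left (hAω k hk.1 hk.2 i j) (ht i)
      have h2 : (∏ k ∈ Finset.Ioc m (N ω), φ (fun j => ∑ i, t i * A k ω i j)) ≤ 1 := by
        refine Finset.prod_le_one (fun k _ => hφ0 _) ?_
        intro k _
        exact hφ1 _ fun j => Finset.sum_nonneg fun i _ => mul_nonneg (ht i) (hApos k ω i j)
      calc (∏ k ∈ Finset.Ioc 0 m, φ (fun j => ∑ i, t i * A k ω i j)) *
            ∏ k ∈ Finset.Ioc m (N ω), φ (fun j => ∑ i, t i * A k ω i j)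
          ≤ c ^ m * 1 :=
            mul_le_mul h1 h2 (Finset.prod_nonneg fun k _ => hφ0 _) (pow_nonneg hc0 m)
        _ = c ^ m := mul_one _
    calc (∫ ω, ∏ k ∈ Finset.Icc 1 (N ω), φ (fun j => ∑ i, t i * A k ω i j) ∂μ)
        ≤ ∫ _, c ^ m ∂μ := by
          refine integral_mono_of_nonneg
            (ae_of_all _ fun ω => Finset.prod_nonneg fun k _ => hφ0 _)
            (integrable_const _) hb
      _ = c ^ m := by simp
  -- step inequality for the diagonal function
  have hstep : ∀ s : ℝ, 0 ≤ s →
      φ (fun _ => s / (a * p)) ≤ (φ (fun _ => s)) ^ m := by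
    intro s hs
    have h := hkey (fun _ => s / (a * p)) (fun _ => div_nonneg hs hap0.le)
    have h1 : a * (∑ _j : Fin p, s / (a * p)) = s := by
      rw [Finset.sum_const, Finset.card_univ, Fintype.card_fin, nsmul_eq_mul]
      field_simp
    rw [h1] at h
    exact h
  -- iteration
  set b : ℝ := (a * p)⁻¹ with hbdef
  have hb0 : 0 < b := inv_pos.mpr hap0
  have hb1 : 1 < b := one_lt_inv_iff₀.mpr ⟨hap0, hap⟩
  have hiter : ∀ n : ℕ, φ (fun _ => b ^ n) ≤ (φ (fun _ => (1:ℝ))) ^ (m ^ n) := by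
    intro n
    induction n with
    | zero => simp
    | succ n ih =>
      have h1 := hstep (b ^ n) (pow_nonneg hb0.le n)
      have h2 : b ^ n / (a * p) = b ^ (n + 1) := by
        rw [pow_succ, div_eq_mul_inv]
      rw [h2] at h1
      calc φ (fun _ => b ^ (n+1)) ≤ (φ (fun _ => b ^ n)) ^ m := h1
        _ ≤ ((φ (fun _ => (1:ℝ))) ^ (m ^ n)) ^ m := pow_le_pow_left₀ (hφ0 _) ih m
        _ = (φ (fun _ => (1:ℝ))) ^ (m ^ (n+1)) := by rw [← pow_mul, pow_succ]
  -- φ(1,...,1) < 1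
  have hφone_pos : 0 < φ (fun _ => (1:ℝ)) := hφpos _ fun _ => zero_le_one
  have hφone_lt : φ (fun _ => (1:ℝ)) < 1 := by
    have hintone := hint (fun _ => (1:ℝ)) fun _ => zero_le_one
    have hpos : 0 < ∫ ω, ((1:ℝ) - Real.exp (-(∑ j, (1:ℝ) * Z ω j))) ∂μ := by
      refine (integral_pos_iff_support_of_nonneg_ae ?_ ?_).mpr ?_
      · filter_upwards [hZpos] with ω hω
        rw [Pi.zero_apply, sub_nonneg]
        refine Real.exp_le_one_iff.mpr ?_
        simp only [neg_nonpos]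
        exact Finset.sum_nonneg fun j _ => mul_nonneg zero_le_one (hω j).le
      · exact (integrable_const 1).sub hintone
      · have hmem : ∀ᵐ ω ∂μ, ω ∈ Function.support
            fun ω => (1:ℝ) - Real.exp (-(∑ j, (1:ℝ) * Z ω j)) := by
          filter_upwards [hZpos] with ω hω
          have hsum : 0 < ∑ j, (1:ℝ) * Z ω j := by
            refine Finset.sum_pos (fun j _ => by simpa using hω j) ?_
            exact Finset.univ_nonempty_iff.mpr (Fin.pos_iff_nonempty.mp hp)
          have : Real.exp (-(∑ j, (1:ℝ) * Z ω j)) < 1 := by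
            rw [Real.exp_lt_one_iff]; linarith
          simp only [Function.mem_support]
          intro hcontr
          nlinarith [this]
        by_contra h0
        push_neg at h0
        have hz : μ (Function.support
            fun ω => (1:ℝ) - Real.exp (-(∑ j, (1:ℝ) * Z ω j))) = 0 := le_antisymm h0 zero_le
        have hnm := measure_eq_zero_iff_ae_notMem.mp hz
        obtain ⟨ω, h1ω, h2ω⟩ := (hmem.and hnm).exists
        exact h2ω h1ω
    have heq : (∫ ω, ((1:ℝ) - Real.exp (-(∑ j, (1:ℝ) * Z ω j))) ∂μ)
        = 1 - φ (fun _ => (1:ℝ)) := by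
      rw [integral_sub (integrable_const 1) hintone, hφ]
      simp
    rw [heq] at hpos
    linarith
  set c : ℝ := -Real.log (φ (fun _ => (1:ℝ))) with hcdef
  have hcpos : 0 < c := by
    rw [hcdef, neg_pos]
    exact Real.log_neg hφone_pos hφone_lt
  have hφone_eq : φ (fun _ => (1:ℝ)) = Real.exp (-c) := by
    rw [hcdef, neg_neg, Real.exp_log hφone_pos]
  -- m = b ^ γ
  have hmb : (m:ℝ) = b ^ γ := by
    rw [Real.rpow_def_of_pos hb0, Real.log_inv]
    have he : -Real.log (a * p) * γ = Real.log m := by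
      have := hγL; nlinarith [hγL]
    rw [he, Real.exp_log (by linarith : (0:ℝ) < m)]
  -- the bound on the diagonal
  have hFbound : ∀ s : ℝ, 1 ≤ s →
      φ (fun _ => s) ≤ Real.exp (-(c * (a * p) ^ γ * s ^ γ)) := by
    intro s hs
    have hs0 : 0 < s := lt_of_lt_of_le one_pos hs
    set n : ℕ := ⌊Real.log s / Real.log b⌋₊ with hndef
    have hlogb : 0 < Real.log b := Real.log_pos hb1
    have hlogs : 0 ≤ Real.log s := Real.log_nonneg hs
    have hn1 : (n:ℝ) ≤ Real.log s / Real.log b := Nat.floor_le (div_nonneg hlogs hlogb.le)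
    have hn2 : Real.log s / Real.log b < n + 1 := Nat.lt_floor_add_one _
    have hbn : b ^ n ≤ s := by
      have h1 : (n:ℝ) * Real.log b ≤ Real.log s := (le_div_iff₀ hlogb).mp hn1
      calc b ^ n = Real.exp ((n:ℝ) * Real.log b) := by
            rw [Real.exp_nat_mul, Real.exp_log hb0]
        _ ≤ Real.exp (Real.log s) := Real.exp_le_exp.mpr h1
        _ = s := Real.exp_log hs0
    have hsb : s < b ^ (n + 1) := by
      have h1 : Real.log s < ((n:ℝ) + 1) * Real.log b := by
        rw [div_lt_iff₀ hlogb] at hn2; exact hn2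
      calc s = Real.exp (Real.log s) := (Real.exp_log hs0).symm
        _ < Real.exp (((n:ℝ) + 1) * Real.log b) := Real.exp_lt_exp.mpr h1
        _ = b ^ (n + 1) := by
            rw [show ((n:ℝ) + 1) = ((n + 1 : ℕ) : ℝ) by push_cast; ring,
              Real.exp_nat_mul, Real.exp_log hb0]
    have h1 : φ (fun _ => s) ≤ φ (fun _ => b ^ n) :=
      hmono (fun _ => b ^ n) (fun _ => s) (fun _ => pow_nonneg hb0.le n) (fun _ => hbn)
    have h2 : (φ (fun _ => (1:ℝ))) ^ (m ^ n) = Real.exp (-(c * m ^ n)) := by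
      rw [hφone_eq, ← Real.exp_nat_mul]
      congr 1
      push_cast
      ring
    -- (a*p)^γ * s^γ ≤ m^n
    have h3 : (a * p) ^ γ * s ^ γ ≤ ((m:ℝ)) ^ n := by
      have hsb' : (a * p) * s ≤ b ^ n := by
        have : s * (a * p) < b ^ (n + 1) * (a * p) :=
          mul_lt_mul_of_pos_right hsb hap0
        have hbp : b ^ (n + 1) * (a * p) = b ^ n := by
          rw [pow_succ, hbdef]
          field_simp
        nlinarith [this, hbp]
      calc (a * p) ^ γ * s ^ γ = ((a * p) * s) ^ γ :=
            (Real.mul_rpow hap0.le hs0.le).symm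
        _ ≤ (b ^ n) ^ γ := Real.rpow_le_rpow (by positivity) hsb' hγpos.le
        _ = ((m:ℝ)) ^ n := by
            rw [← Real.rpow_natCast b n, ← Real.rpow_mul hb0.le, mul_comm ((n:ℝ)) γ,
              Real.rpow_mul hb0.le, ← hmb, Real.rpow_natCast]
    calc φ (fun _ => s) ≤ φ (fun _ => b ^ n) := h1
      _ ≤ (φ (fun _ => (1:ℝ))) ^ (m ^ n) := hiter n
      _ = Real.exp (-(c * m ^ n)) := h2
      _ ≤ Real.exp (-(c * (a * p) ^ γ * s ^ γ)) := by
          refine Real.exp_le_exp.mpr ?_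
          have : c * ((a * p) ^ γ * s ^ γ) ≤ c * (m:ℝ) ^ n :=
            mul_le_mul_of_nonneg_left h3 hcpos.le
          push_cast at this ⊢
          nlinarith [this]
  -- Part 1
  have hpart1 : ∃ C₁ > 0, ∃ T > 0, ∀ t : Fin p → ℝ, (∀ j, 0 ≤ t j) → T ≤ ∑ j, t j →
      φ t ≤ Real.exp (-(C₁ * (∑ j, t j) ^ γ)) := by
    refine ⟨c * (a * p) ^ γ * a ^ γ, by positivity, 1 / a, by positivity, ?_⟩
    intro t ht hT
    have hSpos : 0 < ∑ j, t j := lt_of_lt_of_le (by positivity) hT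
    have haS : 1 ≤ a * ∑ j, t j := by
      rw [div_le_iff₀ ha] at hT
      nlinarith [hT]
    have h1 := hkey t ht
    have h2 : (φ (fun _ => a * ∑ j, t j)) ^ m ≤ φ (fun _ => a * ∑ j, t j) := by
      have h := pow_le_pow_of_le_one (hφ0 (fun _ => a * ∑ j, t j))
        (hφ1 (fun _ => a * ∑ j, t j) fun _ => by positivity) (show 1 ≤ m by omega)
      rw [pow_one] at h
      exact h
    have h3 := hFbound (a * ∑ j, t j) haS
    have h4 : (a * ∑ j, t j) ^ γ = a ^ γ * (∑ j, t j) ^ γ :=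
      Real.mul_rpow ha.le hSpos.le
    calc φ t ≤ (φ (fun _ => a * ∑ j, t j)) ^ m := h1
      _ ≤ φ (fun _ => a * ∑ j, t j) := h2
      _ ≤ Real.exp (-(c * (a * p) ^ γ * (a * ∑ j, t j) ^ γ)) := h3
      _ = Real.exp (-(c * (a * p) ^ γ * a ^ γ * (∑ j, t j) ^ γ)) := by
          rw [h4]; ring_nf
  obtain ⟨C₁, hC₁, T, hT, hbound⟩ := hpart1
  constructor
  · exact ⟨C₁, hC₁, T, hT, hbound⟩
  -- Part 2
  intro y hy0 hy
  have hY : 0 < ∑ j, y j := by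
    obtain ⟨j, hj⟩ : ∃ j, y j ≠ 0 := by
      by_contra h; push_neg at h; exact hy (funext h)
    exact Finset.sum_pos' (fun i _ => hy0 i) ⟨j, Finset.mem_univ j, (hy0 j).lt_of_ne' hj⟩
  set Y := ∑ j, y j with hYdef
  have h1γ : 0 < 1 - γ := by linarith
  set κ : ℝ := (C₁ * Y ^ γ / 2) ^ ((1:ℝ) / (1 - γ)) with hκdef
  have hbase : 0 < C₁ * Y ^ γ / 2 := by positivity
  have hκ : 0 < κ := Real.rpow_pos_of_pos hbase _
  have hκident : C₁ * Y ^ γ * κ ^ γ = 2 * κ := by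
    have e1 : κ ^ (1 - γ) = C₁ * Y ^ γ / 2 := by
      rw [hκdef, ← Real.rpow_mul hbase.le, one_div_mul_cancel h1γ.ne', Real.rpow_one]
    have e2 : κ ^ (1 - γ) * κ ^ γ = κ := by
      rw [← Real.rpow_add hκ]
      norm_num
    nlinarith [e1, e2]
  refine ⟨κ, hκ, (κ * Y / T) ^ (1 - γ), Real.rpow_pos_of_pos (by positivity) _, ?_⟩
  intro x hx hxx
  set s : ℝ := κ * x ^ (-(1 / (1 - γ))) with hsdef
  have hxe : 0 < x ^ ((1:ℝ) / (1 - γ)) := Real.rpow_pos_of_pos hx _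
  have hs : 0 < s := mul_pos hκ (Real.rpow_pos_of_pos hx _)
  -- T ≤ s * Y
  have hTsY : T ≤ s * Y := by
    have h1 : x ^ ((1:ℝ) / (1 - γ)) ≤ κ * Y / T := by
      calc x ^ ((1:ℝ) / (1 - γ)) ≤ ((κ * Y / T) ^ (1 - γ)) ^ ((1:ℝ) / (1 - γ)) :=
            Real.rpow_le_rpow hx.le hxx (by positivity)
        _ = κ * Y / T := by
            rw [← Real.rpow_mul (by positivity), mul_one_div_cancel h1γ.ne', Real.rpow_one]
    have h2 : s * Y = κ * Y / x ^ ((1:ℝ) / (1 - γ)) := by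
      rw [hsdef, Real.rpow_neg hx.le, div_eq_mul_inv]
      ring
    rw [h2, le_div_iff₀ hxe]
    calc T * x ^ ((1:ℝ) / (1 - γ)) ≤ T * (κ * Y / T) :=
          mul_le_mul_of_nonneg_left h1 hT.le
      _ = κ * Y := by field_simp
  -- Markov
  have hset : MeasurableSet {ω | ∑ j, y j * Z ω j ≤ x} :=
    measurableSet_le (Finset.measurable_sum _ fun j _ =>
      measurable_const.mul ((measurable_pi_apply j).comp hZmeas)) measurable_const
  have hsy : ∀ j, 0 ≤ s * y j := fun j => mul_nonneg hs.le (hy0 j)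
  have hint' := hint (fun j => s * y j) hsy
  have hmark : (μ {ω | ∑ j, y j * Z ω j ≤ x}).toReal ≤
      Real.exp (s * x) * φ (fun j => s * y j) := by
    have hEq : ∀ ω, (∑ j, (s * y j) * Z ω j) = s * ∑ j, y j * Z ω j := by
      intro ω
      rw [Finset.mul_sum]
      exact Finset.sum_congr rfl fun j _ => by ring
    have h1 : Real.exp (-(s * x)) * (μ {ω | ∑ j, y j * Z ω j ≤ x}).toReal ≤
        ∫ ω in {ω | ∑ j, y j * Z ω j ≤ x}, Real.exp (-(∑ j, (s * y j) * Z ω j)) ∂μ := by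
      refine le_trans (le_of_eq ?_) (setIntegral_ge_of_const_le_real (c := Real.exp (-(s * x))) hset (measure_ne_top μ _) ?_ hint'.integrableOn)
      · simp [Measure.real, smul_eq_mul, mul_comm]
      intro ω hω
      rw [hEq ω]
      refine Real.exp_le_exp.mpr (neg_le_neg ?_)
      exact mul_le_mul_of_nonneg_left hω hs.le
    have h2 : (∫ ω in {ω | ∑ j, y j * Z ω j ≤ x},
          Real.exp (-(∑ j, (s * y j) * Z ω j)) ∂μ) ≤
        ∫ ω, Real.exp (-(∑ j, (s * y j) * Z ω j)) ∂μ :=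
      setIntegral_le_integral hint' (ae_of_all _ fun ω => (Real.exp_pos _).le)
    have h3 : (∫ ω, Real.exp (-(∑ j, (s * y j) * Z ω j)) ∂μ) = φ (fun j => s * y j) :=
      (hφ _).symm
    have h4 : Real.exp (-(s * x)) * (μ {ω | ∑ j, y j * Z ω j ≤ x}).toReal ≤
        φ (fun j => s * y j) := h1.trans (h2.trans_eq h3)
    calc (μ {ω | ∑ j, y j * Z ω j ≤ x}).toReal
        = Real.exp (s * x) * (Real.exp (-(s * x)) *
            (μ {ω | ∑ j, y j * Z ω j ≤ x}).toReal) := by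
          rw [← mul_assoc, ← Real.exp_add]
          simp
      _ ≤ Real.exp (s * x) * φ (fun j => s * y j) :=
          mul_le_mul_of_nonneg_left h4 (Real.exp_pos _).le
  -- apply part 1
  have hφsy : φ (fun j => s * y j) ≤ Real.exp (-(C₁ * (s * Y) ^ γ)) := by
    have hsum : (∑ j, s * y j) = s * Y := by rw [hYdef, Finset.mul_sum]
    have := hbound (fun j => s * y j) hsy (by rw [hsum]; exact hTsY)
    rwa [hsum] at this
  -- exponent computations
  have hxs : s * x = κ * x ^ (-(γ / (1 - γ))) := by
    have e : -(1 / (1 - γ)) + 1 = -(γ / (1 - γ)) := by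
      field_simp
      ring
    rw [hsdef, mul_assoc]
    congr 1
    calc x ^ (-(1 / (1 - γ))) * x = x ^ (-(1 / (1 - γ))) * x ^ (1:ℝ) := by
          rw [Real.rpow_one]
      _ = x ^ (-(1 / (1 - γ)) + 1) := (Real.rpow_add hx _ _).symm
      _ = x ^ (-(γ / (1 - γ))) := by rw [e]
  have hsYγ : C₁ * (s * Y) ^ γ = 2 * κ * x ^ (-(γ / (1 - γ))) := by
    have h1 : (s * Y) ^ γ = (κ * Y) ^ γ * x ^ (-(γ / (1 - γ))) := by
      rw [hsdef, show κ * x ^ (-(1 / (1 - γ))) * Y = (κ * Y) * x ^ (-(1 / (1 - γ))) by ring,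
        Real.mul_rpow (by positivity) (Real.rpow_pos_of_pos hx _).le,
        ← Real.rpow_mul hx.le]
      congr 2
      field_simp
    rw [h1, Real.mul_rpow hκ.le hY.le]
    calc C₁ * (κ ^ γ * Y ^ γ * x ^ (-(γ / (1 - γ))))
        = (C₁ * Y ^ γ * κ ^ γ) * x ^ (-(γ / (1 - γ))) := by ring
      _ = 2 * κ * x ^ (-(γ / (1 - γ))) := by rw [hκident]
  have hfinal : Real.exp (s * x) * φ (fun j => s * y j) ≤
      Real.exp (-(κ * x ^ (-(γ / (1 - γ))))) := by
    calc Real.exp (s * x) * φ (fun j => s * y j)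
        ≤ Real.exp (s * x) * Real.exp (-(C₁ * (s * Y) ^ γ)) :=
          mul_le_mul_of_nonneg_left hφsy (Real.exp_pos _).le
      _ = Real.exp (s * x - C₁ * (s * Y) ^ γ) := by rw [← Real.exp_add]; ring_nf
      _ = Real.exp (-(κ * x ^ (-(γ / (1 - γ))))) := by
          rw [hxs, hsYγ]; ring_nf
  have hfin2 : (μ {ω | ∑ j, y j * Z ω j ≤ x}).toReal ≤
      Real.exp (-(κ * x ^ (-(γ / (1 - γ))))) := hmark.trans hfinal
  have := ENNReal.ofReal_le_ofReal hfin2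
  rwa [ENNReal.ofReal_toReal (measure_ne_top μ _)] at this
end

section
/- Let m̲ ≥ 2 be an integer with N ≥ m̲ almost surely. Let a̲ > 0 and ε > 0 satisfy (a̲+ε) p < 1 and (a̲+ε) p m̲ < 1, and assume P(N = m̲ and max_{i,j}(A_k)_{ij} ≤ a̲ + ε for all 1 ≤ k ≤ m̲) > 0. Then, with γ(ε) := −log m̲ / log((a̲+ε)p) ∈ (0,1), there exists a constant C₂ > 0 such that φ(t) ≥ exp(−C₂ ‖t‖^{γ(ε)}) for all t ∈ [0,∞)^p with ‖t‖ sufficiently large, and for every fixed nonzero y ∈ [0,∞)^p there exists a constant C_{2,y} > 0 such that P(y·Z ≤ x) ≥ exp(−C_{2,y} x^{−γ(ε)/(1−γ(ε))}) for all x > 0 sufficiently small. -/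
open MeasureTheory ProbabilityTheory Filter

set_option maxHeartbeats 2000000

/-- **Theorem 2.4(b) (the exponential case, lower bound).** Suppose `N ≥ m̲ ≥ 2` a.s. and
`a̲ > 0`, `ε > 0` satisfy `(a̲+ε) p < 1` and `(a̲+ε) p m̲ < 1`, and
`P(N = m̲ and max_{ij}(A_k)_{ij} ≤ a̲+ε for all 1 ≤ k ≤ m̲) > 0`.  Then, with
`γ(ε) = -log m̲ / log((a̲+ε)p) ∈ (0,1)`, there is `C₂ > 0` with
`φ(t) ≥ exp(-C₂ ‖t‖^{γ(ε)})` for `‖t‖` large, and for every fixed nonzero `y ∈ [0,∞)^p`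
there is `C_{2,y} > 0` with `P(y·Z ≤ x) ≥ exp(-C_{2,y} x^{-γ(ε)/(1-γ(ε))})` for small `x > 0`. -/
theorem exponential_decay_lower
    {Ω : Type*} [MeasurableSpace Ω] (μ : Measure Ω) [IsProbabilityMeasure μ]
    {p : ℕ} (hp : 0 < p)
    (N : Ω → ℕ) (hN : ∀ ω, 1 ≤ N ω) (hNmeas : Measurable N)
    (A : ℕ → Ω → Fin p → Fin p → ℝ) (hApos : ∀ k ω i j, 0 ≤ A k ω i j)
    (hAmeas : ∀ k, Measurable (A k))
    (Z : Ω → Fin p → ℝ) (hZmeas : Measurable Z)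
    (hZpos : ∀ᵐ ω ∂μ, ∀ j, 0 < Z ω j)
    (φ : (Fin p → ℝ) → ℝ)
    (hφ : ∀ t : Fin p → ℝ, φ t = ∫ ω, Real.exp (-(∑ j, t j * Z ω j)) ∂μ)
    (hfe : ∀ t : Fin p → ℝ, (∀ j, 0 ≤ t j) →
      φ t = ∫ ω, ∏ k ∈ Finset.Icc 1 (N ω), φ (fun j => ∑ i, t i * A k ω i j) ∂μ)
    (m : ℕ) (hm : 2 ≤ m) (hNm : ∀ᵐ ω ∂μ, m ≤ N ω)
    (a ε : ℝ) (ha : 0 < a) (hε : 0 < ε)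
    (hap : (a + ε) * p < 1) (hapm : (a + ε) * p * m < 1)
    (hevent : 0 < μ {ω | N ω = m ∧ ∀ k, 1 ≤ k → k ≤ m → ∀ i j, A k ω i j ≤ a + ε}) :
    (∃ C₂ > 0, ∃ T > 0, ∀ t : Fin p → ℝ, (∀ j, 0 ≤ t j) → T ≤ ∑ j, t j →
      Real.exp (-(C₂ * (∑ j, t j) ^ (-Real.log m / Real.log ((a + ε) * p)))) ≤ φ t) ∧
    (∀ y : Fin p → ℝ, (∀ j, 0 ≤ y j) → y ≠ 0 →
      ∃ C > 0, ∃ x₀ > 0, ∀ x : ℝ, 0 < x → x ≤ x₀ →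
        ENNReal.ofReal (Real.exp (-(C *
          x ^ (-((-Real.log m / Real.log ((a + ε) * p)) /
            (1 - (-Real.log m / Real.log ((a + ε) * p))))))))
          ≤ μ {ω | ∑ j, y j * Z ω j ≤ x}) := by
  classical
  have hp' : (0:ℝ) < p := by exact_mod_cast hp
  have haε : (0:ℝ) < a + ε := by linarith only [ha, hε]
  set ρ : ℝ := (a + ε) * p with hρdef
  have hρ0 : 0 < ρ := mul_pos haε hp'
  have hρ1 : ρ < 1 := hap
  have hm1 : (1:ℝ) < m := by
    have : (2:ℝ) ≤ m := by exact_mod_cast hm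
    linarith only [this]
  have hm0 : (0:ℝ) < m := by linarith only [hm1]
  set γ : ℝ := -Real.log m / Real.log ρ with hγdef
  have hlogρ : Real.log ρ < 0 := Real.log_neg hρ0 hρ1
  have hlogm : 0 < Real.log m := Real.log_pos hm1
  have hγeq : γ = Real.log m / (-Real.log ρ) := by rw [hγdef]; ring
  have hnegρ : 0 < -Real.log ρ := by linarith only [hlogρ]
  have hγ0 : 0 < γ := by rw [hγeq]; exact div_pos hlogm hnegρ
  have hγ1 : γ < 1 := by
    have hρm : 0 < ρ * m := mul_pos hρ0 hm0
    have h1 : Real.log (ρ * m) < 0 := Real.log_neg hρm hapm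
    rw [Real.log_mul hρ0.ne' hm0.ne'] at h1
    rw [hγeq, div_lt_one hnegρ]
    linarith only [h1]
  -- measurability of coordinates
  have hZj : ∀ j, Measurable fun ω => Z ω j := fun j => (measurable_pi_apply j).comp hZmeas
  have hZnn : ∀ᵐ ω ∂μ, ∀ j, 0 ≤ Z ω j := hZpos.mono fun ω h j => (h j).le
  have hemeas : ∀ t : Fin p → ℝ, Measurable fun ω => Real.exp (-(∑ j, t j * Z ω j)) := by
    intro t
    exact Real.measurable_exp.comp
      ((Finset.measurable_sum _ fun j _ => measurable_const.mul (hZj j)).neg)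
  have heint : ∀ t : Fin p → ℝ, (∀ j, 0 ≤ t j) →
      Integrable (fun ω => Real.exp (-(∑ j, t j * Z ω j))) μ := by
    intro t ht
    refine Integrable.mono' (integrable_const 1) (hemeas t).aestronglyMeasurable ?_
    filter_upwards [hZnn] with ω hω
    rw [Real.norm_eq_abs, abs_of_pos (Real.exp_pos _)]
    refine Real.exp_le_one_iff.mpr (neg_nonpos.mpr ?_)
    exact Finset.sum_nonneg fun j _ => mul_nonneg (ht j) (hω j)
  have φpos : ∀ t : Fin p → ℝ, (∀ j, 0 ≤ t j) → 0 < φ t := by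
    intro t ht
    rw [hφ]
    rw [integral_pos_iff_support_of_nonneg_ae
      (Filter.Eventually.of_forall fun ω => (Real.exp_pos _).le) (heint t ht)]
    have hsupp : Function.support (fun ω => Real.exp (-(∑ j, t j * Z ω j))) = Set.univ :=
      Set.eq_univ_of_forall fun ω => (Real.exp_pos _).ne'
    rw [hsupp]
    simp
  have φle1 : ∀ t : Fin p → ℝ, (∀ j, 0 ≤ t j) → φ t ≤ 1 := by
    intro t ht
    rw [hφ]
    calc ∫ ω, Real.exp (-(∑ j, t j * Z ω j)) ∂μ ≤ ∫ _, (1:ℝ) ∂μ := by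
          refine integral_mono_ae (heint t ht) (integrable_const 1) ?_
          filter_upwards [hZnn] with ω hω
          refine Real.exp_le_one_iff.mpr (neg_nonpos.mpr ?_)
          exact Finset.sum_nonneg fun j _ => mul_nonneg (ht j) (hω j)
      _ = 1 := by simp
  have φmono : ∀ s t : Fin p → ℝ, (∀ j, 0 ≤ s j) → (∀ j, s j ≤ t j) → φ t ≤ φ s := by
    intro s t hs hst
    have ht : ∀ j, 0 ≤ t j := fun j => (hs j).trans (hst j)
    rw [hφ, hφ]
    refine integral_mono_ae (heint t ht) (heint s hs) ?_
    filter_upwards [hZnn] with ω hω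
    refine Real.exp_le_exp.mpr (neg_le_neg ?_)
    exact Finset.sum_le_sum fun j _ => mul_le_mul_of_nonneg_right (hst j) (hω j)
  have gpos : ∀ s : ℝ, 0 ≤ s → 0 < φ (fun _ : Fin p => s) := fun s hs => φpos _ fun _ => hs
  have gle1 : ∀ s : ℝ, 0 ≤ s → φ (fun _ : Fin p => s) ≤ 1 := fun s hs => φle1 _ fun _ => hs
  -- the event
  set E : Set Ω := {ω | N ω = m ∧ ∀ k, 1 ≤ k → k ≤ m → ∀ i j, A k ω i j ≤ a + ε} with hEdef
  have hEmeas : MeasurableSet E := by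
    have h1 : MeasurableSet {ω | N ω = m} := hNmeas (measurableSet_singleton m)
    have h2 : MeasurableSet {ω | ∀ k, 1 ≤ k → k ≤ m → ∀ i j, A k ω i j ≤ a + ε} := by
      have heq : {ω | ∀ k, 1 ≤ k → k ≤ m → ∀ i j, A k ω i j ≤ a + ε} =
          ⋂ (k : ℕ) (_ : 1 ≤ k) (_ : k ≤ m) (i : Fin p) (j : Fin p),
            {ω | A k ω i j ≤ a + ε} := by
        ext ω; simp
      rw [heq]
      refine MeasurableSet.iInter fun k => MeasurableSet.iInter fun _ =>
        MeasurableSet.iInter fun _ => MeasurableSet.iInter fun i =>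
        MeasurableSet.iInter fun j => ?_
      exact measurableSet_le
        ((measurable_pi_apply j).comp ((measurable_pi_apply i).comp (hAmeas k)))
        measurable_const
    have : E = {ω | N ω = m} ∩ {ω | ∀ k, 1 ≤ k → k ≤ m → ∀ i j, A k ω i j ≤ a + ε} := by
      ext ω; simp [hEdef, Set.mem_setOf_eq, Set.mem_inter_iff]
    rw [this]; exact h1.inter h2
  set q : ℝ := (μ E).toReal with hqdef
  have hq0 : 0 < q := ENNReal.toReal_pos hevent.ne' (measure_ne_top μ _)
  have hq1 : q ≤ 1 := by
    have h1 : μ E ≤ 1 := prob_le_one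
    simpa using ENNReal.toReal_mono ENNReal.one_ne_top h1
  -- the recursion step
  have step : ∀ s : ℝ, 0 ≤ s →
      q * φ (fun _ : Fin p => ρ * s) ^ m ≤ φ (fun _ : Fin p => s) := by
    intro s hs
    have hρs : 0 ≤ ρ * s := mul_nonneg hρ0.le hs
    have hgρ : 0 < φ (fun _ : Fin p => ρ * s) := gpos _ hρs
    have hfes := hfe (fun _ => s) fun _ => hs
    set G : Ω → ℝ :=
      fun ω => ∏ k ∈ Finset.Icc 1 (N ω), φ (fun j => ∑ i, s * A k ω i j)
      with hGdef
    have hGpos : ∀ ω, 0 < G ω := by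
      intro ω
      refine Finset.prod_pos fun k _ => φpos _ fun j => ?_
      exact Finset.sum_nonneg fun i _ => mul_nonneg hs (hApos k ω i j)
    have hGint : Integrable G μ := by
      by_contra hni
      rw [integral_undef hni] at hfes
      exact (φpos (fun _ => s) fun _ => hs).ne' hfes
    have hind : ∀ ω, E.indicator (fun _ => φ (fun _ : Fin p => ρ * s) ^ m) ω ≤ G ω := by
      intro ω
      by_cases hω : ω ∈ E
      · rw [Set.indicator_of_mem hω]
        obtain ⟨hNω, hA⟩ := hω
        have hGω : G ω = ∏ k ∈ Finset.Icc 1 m, φ (fun j => ∑ i, s * A k ω i j) := by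
          simp only [hGdef]; rw [hNω]
        rw [hGω]
        calc φ (fun _ : Fin p => ρ * s) ^ m
            = ∏ _k ∈ Finset.Icc 1 m, φ (fun _ : Fin p => ρ * s) := by
              rw [Finset.prod_const, Nat.card_Icc, Nat.add_sub_cancel]
          _ ≤ ∏ k ∈ Finset.Icc 1 m, φ (fun j => ∑ i, s * A k ω i j) := by
              refine Finset.prod_le_prod (fun k _ => hgρ.le) ?_
              intro k hk
              rw [Finset.mem_Icc] at hk
              refine φmono _ _ (fun j => ?_) (fun j => ?_)
              · exact Finset.sum_nonneg fun i _ => mul_nonneg hs (hApos k ω i j)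
              · calc ∑ i, s * A k ω i j ≤ ∑ _i : Fin p, s * (a + ε) :=
                      Finset.sum_le_sum fun i _ =>
                        mul_le_mul_of_nonneg_left (hA k hk.1 hk.2 i j) hs
                  _ = p * (s * (a + ε)) := by
                      rw [Finset.sum_const, Finset.card_univ, Fintype.card_fin, nsmul_eq_mul]
                  _ = ρ * s := by rw [hρdef]; ring
      · rw [Set.indicator_of_notMem hω]; exact (hGpos ω).le
    have hindint : Integrable (E.indicator fun _ => φ (fun _ : Fin p => ρ * s) ^ m) μ :=
      (integrable_const _).indicator hEmeas
    have hle := integral_mono hindint hGint hind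
    rw [integral_indicator_const _ hEmeas, smul_eq_mul] at hle
    calc q * φ (fun _ : Fin p => ρ * s) ^ m ≤ ∫ ω, G ω ∂μ := hle
      _ = φ (fun _ : Fin p => s) := hfes.symm
  -- the log recursion
  set h : ℝ → ℝ := fun s => -Real.log (φ (fun _ : Fin p => s)) with hhdef
  set L : ℝ := -Real.log q with hLdef
  have hL0 : 0 ≤ L := by
    rw [hLdef]; exact neg_nonneg.mpr (Real.log_nonpos hq0.le hq1)
  have hh0 : ∀ s : ℝ, 0 ≤ s → 0 ≤ h s := by
    intro s hs
    simp only [hhdef]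
    exact neg_nonneg.mpr (Real.log_nonpos (gpos s hs).le (gle1 s hs))
  have hmonoh : ∀ s₁ s₂ : ℝ, 0 ≤ s₁ → s₁ ≤ s₂ → h s₁ ≤ h s₂ := by
    intro s₁ s₂ hs₁ hs₂
    simp only [hhdef]
    refine neg_le_neg (Real.log_le_log (gpos s₂ (hs₁.trans hs₂)) ?_)
    exact φmono _ _ (fun _ => hs₁) (fun _ => hs₂)
  have hrec : ∀ s : ℝ, 0 ≤ s → h s ≤ L + m * h (ρ * s) := by
    intro s hs
    have hgρ : 0 < φ (fun _ : Fin p => ρ * s) := gpos _ (mul_nonneg hρ0.le hs)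
    have hlog := Real.log_le_log (by positivity) (step s hs)
    rw [Real.log_mul hq0.ne' (pow_ne_zero m hgρ.ne'), Real.log_pow] at hlog
    simp only [hhdef, hLdef]
    push_cast
    linarith only [hlog]
  have iter : ∀ n : ℕ, ∀ s : ℝ, 0 ≤ s →
      h s ≤ L * (∑ i ∈ Finset.range n, (m:ℝ) ^ i) + (m:ℝ) ^ n * h (ρ ^ n * s) := by
    intro n
    induction n with
    | zero => intro s hs; simp
    | succ n ih =>
      intro s hs
      have h1 := hrec s hs
      have h2 := ih (ρ * s) (mul_nonneg hρ0.le hs)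
      have h3 : (m:ℝ) * h (ρ * s) ≤
          (m:ℝ) * (L * (∑ i ∈ Finset.range n, (m:ℝ) ^ i) + (m:ℝ) ^ n * h (ρ ^ n * (ρ * s))) :=
        mul_le_mul_of_nonneg_left h2 hm0.le
      have h4 : ρ ^ n * (ρ * s) = ρ ^ (n + 1) * s := by ring
      rw [h4] at h3
      rw [geom_sum_succ]
      have h5 : (m:ℝ) * (L * (∑ i ∈ Finset.range n, (m:ℝ) ^ i) + (m:ℝ) ^ n * h (ρ ^ (n+1) * s))
          = L * ((m:ℝ) * (∑ i ∈ Finset.range n, (m:ℝ) ^ i) + 1) + (m:ℝ) ^ (n+1) * h (ρ ^ (n+1) * s)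
            - L := by ring
      linarith only [h1, h3, h5]
  have geo : ∀ n : ℕ, (∑ i ∈ Finset.range n, (m:ℝ) ^ i) ≤ (m:ℝ) ^ n := by
    intro n
    induction n with
    | zero => simp
    | succ n ih =>
      rw [geom_sum_succ']
      have h2 : (2:ℝ) ≤ m := by exact_mod_cast hm
      have h3 : (0:ℝ) ≤ (m:ℝ) ^ n := by positivity
      have h4 : (m:ℝ) ^ (n+1) = m * (m:ℝ) ^ n := by ring
      have h5 := mul_le_mul_of_nonneg_right h2 h3
      linarith only [ih, h4, h5]
  set C₂ : ℝ := (m:ℝ) * (L + h 1) + 1 with hC₂def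
  have hh1 : 0 ≤ h 1 := hh0 1 zero_le_one
  have hC₂ : 0 < C₂ := by
    have : 0 ≤ (m:ℝ) * (L + h 1) := mul_nonneg hm0.le (by linarith only [hL0, hh1])
    rw [hC₂def]; linarith only [this]
  have key1 : ∀ s : ℝ, 1 ≤ s → h s ≤ C₂ * s ^ γ := by
    intro s hs1
    have hs0 : (0:ℝ) < s := lt_of_lt_of_le one_pos hs1
    have hlogs : 0 ≤ Real.log s := Real.log_nonneg hs1
    set n : ℕ := ⌈Real.log s / (-Real.log ρ)⌉₊ with hn
    have hn1 : Real.log s / (-Real.log ρ) ≤ n := Nat.le_ceil _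
    have hn2 : (n:ℝ) < Real.log s / (-Real.log ρ) + 1 := Nat.ceil_lt_add_one (by positivity)
    have hρn : ρ ^ n * s ≤ 1 := by
      have h1 : Real.log s ≤ n * (-Real.log ρ) := (div_le_iff₀ hnegρ).mp hn1
      rw [mul_neg] at h1
      have h2 : ρ ^ n = Real.exp (n * Real.log ρ) := by
        rw [Real.exp_nat_mul, Real.exp_log hρ0]
      have h3 : Real.exp ((n:ℝ) * Real.log ρ) ≤ Real.exp (-Real.log s) :=
        Real.exp_le_exp.mpr (by linarith only [h1])
      have h4 : Real.exp (-Real.log s) = s⁻¹ := by rw [Real.exp_neg, Real.exp_log hs0]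
      calc ρ ^ n * s ≤ s⁻¹ * s := by
            refine mul_le_mul_of_nonneg_right ?_ hs0.le
            rw [h2, ← h4]; exact h3
        _ = 1 := inv_mul_cancel₀ hs0.ne'
    have hmn : (m:ℝ) ^ n ≤ (m:ℝ) * s ^ γ := by
      have h2 : (m:ℝ) ^ n = Real.exp (n * Real.log m) := by
        rw [Real.exp_nat_mul, Real.exp_log hm0]
      have h6 : s ^ γ = Real.exp (Real.log s * γ) := Real.rpow_def_of_pos hs0 γ
      have h7 : (m:ℝ) * s ^ γ = Real.exp (Real.log m + Real.log s * γ) := by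
        rw [Real.exp_add, Real.exp_log hm0, h6]
      rw [h2, h7]
      refine Real.exp_le_exp.mpr ?_
      have h8 : Real.log s * γ = (Real.log s / (-Real.log ρ)) * Real.log m := by
        rw [hγeq]; ring
      have h5 : (n:ℝ) * Real.log m ≤ (Real.log s / (-Real.log ρ) + 1) * Real.log m :=
        mul_le_mul_of_nonneg_right hn2.le hlogm.le
      rw [h8]
      have h5' : (Real.log s / (-Real.log ρ) + 1) * Real.log m =
          Real.log m + Real.log s / (-Real.log ρ) * Real.log m := by ring
      linarith only [h5, h5']
    have h9 := iter n s hs0.le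
    have h10 : h (ρ ^ n * s) ≤ h 1 :=
      hmonoh _ _ (mul_nonneg (pow_nonneg hρ0.le n) hs0.le) hρn
    have h11 := geo n
    have hsγ1 : 1 ≤ s ^ γ := by
      calc (1:ℝ) = 1 ^ γ := (Real.one_rpow γ).symm
        _ ≤ s ^ γ := Real.rpow_le_rpow zero_le_one hs1 hγ0.le
    have hLh1 : 0 ≤ L + h 1 := by linarith only [hL0, hh1]
    have hmn0 : (0:ℝ) ≤ (m:ℝ) ^ n := by positivity
    have e1 : L * (∑ i ∈ Finset.range n, (m:ℝ) ^ i) ≤ L * (m:ℝ) ^ n :=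
      mul_le_mul_of_nonneg_left h11 hL0
    have e2 : (m:ℝ) ^ n * h (ρ ^ n * s) ≤ (m:ℝ) ^ n * h 1 :=
      mul_le_mul_of_nonneg_left h10 hmn0
    have e3 : (m:ℝ) ^ n * (L + h 1) ≤ (m:ℝ) * s ^ γ * (L + h 1) :=
      mul_le_mul_of_nonneg_right hmn hLh1
    rw [hC₂def]
    have e4 : ((m:ℝ) * (L + h 1) + 1) * s ^ γ =
        (m:ℝ) * s ^ γ * (L + h 1) + s ^ γ := by ring
    have e5 : (m:ℝ) ^ n * (L + h 1) = (m:ℝ) ^ n * L + (m:ℝ) ^ n * h 1 := by ring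
    have e6 : (m:ℝ) ^ n * L = L * (m:ℝ) ^ n := by ring
    linarith only [h9, e1, e2, e3, e4, e5, e6, hsγ1]
  have key : ∀ t : Fin p → ℝ, (∀ j, 0 ≤ t j) → 1 ≤ ∑ j, t j →
      Real.exp (-(C₂ * (∑ j, t j) ^ γ)) ≤ φ t := by
    intro t ht hS
    set S : ℝ := ∑ j, t j with hSdef
    have hts : ∀ j, t j ≤ S := fun j =>
      Finset.single_le_sum (fun j _ => ht j) (Finset.mem_univ j)
    have h1 : φ (fun _ : Fin p => S) ≤ φ t := φmono t _ ht hts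
    have h2 : h S ≤ C₂ * S ^ γ := key1 S hS
    have h4 : Real.exp (-h S) = φ (fun _ : Fin p => S) := by
      simp only [hhdef, neg_neg]
      exact Real.exp_log (gpos S (by linarith only [hS]))
    calc Real.exp (-(C₂ * S ^ γ)) ≤ Real.exp (-h S) :=
          Real.exp_le_exp.mpr (neg_le_neg h2)
      _ = φ (fun _ : Fin p => S) := h4
      _ ≤ φ t := h1
  constructor
  · exact ⟨C₂, hC₂, 1, one_pos, key⟩
  · intro y hy hy0
    obtain ⟨j₀, hj₀⟩ : ∃ j, y j ≠ 0 := by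
      by_contra hc; push_neg at hc; exact hy0 (funext hc)
    have hY : 0 < ∑ j, y j :=
      Finset.sum_pos' (fun j _ => hy j) ⟨j₀, Finset.mem_univ _, (hy j₀).lt_of_ne (Ne.symm hj₀)⟩
    set Y : ℝ := ∑ j, y j with hYdef
    have h1γ : 0 < 1 - γ := by linarith only [hγ1]
    set K : ℝ := C₂ * Y ^ γ + 1 with hKdef
    have hK0 : 0 < K := by positivity
    set D : ℝ := max 1 (K ^ (1 - γ)⁻¹) with hDdef
    have hD1 : 1 ≤ D := le_max_left _ _
    have hD0 : 0 < D := lt_of_lt_of_le one_pos hD1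
    have hDY0 : 0 < D * Y := mul_pos hD0 hY
    have hDK : K ≤ D ^ (1 - γ) := by
      have hle : K ^ (1 - γ)⁻¹ ≤ D := le_max_right _ _
      calc K = (K ^ (1 - γ)⁻¹) ^ (1 - γ) := by
            rw [← Real.rpow_mul hK0.le, inv_mul_cancel₀ h1γ.ne', Real.rpow_one]
        _ ≤ D ^ (1 - γ) := Real.rpow_le_rpow (by positivity) hle h1γ.le
    have hDbig : C₂ * (D * Y) ^ γ + 1 ≤ D := by
      have e1 : (D * Y) ^ γ = D ^ γ * Y ^ γ := Real.mul_rpow hD0.le hY.le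
      have e2 : D ^ γ * D ^ (1 - γ) = D := by
        rw [← Real.rpow_add hD0, show γ + (1 - γ) = 1 by ring, Real.rpow_one]
      have e3 : 1 ≤ D ^ γ := by
        calc (1:ℝ) = 1 ^ γ := (Real.one_rpow γ).symm
          _ ≤ D ^ γ := Real.rpow_le_rpow zero_le_one hD1 hγ0.le
      have e4 : D ^ γ * K ≤ D ^ γ * D ^ (1 - γ) :=
        mul_le_mul_of_nonneg_left hDK (by positivity)
      rw [e2] at e4
      have e5 : D ^ γ * K = C₂ * (D ^ γ * Y ^ γ) + D ^ γ := by rw [hKdef]; ring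
      rw [e1]
      linarith only [e3, e4, e5]
    set C : ℝ := C₂ * (D * Y) ^ γ + 1 with hCdef
    have hC0 : 0 < C := by positivity
    refine ⟨C, hC0, min 1 ((D * Y) ^ (1 - γ)), lt_min one_pos (Real.rpow_pos_of_pos hDY0 _), ?_⟩
    intro x hx0 hxle
    have hx1 : x ≤ 1 := le_trans hxle (min_le_left _ _)
    have hxDY : x ≤ (D * Y) ^ (1 - γ) := le_trans hxle (min_le_right _ _)
    set u : ℝ := x ^ (-(γ / (1 - γ))) with hudef
    have hu0 : 0 < u := Real.rpow_pos_of_pos hx0 _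
    have hu1 : 1 ≤ u :=
      Real.one_le_rpow_of_pos_of_le_one_of_nonpos hx0 hx1
        (neg_nonpos.mpr (div_nonneg hγ0.le h1γ.le))
    set θ : ℝ := D * x ^ (-(1 - γ)⁻¹) with hθdef
    have hθ0 : 0 < θ := mul_pos hD0 (Real.rpow_pos_of_pos hx0 _)
    have hxinv : x ^ (1 - γ)⁻¹ ≤ D * Y := by
      calc x ^ (1 - γ)⁻¹ ≤ ((D * Y) ^ (1 - γ)) ^ (1 - γ)⁻¹ :=
            Real.rpow_le_rpow hx0.le hxDY (by positivity)
        _ = D * Y := by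
            rw [← Real.rpow_mul hDY0.le, mul_inv_cancel₀ h1γ.ne', Real.rpow_one]
    have hθY1 : 1 ≤ θ * Y := by
      have e1 : θ * Y = (D * Y) / x ^ (1 - γ)⁻¹ := by
        rw [hθdef, Real.rpow_neg hx0.le, div_eq_mul_inv]; ring
      rw [e1]
      exact (one_le_div (Real.rpow_pos_of_pos hx0 _)).mpr hxinv
    have hty : ∀ j, 0 ≤ θ * y j := fun j => mul_nonneg hθ0.le (hy j)
    have hsum : ∑ j, θ * y j = θ * Y := by rw [hYdef, Finset.mul_sum]
    have hkey := key (fun j => θ * y j) hty (by rw [hsum]; exact hθY1)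
    rw [hsum] at hkey
    set Sx : Set Ω := {ω | ∑ j, y j * Z ω j ≤ x} with hSxdef
    have hSmeas : MeasurableSet Sx :=
      measurableSet_le (Finset.measurable_sum _ fun j _ => measurable_const.mul (hZj j))
        measurable_const
    have hmark : φ (fun j => θ * y j) ≤ (μ Sx).toReal + Real.exp (-(θ * x)) := by
      rw [hφ]
      have hptw : ∀ᵐ ω ∂μ, Real.exp (-(∑ j, (θ * y j) * Z ω j)) ≤
          Sx.indicator (fun _ => (1:ℝ)) ω + Real.exp (-(θ * x)) := by
        filter_upwards [hZnn] with ω hω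
        have hsum2 : ∑ j, (θ * y j) * Z ω j = θ * ∑ j, y j * Z ω j := by
          rw [Finset.mul_sum]; exact Finset.sum_congr rfl fun j _ => by ring
        have hyZ : 0 ≤ ∑ j, y j * Z ω j :=
          Finset.sum_nonneg fun j _ => mul_nonneg (hy j) (hω j)
        by_cases hωS : ω ∈ Sx
        · rw [Set.indicator_of_mem hωS]
          have hle1 : Real.exp (-(∑ j, (θ * y j) * Z ω j)) ≤ 1 := by
            refine Real.exp_le_one_iff.mpr (neg_nonpos.mpr ?_)
            rw [hsum2]; exact mul_nonneg hθ0.le hyZ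
          linarith only [Real.exp_pos (-(θ * x)), hle1]
        · rw [Set.indicator_of_notMem hωS, zero_add]
          have hgt : x ≤ ∑ j, y j * Z ω j := le_of_lt (not_le.mp hωS)
          rw [hsum2]
          refine Real.exp_le_exp.mpr (neg_le_neg ?_)
          exact mul_le_mul_of_nonneg_left hgt hθ0.le
      have hint2 : Integrable
          (fun ω => Sx.indicator (fun _ => (1:ℝ)) ω + Real.exp (-(θ * x))) μ :=
        ((integrable_const 1).indicator hSmeas).add (integrable_const _)
      calc ∫ ω, Real.exp (-(∑ j, (θ * y j) * Z ω j)) ∂μ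
          ≤ ∫ ω, (Sx.indicator (fun _ => (1:ℝ)) ω + Real.exp (-(θ * x))) ∂μ :=
            integral_mono_ae (heint _ hty) hint2 hptw
        _ = (μ Sx).toReal + Real.exp (-(θ * x)) := by
            rw [integral_add ((integrable_const 1).indicator hSmeas) (integrable_const _),
              integral_indicator_const _ hSmeas, integral_const, smul_eq_mul, smul_eq_mul,
              mul_one]
            simp
            rfl
    have hθY : (θ * Y) ^ γ = (D * Y) ^ γ * u := by
      have e1 : θ * Y = (D * Y) * x ^ (-(1 - γ)⁻¹) := by rw [hθdef]; ring
      rw [e1, Real.mul_rpow hDY0.le (Real.rpow_pos_of_pos hx0 _).le]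
      congr 1
      rw [← Real.rpow_mul hx0.le, hudef]
      congr 1
      rw [div_eq_mul_inv]; ring
    have hθx : θ * x = D * u := by
      rw [hθdef, hudef]
      have e1 : x ^ (-(1 - γ)⁻¹) * x = x ^ (-(γ / (1 - γ))) := by
        nth_rewrite 2 [← Real.rpow_one x]
        rw [← Real.rpow_add hx0]
        congr 1
        field_simp
        ring
      rw [mul_assoc, e1]
    have hfinal : Real.exp (-(C * u)) ≤ (μ Sx).toReal := by
      rw [hθx] at hmark
      rw [hθY] at hkey
      have c'0 : 0 ≤ C₂ * (D * Y) ^ γ := by positivity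
      have b2 : Real.exp (-(D * u)) ≤ Real.exp (-(C₂ * (D * Y) ^ γ * u)) * Real.exp (-u) := by
        rw [← Real.exp_add]
        refine Real.exp_le_exp.mpr ?_
        have hmul := mul_le_mul_of_nonneg_right hDbig hu0.le
        rw [hCdef] at hmul
        have hexp : (C₂ * (D * Y) ^ γ + 1) * u = C₂ * (D * Y) ^ γ * u + u := by ring
        linarith only [hmul, hexp]
      have b3 : Real.exp (-u) ≤ 1 / 2 := by
        have h2e : (2:ℝ) ≤ Real.exp 1 := by linarith only [Real.add_one_le_exp 1]
        have hb : Real.exp (-u) ≤ Real.exp (-1) := Real.exp_le_exp.mpr (by linarith only [hu1])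
        have hc : Real.exp (-1) ≤ 1 / 2 := by
          have hmm : Real.exp (-1) * Real.exp 1 = 1 := by
            rw [← Real.exp_add]; norm_num
          have h3 := mul_le_mul_of_nonneg_left h2e (Real.exp_pos (-1)).le
          linarith only [h3, hmm]
        linarith only [hb, hc]
      have b4 : Real.exp (-(C * u)) = Real.exp (-(C₂ * (D * Y) ^ γ * u)) * Real.exp (-u) := by
        rw [← Real.exp_add, hCdef]
        congr 1
        ring
      have hb1 : Real.exp (-(C₂ * ((D * Y) ^ γ * u))) - Real.exp (-(D * u)) ≤ (μ Sx).toReal := by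
        linarith only [hmark, hkey]
      have e6 : -(C₂ * ((D * Y) ^ γ * u)) = -(C₂ * (D * Y) ^ γ * u) := by ring
      rw [e6] at hb1
      rw [b4]
      have hP := Real.exp_pos (-(C₂ * (D * Y) ^ γ * u))
      have hPE := mul_le_mul_of_nonneg_left b3 hP.le
      linarith only [hb1, b2, hPE, hP]
    exact ENNReal.ofReal_le_of_le_toReal hfinal
end

section
/- Let p ≥ 1 be an integer, λ > 0, and let φ : [0,∞)^p → [0,∞) be a bounded measurable function. Let A = (a_{ij}) be a p×p random matrix with entries in [0,∞) which is not almost surely the zero matrix. Suppose there exist q ∈ (0,1) and t_ε > 0 such that φ(t) ≤ q·E[φ(t A)] for all t ∈ [0,∞)^p with ‖t‖ > t_ε. If q·E[(min_{1≤i≤p} Σ_{j=1}^p a_{ij})^{−λ}] < 1, then φ(t) = O(‖t‖^{−λ}) as ‖t‖ → ∞; in fact there exists C > 0 such that φ(t) ≤ C ‖t‖^{−λ} for all nonzero t ∈ [0,∞)^p. -/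
open MeasureTheory ProbabilityTheory Filter

/-- **Lemma 5.1.** If a bounded nonnegative measurable function `φ` on `[0,∞)^p` satisfies
`φ(t) ≤ q E[φ(tA)]` for `‖t‖ > t_ε`, where `A` is a nonnegative random matrix which is not
a.s. zero, and if `q E[(min_i Σ_j a_{ij})^{-λ}] < 1`, then `φ(t) = O(‖t‖^{-λ})`; in fact
`φ(t) ≤ C ‖t‖^{-λ}` for all nonzero `t ∈ [0,∞)^p`. -/
theorem mandelbrot_decay_lemma
    {Ω : Type*} [MeasurableSpace Ω] (μ : Measure Ω) [IsProbabilityMeasure μ]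
    {p : ℕ} (hp : 0 < p) (lam : ℝ) (hlam : 0 < lam)
    (φ : (Fin p → ℝ) → ℝ) (hφmeas : Measurable φ)
    (hφnonneg : ∀ t, 0 ≤ φ t) (hφbdd : ∃ K : ℝ, ∀ t, φ t ≤ K)
    (A : Ω → Fin p → Fin p → ℝ) (hAmeas : Measurable A)
    (hApos : ∀ ω i j, 0 ≤ A ω i j)
    (hAne : ¬ (∀ᵐ ω ∂μ, ∀ i j, A ω i j = 0))
    (q : ℝ) (hq0 : 0 < q) (hq1 : q < 1) (tε : ℝ) (htε : 0 < tε)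
    (hrec : ∀ t : Fin p → ℝ, (∀ j, 0 ≤ t j) → tε < ∑ j, t j →
      φ t ≤ q * ∫ ω, φ (fun j => ∑ i, t i * A ω i j) ∂μ)
    (hcontr : ENNReal.ofReal q *
      ∫⁻ ω, (ENNReal.ofReal (⨅ i, ∑ j, A ω i j)) ^ (-lam) ∂μ < 1) :
    ∃ C > 0, ∀ t : Fin p → ℝ, (∀ j, 0 ≤ t j) → t ≠ 0 →
      φ t ≤ C * (∑ j, t j) ^ (-lam) := by
  classical
  obtain ⟨K₀, hK₀⟩ := hφbdd
  set K : ℝ := max K₀ 1 with hKdef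
  have hK1 : (1:ℝ) ≤ K := le_max_right _ _
  have hKpos : (0:ℝ) < K := lt_of_lt_of_le one_pos hK1
  have hφK : ∀ t, φ t ≤ K := fun t => (hK₀ t).trans (le_max_left _ _)
  haveI : Nonempty (Fin p) := ⟨⟨0, hp⟩⟩
  set m : Ω → ℝ := fun ω => ⨅ i, ∑ j, A ω i j with hmdef
  have hmmeas : Measurable m := by
    apply Measurable.iInf
    intro i
    apply Finset.measurable_sum
    intro j _
    exact (measurable_pi_apply j).comp ((measurable_pi_apply i).comp hAmeas)
  have hm0 : ∀ ω, 0 ≤ m ω :=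
    fun ω => le_ciInf fun i => Finset.sum_nonneg fun j _ => hApos ω i j
  have hmle : ∀ ω i, m ω ≤ ∑ j, A ω i j :=
    fun ω i => ciInf_le (Finite.bddBelow_range _) i
  have hq' : ENNReal.ofReal q ≠ 0 :=
    fun h => absurd (ENNReal.ofReal_eq_zero.1 h) (not_le.2 hq0)
  -- finiteness of the lintegral
  have hfin : ∫⁻ ω, (ENNReal.ofReal (m ω)) ^ (-lam) ∂μ ≠ ⊤ := by
    intro h
    rw [h, ENNReal.mul_top hq'] at hcontr
    exact absurd hcontr (by simp)
  have hmeasE : Measurable fun ω => (ENNReal.ofReal (m ω)) ^ (-lam) :=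
    (ENNReal.measurable_ofReal.comp hmmeas).pow measurable_const
  have hmpos : ∀ᵐ ω ∂μ, 0 < m ω := by
    have hlt := ae_lt_top hmeasE hfin
    filter_upwards [hlt] with ω hω
    by_contra h
    rw [not_lt] at h
    have h0 : ENNReal.ofReal (m ω) = 0 := ENNReal.ofReal_eq_zero.2 h
    rw [h0, ENNReal.zero_rpow_of_neg (neg_neg_of_pos hlam)] at hω
    exact (not_lt.2 le_top) hω
  set g : Ω → ℝ := fun ω => (m ω) ^ (-lam) with hgdef
  have hgmeas : Measurable g := hmmeas.pow measurable_const
  have hg0 : ∀ ω, 0 ≤ g ω := fun ω => Real.rpow_nonneg (hm0 ω) _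
  have hgofReal : ∀ᵐ ω ∂μ, ENNReal.ofReal (g ω) = (ENNReal.ofReal (m ω)) ^ (-lam) := by
    filter_upwards [hmpos] with ω hω
    exact (ENNReal.ofReal_rpow_of_pos hω).symm
  have hglint : ∫⁻ ω, ENNReal.ofReal (g ω) ∂μ < ⊤ := by
    rw [lintegral_congr_ae hgofReal]
    exact lt_top_iff_ne_top.2 hfin
  have hgint : Integrable g μ := by
    refine ⟨hgmeas.aestronglyMeasurable, ?_⟩
    rw [hasFiniteIntegral_iff_norm]
    calc ∫⁻ ω, ENNReal.ofReal ‖g ω‖ ∂μ = ∫⁻ ω, ENNReal.ofReal (g ω) ∂μ :=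
          lintegral_congr fun ω => by rw [Real.norm_of_nonneg (hg0 ω)]
      _ < ⊤ := hglint
  set I : ℝ := ∫ ω, g ω ∂μ with hIdef
  have hI0 : 0 ≤ I := integral_nonneg hg0
  have hlint_eq : ENNReal.ofReal I = ∫⁻ ω, (ENNReal.ofReal (m ω)) ^ (-lam) ∂μ := by
    rw [hIdef, ofReal_integral_eq_lintegral_ofReal hgint (Eventually.of_forall hg0)]
    exact lintegral_congr_ae hgofReal
  have hρ1 : q * I < 1 := by
    have h1 : ENNReal.ofReal (q * I) < 1 := by
      rw [ENNReal.ofReal_mul hq0.le, hlint_eq]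
      exact hcontr
    rwa [← ENNReal.ofReal_one, ENNReal.ofReal_lt_ofReal_iff one_pos] at h1
  set ρ : ℝ := q * I with hρdef
  have hρ0 : 0 ≤ ρ := mul_nonneg hq0.le hI0
  have h1ρ : 0 < 1 - ρ := by linarith
  set B : ℝ := ρ * K * tε ^ lam / (1 - ρ) with hBdef
  have hB0 : 0 ≤ B :=
    div_nonneg (mul_nonneg (mul_nonneg hρ0 hKpos.le) (Real.rpow_nonneg htε.le _)) h1ρ.le
  have hBrec : ρ * B + ρ * K * tε ^ lam = B := by
    rw [hBdef]; field_simp; ring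
  have hKtε : 0 ≤ K * tε ^ lam := mul_nonneg hKpos.le (Real.rpow_nonneg htε.le _)
  have hKle : ∀ x : ℝ, 0 < x → x ≤ tε → K ≤ K * tε ^ lam * x ^ (-lam) := by
    intro x hx hxt
    have h5 : tε ^ (-lam) ≤ x ^ (-lam) :=
      Real.rpow_le_rpow_of_nonpos hx hxt (neg_nonpos_of_nonneg hlam.le)
    have h6 : K * tε ^ lam * tε ^ (-lam) = K := by
      rw [Real.rpow_neg htε.le, mul_assoc,
        mul_inv_cancel₀ (ne_of_gt (Real.rpow_pos_of_pos htε lam)), mul_one]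
    calc K = K * tε ^ lam * tε ^ (-lam) := h6.symm
      _ ≤ K * tε ^ lam * x ^ (-lam) := mul_le_mul_of_nonneg_left h5 hKtε
  -- main induction
  have key : ∀ n : ℕ, ∀ t : Fin p → ℝ, (∀ j, 0 ≤ t j) → tε < ∑ j, t j →
      φ t ≤ q ^ n * K + B * (∑ j, t j) ^ (-lam) := by
    intro n
    induction n with
    | zero =>
      intro t ht hts
      have h0 : 0 ≤ B * (∑ j, t j) ^ (-lam) :=
        mul_nonneg hB0 (Real.rpow_nonneg (le_of_lt (htε.trans hts)) _)
      simpa using le_add_of_le_of_nonneg (hφK t) h0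
    | succ n ih =>
      intro t ht hts
      set s : ℝ := ∑ j, t j with hs
      have hspos : 0 < s := htε.trans hts
      set T : Ω → Fin p → ℝ := fun ω j => ∑ i, t i * A ω i j with hT
      have hT0 : ∀ ω j, 0 ≤ T ω j :=
        fun ω j => Finset.sum_nonneg fun i _ => mul_nonneg (ht i) (hApos ω i j)
      have hTsum : ∀ ω, s * m ω ≤ ∑ j, T ω j := by
        intro ω
        have hcomm : ∑ j, T ω j = ∑ i, t i * ∑ j, A ω i j := by
          rw [hT, Finset.sum_comm]
          simp [Finset.mul_sum]
        rw [hcomm, hs, Finset.sum_mul]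
        exact Finset.sum_le_sum fun i _ =>
          mul_le_mul_of_nonneg_left (hmle ω i) (ht i)
      set c : ℝ := (B + K * tε ^ lam) * s ^ (-lam) with hc
      have hpt : ∀ᵐ ω ∂μ, φ (T ω) ≤ q ^ n * K + c * g ω := by
        filter_upwards [hmpos] with ω hmω
        have hsm : 0 < s * m ω := mul_pos hspos hmω
        have hsm_eq : (s * m ω) ^ (-lam) = s ^ (-lam) * g ω := by
          rw [hgdef, Real.mul_rpow hspos.le (hm0 ω)]
        have hg0ω : 0 ≤ g ω := hg0 ω
        have hsg0 : 0 ≤ s ^ (-lam) * g ω :=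
          mul_nonneg (Real.rpow_nonneg hspos.le _) hg0ω
        have hcg : c * g ω =
            B * (s ^ (-lam) * g ω) + K * tε ^ lam * (s ^ (-lam) * g ω) := by
          rw [hc]; ring
        by_cases hcase : tε < ∑ j, T ω j
        · have h1 := ih (T ω) (hT0 ω) hcase
          have h2 : (∑ j, T ω j) ^ (-lam) ≤ s ^ (-lam) * g ω := by
            rw [← hsm_eq]
            exact Real.rpow_le_rpow_of_nonpos hsm (hTsum ω) (neg_nonpos_of_nonneg hlam.le)
          have h3 : B * (∑ j, T ω j) ^ (-lam) ≤ B * (s ^ (-lam) * g ω) :=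
            mul_le_mul_of_nonneg_left h2 hB0
          have h4 : 0 ≤ K * tε ^ lam * (s ^ (-lam) * g ω) := mul_nonneg hKtε hsg0
          rw [hcg]; linarith
        · rw [not_lt] at hcase
          have hsmtε : s * m ω ≤ tε := (hTsum ω).trans hcase
          have h7 : K ≤ K * tε ^ lam * (s ^ (-lam) * g ω) := by
            rw [← hsm_eq]
            exact hKle _ hsm hsmtε
          have h8 : 0 ≤ B * (s ^ (-lam) * g ω) := mul_nonneg hB0 hsg0
          have h9 : 0 ≤ q ^ n * K := mul_nonneg (pow_nonneg hq0.le n) hKpos.le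
          rw [hcg]
          have := hφK (T ω)
          linarith
      have hTmeas : Measurable fun ω => φ (T ω) := by
        apply hφmeas.comp
        apply measurable_pi_lambda
        intro j
        apply Finset.measurable_sum
        intro i _
        exact ((measurable_pi_apply j).comp ((measurable_pi_apply i).comp hAmeas)).const_mul (t i)
      have hint1 : Integrable (fun ω => φ (T ω)) μ := by
        apply Integrable.mono' (integrable_const K) hTmeas.aestronglyMeasurable
        filter_upwards with ω
        rw [Real.norm_of_nonneg (hφnonneg _)]
        exact hφK _
      have hint2 : Integrable (fun ω => q ^ n * K + c * g ω) μ :=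
        (integrable_const _).add (hgint.const_mul c)
      have hmono := integral_mono_ae hint1 hint2 hpt
      have hrhs : ∫ ω, (q ^ n * K + c * g ω) ∂μ = q ^ n * K + c * I := by
        rw [integral_add (integrable_const _) (hgint.const_mul c), integral_const,
          integral_const_mul, hIdef]
        simp
      calc φ t ≤ q * ∫ ω, φ (T ω) ∂μ := hrec t ht hts
        _ ≤ q * (q ^ n * K + c * I) := by
            apply mul_le_mul_of_nonneg_left _ hq0.le
            rw [← hrhs]; exact hmono
        _ = q ^ (n + 1) * K + (ρ * B + ρ * K * tε ^ lam) * s ^ (-lam) := by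
            rw [hρdef, hc]; ring
        _ = q ^ (n + 1) * K + B * s ^ (-lam) := by rw [hBrec]
  -- conclusion
  refine ⟨max B (K * tε ^ lam),
    lt_max_of_lt_right (mul_pos hKpos (Real.rpow_pos_of_pos htε _)), ?_⟩
  intro t ht htne
  have hspos : 0 < ∑ j, t j := by
    obtain ⟨j, hj⟩ : ∃ j, t j ≠ 0 := by
      by_contra h
      push_neg at h
      exact htne (funext h)
    exact Finset.sum_pos' (fun i _ => ht i) ⟨j, Finset.mem_univ j, (ht j).lt_of_ne' hj⟩
  have hrp0 : 0 ≤ (∑ j, t j) ^ (-lam) := Real.rpow_nonneg hspos.le _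
  by_cases hcase : tε < ∑ j, t j
  · have hlim : Tendsto (fun n : ℕ => q ^ n * K + B * (∑ j, t j) ^ (-lam)) atTop
        (nhds (0 * K + B * (∑ j, t j) ^ (-lam))) :=
      (((tendsto_pow_atTop_nhds_zero_of_lt_one hq0.le hq1).mul_const K).add tendsto_const_nhds)
    have hle : φ t ≤ 0 * K + B * (∑ j, t j) ^ (-lam) :=
      ge_of_tendsto hlim (Eventually.of_forall fun n => key n t ht hcase)
    rw [zero_mul, zero_add] at hle
    exact hle.trans (mul_le_mul_of_nonneg_right (le_max_left _ _) hrp0)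
  · have hsletε : ∑ j, t j ≤ tε := not_lt.1 hcase
    calc φ t ≤ K := hφK t
      _ ≤ K * tε ^ lam * (∑ j, t j) ^ (-lam) := hKle _ hspos hsletε
      _ ≤ max B (K * tε ^ lam) * (∑ j, t j) ^ (-lam) :=
          mul_le_mul_of_nonneg_right (le_max_right _ _) hrp0
end

section
/- Let X be a random variable with P(X > 0) = 1 and let 0 < a < ∞. Consider the statements: (i) E[X^{−a}] < ∞; (ii) E[e^{−tX}] = O(t^{−a}) as t → ∞; (iii) P(X ≤ x) = O(x^a) as x → 0; (iv) for every b ∈ (0,a), E[X^{−b}] < ∞. Then the following implications hold: (i) implies (ii); (ii) and (iii) are equivalent; and (iii) implies (iv). -/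
open MeasureTheory ProbabilityTheory Filter

lemma exp_neg_le_rpow {a : ℝ} (ha : 0 < a) {u : ℝ} (hu : 0 < u) :
    Real.exp (-u) ≤ a ^ a * u ^ (-a) := by
  rw [Real.rpow_def_of_pos ha, Real.rpow_def_of_pos hu, ← Real.exp_add]
  apply Real.exp_le_exp.2
  have h1 : Real.log (u / a) ≤ u / a - 1 := Real.log_le_sub_one_of_pos (by positivity)
  have h2 : Real.log (u / a) = Real.log u - Real.log a := Real.log_div hu.ne' ha.ne'
  have h3 : a * Real.log (u / a) ≤ a * (u / a) := by nlinarith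
  have h4 : a * (u / a) = u := by field_simp
  nlinarith

lemma neg_log_rpow_le {a : ℝ} (ha : 0 < a) {s : ℝ} (hs0 : 0 < s) (hs1 : s < 1) :
    (-Real.log s) ^ a ≤ (2 * a) ^ a * s ^ (-(1/2 : ℝ)) := by
  have hy : (1:ℝ) < s⁻¹ := (one_lt_inv₀ hs0).2 hs1
  have hy0 : (0:ℝ) < s⁻¹ := by positivity
  have hlog : -Real.log s = Real.log s⁻¹ := by rw [Real.log_inv]
  have hstep : Real.log s⁻¹ ≤ 2 * a * (s⁻¹ ^ (1 / (2*a) : ℝ)) := by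
    have h1 : Real.log (s⁻¹ ^ (1 / (2*a) : ℝ)) = (1 / (2*a)) * Real.log s⁻¹ :=
      Real.log_rpow hy0 _
    have h2 : Real.log (s⁻¹ ^ (1 / (2*a) : ℝ)) ≤ s⁻¹ ^ (1 / (2*a) : ℝ) - 1 :=
      Real.log_le_sub_one_of_pos (by positivity)
    have h3 : (1 / (2*a)) * Real.log s⁻¹ ≤ s⁻¹ ^ (1 / (2*a) : ℝ) := by
      nlinarith [Real.rpow_nonneg hy0.le (1 / (2*a) : ℝ)]
    calc Real.log s⁻¹ = 2 * a * ((1 / (2*a)) * Real.log s⁻¹) := by field_simp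
      _ ≤ 2 * a * (s⁻¹ ^ (1 / (2*a) : ℝ)) := by
          apply mul_le_mul_of_nonneg_left h3 (by positivity)
  have hnn : 0 ≤ -Real.log s := by rw [hlog]; exact Real.log_nonneg hy.le
  calc (-Real.log s) ^ a ≤ (2 * a * (s⁻¹ ^ (1 / (2*a) : ℝ))) ^ a := by
        apply Real.rpow_le_rpow hnn (hlog ▸ hstep) ha.le
    _ = (2 * a) ^ a * s ^ (-(1/2 : ℝ)) := by
        rw [Real.mul_rpow (by positivity) (by positivity), ← Real.rpow_mul hy0.le]
        have : (1 / (2*a)) * a = (1/2 : ℝ) := by field_simp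
        rw [this, ← Real.rpow_neg_one s, ← Real.rpow_mul hs0.le]
        norm_num

lemma integrable_exp_neg_mul {Ω : Type*} [MeasurableSpace Ω] (μ : Measure Ω)
    [IsProbabilityMeasure μ] {X : Ω → ℝ} (hXmeas : Measurable X)
    (hXpos : ∀ᵐ ω ∂μ, 0 < X ω) {t : ℝ} (ht : 0 ≤ t) :
    Integrable (fun ω => Real.exp (-(t * X ω))) μ := by
  apply Integrable.mono' (integrable_const (1:ℝ))
  · exact (Real.measurable_exp.comp ((measurable_const.mul hXmeas).neg)).aestronglyMeasurable
  · filter_upwards [hXpos] with ω hω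
    rw [Real.norm_eq_abs, abs_of_pos (Real.exp_pos _)]
    exact Real.exp_le_one_iff.2 (by nlinarith)

lemma part_i_ii {Ω : Type*} [MeasurableSpace Ω] (μ : Measure Ω) [IsProbabilityMeasure μ]
    {X : Ω → ℝ} (hXmeas : Measurable X) (hXpos : ∀ᵐ ω ∂μ, 0 < X ω)
    {a : ℝ} (ha : 0 < a) (h : (∫⁻ ω, ENNReal.ofReal (X ω ^ (-a)) ∂μ) < ⊤) :
    ∃ C > 0, ∃ t₀ > 0, ∀ t : ℝ, t₀ ≤ t →
      ∫ ω, Real.exp (-(t * X ω)) ∂μ ≤ C * t ^ (-a) := by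
  have hmeas : Measurable fun ω => X ω ^ (-a) := by fun_prop
  have hint : Integrable (fun ω => X ω ^ (-a)) μ := by
    refine ⟨hmeas.aestronglyMeasurable, ?_⟩
    rw [hasFiniteIntegral_iff_norm]
    calc ∫⁻ ω, ENNReal.ofReal ‖X ω ^ (-a)‖ ∂μ
        = ∫⁻ ω, ENNReal.ofReal (X ω ^ (-a)) ∂μ := by
          apply lintegral_congr_ae
          filter_upwards [hXpos] with ω hω
          rw [Real.norm_eq_abs, abs_of_pos (Real.rpow_pos_of_pos hω _)]
      _ < ⊤ := h
  set I : ℝ := ∫ ω, X ω ^ (-a) ∂μ with hI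
  have hInn : 0 ≤ I := by
    apply integral_nonneg_of_ae
    filter_upwards [hXpos] with ω hω
    exact (Real.rpow_pos_of_pos hω _).le
  refine ⟨a ^ a * (I + 1), by positivity, 1, one_pos, fun t ht => ?_⟩
  have ht0 : 0 < t := lt_of_lt_of_le one_pos ht
  have step1 : ∫ ω, Real.exp (-(t * X ω)) ∂μ ≤ ∫ ω, a ^ a * t ^ (-a) * X ω ^ (-a) ∂μ := by
    apply integral_mono_ae (integrable_exp_neg_mul μ hXmeas hXpos ht0.le)
      (hint.const_mul _)
    filter_upwards [hXpos] with ω hω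
    calc Real.exp (-(t * X ω)) ≤ a ^ a * (t * X ω) ^ (-a) :=
          exp_neg_le_rpow ha (by positivity)
      _ = a ^ a * t ^ (-a) * X ω ^ (-a) := by
          rw [Real.mul_rpow ht0.le hω.le]; ring
  have step2 : ∫ ω, a ^ a * t ^ (-a) * X ω ^ (-a) ∂μ = a ^ a * t ^ (-a) * I := by
    rw [hI, integral_const_mul]
  have htneg : 0 < t ^ (-a) := Real.rpow_pos_of_pos ht0 _
  calc ∫ ω, Real.exp (-(t * X ω)) ∂μ ≤ a ^ a * t ^ (-a) * I := step1.trans_eq step2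
    _ ≤ a ^ a * (I + 1) * t ^ (-a) := by nlinarith [Real.rpow_pos_of_pos ha (a:ℝ)]

lemma part_ii_iii {Ω : Type*} [MeasurableSpace Ω] (μ : Measure Ω) [IsProbabilityMeasure μ]
    {X : Ω → ℝ} (hXmeas : Measurable X) (hXpos : ∀ᵐ ω ∂μ, 0 < X ω)
    {a : ℝ} (ha : 0 < a)
    (h : ∃ C > 0, ∃ t₀ > 0, ∀ t : ℝ, t₀ ≤ t →
        ∫ ω, Real.exp (-(t * X ω)) ∂μ ≤ C * t ^ (-a)) :
    ∃ C > 0, ∃ x₀ > 0, ∀ x : ℝ, 0 < x → x ≤ x₀ →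
      (μ {ω | X ω ≤ x}).toReal ≤ C * x ^ a := by
  obtain ⟨C, hC, t₀, ht₀, hbound⟩ := h
  refine ⟨Real.exp 1 * C, by positivity, 1 / t₀, by positivity, fun x hx hxle => ?_⟩
  have hxinv : t₀ ≤ x⁻¹ := by
    have h1 : x * t₀ ≤ 1 := (le_div_iff₀ ht₀).1 (by rw [one_div] at hxle ⊢; exact hxle)
    rw [← one_div, le_div_iff₀ hx]
    nlinarith
  have hset : MeasurableSet {ω | X ω ≤ x} := hXmeas measurableSet_Iic
  have key : (μ {ω | X ω ≤ x}).toReal * Real.exp (-1) ≤ ∫ ω, Real.exp (-(x⁻¹ * X ω)) ∂μ := by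
    have := integral_indicator_const (μ := μ) (Real.exp (-1)) hset
    rw [smul_eq_mul, measureReal_def] at this
    rw [← this]
    apply integral_mono ((integrable_const _).indicator hset)
      (integrable_exp_neg_mul μ hXmeas hXpos (by positivity))
    intro ω
    by_cases hω : ω ∈ {ω | X ω ≤ x}
    · rw [Set.indicator_of_mem hω]
      apply Real.exp_le_exp.2
      have : x⁻¹ * X ω ≤ 1 := by
        rw [inv_mul_le_iff₀ hx, mul_one]; exact hω
      linarith
    · rw [Set.indicator_of_notMem hω]
      exact (Real.exp_pos _).le
  have h2 : ∫ ω, Real.exp (-(x⁻¹ * X ω)) ∂μ ≤ C * (x⁻¹) ^ (-a) := hbound _ hxinv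
  have h3 : (x⁻¹ : ℝ) ^ (-a) = x ^ a := by
    rw [← Real.rpow_neg_one x, ← Real.rpow_mul hx.le]
    norm_num
  have h4 := key.trans (h2.trans_eq (by rw [h3]))
  rw [← le_div_iff₀ (Real.exp_pos _)] at h4
  calc (μ {ω | X ω ≤ x}).toReal ≤ C * x ^ a / Real.exp (-1) := h4
    _ = Real.exp 1 * C * x ^ a := by rw [Real.exp_neg]; field_simp

lemma part_iii_ii {Ω : Type*} [MeasurableSpace Ω] (μ : Measure Ω) [IsProbabilityMeasure μ]
    {X : Ω → ℝ} (hXmeas : Measurable X) (hXpos : ∀ᵐ ω ∂μ, 0 < X ω)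
    {a : ℝ} (ha : 0 < a)
    (h : ∃ C > 0, ∃ x₀ > 0, ∀ x : ℝ, 0 < x → x ≤ x₀ →
        (μ {ω | X ω ≤ x}).toReal ≤ C * x ^ a) :
    ∃ C > 0, ∃ t₀ > 0, ∀ t : ℝ, t₀ ≤ t →
      ∫ ω, Real.exp (-(t * X ω)) ∂μ ≤ C * t ^ (-a) := by
  obtain ⟨C, hC, x₀, hx₀, h3⟩ := h
  refine ⟨a ^ a * x₀ ^ (-a) + 2 * C * (2*a) ^ a, by positivity, 1, one_pos, fun t ht => ?_⟩
  have ht0 : (0:ℝ) < t := lt_of_lt_of_le one_pos ht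
  set β : ℝ := Real.exp (-(t * x₀)) with hβ
  have hβpos : 0 < β := Real.exp_pos _
  set K : ℝ := C * (2*a) ^ a * t ^ (-a) with hK
  have hKnn : 0 ≤ K := by positivity
  have hmeasexp : Measurable fun ω => Real.exp (-(t * X ω)) :=
    Real.measurable_exp.comp ((measurable_const.mul hXmeas).neg)
  have heq : ∫ ω, Real.exp (-(t * X ω)) ∂μ
      = (∫⁻ ω, ENNReal.ofReal (Real.exp (-(t * X ω))) ∂μ).toReal := by
    rw [integral_eq_lintegral_of_nonneg_ae (ae_of_all _ fun ω => (Real.exp_pos _).le)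
      hmeasexp.aestronglyMeasurable]
  have hlayer : ∫⁻ ω, ENNReal.ofReal (Real.exp (-(t * X ω))) ∂μ
      = ∫⁻ s in Set.Ioi 0, μ {ω | s < Real.exp (-(t * X ω))} :=
    lintegral_eq_lintegral_meas_lt μ (ae_of_all _ fun ω => (Real.exp_pos _).le)
      hmeasexp.aemeasurable
  set g₁ : ℝ → ENNReal := (Set.Ioc (0:ℝ) β).indicator (fun _ => 1) with hg₁
  set g₂ : ℝ → ENNReal :=
    (Set.Ioc (0:ℝ) 1).indicator (fun s => ENNReal.ofReal (K * s ^ (-(1/2):ℝ))) with hg₂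
  have mg1 : Measurable g₁ := measurable_const.indicator measurableSet_Ioc
  have mg2 : Measurable g₂ := by
    apply Measurable.indicator _ measurableSet_Ioc
    exact ENNReal.measurable_ofReal.comp (by fun_prop)
  have hpoint : ∀ s ∈ Set.Ioi (0:ℝ),
      μ {ω | s < Real.exp (-(t * X ω))} ≤ g₁ s + g₂ s := by
    intro s hs
    simp only [Set.mem_Ioi] at hs
    by_cases hsβ : s ≤ β
    · have : g₁ s = 1 := Set.indicator_of_mem (Set.mem_Ioc.2 ⟨hs, hsβ⟩) _
      calc μ {ω | s < Real.exp (-(t * X ω))} ≤ 1 := prob_le_one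
        _ = g₁ s := this.symm
        _ ≤ g₁ s + g₂ s := le_self_add
    · push_neg at hsβ
      by_cases hs1 : s < 1
      · -- main regime
        set u : ℝ := -Real.log s / t with hu
        have hlogneg : Real.log s < 0 := Real.log_neg hs hs1
        have hupos : 0 < u := by
          apply div_pos (by linarith) ht0
        have hux₀ : u < x₀ := by
          rw [hu, div_lt_iff₀ ht0]
          have : -(t * x₀) < Real.log s := by
            calc -(t * x₀) = Real.log β := (Real.log_exp _).symm
              _ < Real.log s := Real.log_lt_log hβpos hsβ
          nlinarith [this]
        have hincl : {ω | s < Real.exp (-(t * X ω))} ⊆ {ω | X ω ≤ u} := by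
          intro ω hω
          simp only [Set.mem_setOf_eq] at hω ⊢
          have h1 : Real.log s < -(t * X ω) := by
            calc Real.log s < Real.log (Real.exp (-(t * X ω))) := Real.log_lt_log hs hω
              _ = -(t * X ω) := Real.log_exp _
          rw [hu, le_div_iff₀ ht0]
          nlinarith
        have hb : (μ {ω | X ω ≤ u}).toReal ≤ C * u ^ a := h3 u hupos hux₀.le
        have hval : C * u ^ a ≤ K * s ^ (-(1/2):ℝ) := by
          have hua : u ^ a = (-Real.log s) ^ a * t ^ (-a) := by
            rw [hu, Real.div_rpow (by linarith) ht0.le, Real.rpow_neg ht0.le, div_eq_mul_inv]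
          rw [hua, hK]
          have := neg_log_rpow_le ha hs hs1
          have htna : (0:ℝ) < t ^ (-a) := Real.rpow_pos_of_pos ht0 _
          calc C * ((-Real.log s) ^ a * t ^ (-a))
              ≤ C * ((2*a) ^ a * s ^ (-(1/2):ℝ) * t ^ (-a)) := by
                apply mul_le_mul_of_nonneg_left _ hC.le
                exact mul_le_mul_of_nonneg_right this htna.le
            _ = C * (2*a) ^ a * t ^ (-a) * s ^ (-(1/2):ℝ) := by ring
        have hg2val : g₂ s = ENNReal.ofReal (K * s ^ (-(1/2):ℝ)) :=
          Set.indicator_of_mem (Set.mem_Ioc.2 ⟨hs, hs1.le⟩) _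
        calc μ {ω | s < Real.exp (-(t * X ω))} ≤ μ {ω | X ω ≤ u} := measure_mono hincl
          _ = ENNReal.ofReal ((μ {ω | X ω ≤ u}).toReal) := (ENNReal.ofReal_toReal
              (measure_ne_top μ _)).symm
          _ ≤ ENNReal.ofReal (K * s ^ (-(1/2):ℝ)) :=
              ENNReal.ofReal_le_ofReal (hb.trans hval)
          _ = g₂ s := hg2val.symm
          _ ≤ g₁ s + g₂ s := le_add_self
      · -- s ≥ 1 : measure zero
        push_neg at hs1
        have hnull : μ {ω | s < Real.exp (-(t * X ω))} = 0 := by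
          refine measure_mono_null ?_ (ae_iff.1 hXpos)
          · intro ω hω
            simp only [Set.mem_setOf_eq] at hω ⊢
            intro hpos
            have h1 : (1:ℝ) < Real.exp (-(t * X ω)) := lt_of_le_of_lt hs1 hω
            have h2 : 0 < -(t * X ω) := by
              by_contra hcon
              push_neg at hcon
              exact absurd (lt_of_lt_of_le h1 (Real.exp_le_one_iff.2 hcon)) (lt_irrefl _)
            nlinarith
        rw [hnull]
        exact zero_le
  have hsplit : ∫⁻ s in Set.Ioi 0, μ {ω | s < Real.exp (-(t * X ω))}
      ≤ ENNReal.ofReal (β + K * 2) := by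
    calc ∫⁻ s in Set.Ioi 0, μ {ω | s < Real.exp (-(t * X ω))}
        ≤ ∫⁻ s in Set.Ioi 0, (g₁ s + g₂ s) := setLIntegral_mono (mg1.add mg2) hpoint
      _ ≤ ∫⁻ s, (g₁ s + g₂ s) := setLIntegral_le_lintegral _ _
      _ = (∫⁻ s, g₁ s) + ∫⁻ s, g₂ s := lintegral_add_left mg1 _
      _ ≤ ENNReal.ofReal β + ENNReal.ofReal (K * 2) := by
          gcongr
          · -- g₁ integral
            rw [hg₁, lintegral_indicator measurableSet_Ioc, setLIntegral_one,
              Real.volume_Ioc]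
            simp
          · -- g₂ integral
            rw [hg₂, lintegral_indicator measurableSet_Ioc]
            have hint : IntegrableOn (fun s : ℝ => K * s ^ (-(1/2):ℝ)) (Set.Ioc 0 1) :=
              ((intervalIntegral.intervalIntegrable_rpow' (by norm_num)).1).const_mul K
            have hnn : 0 ≤ᵐ[volume.restrict (Set.Ioc (0:ℝ) 1)]
                fun s : ℝ => K * s ^ (-(1/2):ℝ) := by
              apply ae_restrict_of_forall_mem measurableSet_Ioc
              intro s hs
              exact mul_nonneg hKnn (Real.rpow_nonneg hs.1.le _)
            rw [← ofReal_integral_eq_lintegral_ofReal hint hnn]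
            apply ENNReal.ofReal_le_ofReal
            rw [integral_const_mul]
            have hval : ∫ s in Set.Ioc (0:ℝ) 1, s ^ (-(1/2):ℝ) = 2 := by
              rw [← intervalIntegral.integral_of_le zero_le_one,
                integral_rpow (Or.inl (by norm_num))]
              norm_num [Real.one_rpow, Real.zero_rpow]
            rw [hval]
      _ = ENNReal.ofReal (β + K * 2) := (ENNReal.ofReal_add hβpos.le (by positivity)).symm
  rw [heq, hlayer]
  apply (ENNReal.toReal_le_of_le_ofReal (by positivity) hsplit).trans
  have hβle : β ≤ a ^ a * x₀ ^ (-a) * t ^ (-a) := by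
    calc β ≤ a ^ a * (t * x₀) ^ (-a) := exp_neg_le_rpow ha (by positivity)
      _ = a ^ a * x₀ ^ (-a) * t ^ (-a) := by
          rw [Real.mul_rpow ht0.le hx₀.le]; ring
  have : K * 2 = 2 * C * (2*a) ^ a * t ^ (-a) := by rw [hK]; ring
  rw [this]
  nlinarith [hβle]

lemma part_iii_iv {Ω : Type*} [MeasurableSpace Ω] (μ : Measure Ω) [IsProbabilityMeasure μ]
    {X : Ω → ℝ} (hXmeas : Measurable X) (hXpos : ∀ᵐ ω ∂μ, 0 < X ω)
    {a : ℝ} (ha : 0 < a)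
    (h : ∃ C > 0, ∃ x₀ > 0, ∀ x : ℝ, 0 < x → x ≤ x₀ →
        (μ {ω | X ω ≤ x}).toReal ≤ C * x ^ a)
    {b : ℝ} (hb : 0 < b) (hba : b < a) :
    (∫⁻ ω, ENNReal.ofReal (X ω ^ (-b)) ∂μ) < ⊤ := by
  obtain ⟨C, hC, x₀, hx₀, h3⟩ := h
  have hmeas : Measurable fun ω => X ω ^ (-b) := by fun_prop
  have hlayer : ∫⁻ ω, ENNReal.ofReal (X ω ^ (-b)) ∂μ
      = ∫⁻ s in Set.Ioi 0, μ {ω | s < X ω ^ (-b)} := by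
    apply lintegral_eq_lintegral_meas_lt μ _ hmeas.aemeasurable
    filter_upwards [hXpos] with ω hω
    exact (Real.rpow_pos_of_pos hω _).le
  set s₀ : ℝ := x₀ ^ (-b) with hs₀
  have hs₀pos : 0 < s₀ := Real.rpow_pos_of_pos hx₀ _
  rw [hlayer]
  have hsplit : Set.Ioi (0:ℝ) = Set.Ioc 0 s₀ ∪ Set.Ioi s₀ := (Set.Ioc_union_Ioi_eq_Ioi hs₀pos.le).symm
  rw [hsplit, lintegral_union measurableSet_Ioi Set.Ioc_disjoint_Ioi_same]
  apply ENNReal.add_lt_top.2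
  constructor
  · -- small s: bound by 1
    calc ∫⁻ s in Set.Ioc 0 s₀, μ {ω | s < X ω ^ (-b)}
        ≤ ∫⁻ _ in Set.Ioc 0 s₀, 1 := setLIntegral_mono measurable_const
          (fun s _ => prob_le_one)
      _ = volume (Set.Ioc (0:ℝ) s₀) := setLIntegral_one _
      _ < ⊤ := by rw [Real.volume_Ioc]; exact ENNReal.ofReal_lt_top
  · -- large s: bound by C * s^(-a/b)
    have hab : -(a/b) < -1 := by
      rw [neg_lt_neg_iff]
      rw [lt_div_iff₀ hb]
      linarith
    have hint : IntegrableOn (fun s : ℝ => C * s ^ (-(a/b))) (Set.Ioi s₀) :=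
      (integrableOn_Ioi_rpow_of_lt hab hs₀pos).const_mul C
    have hpt : ∀ s ∈ Set.Ioi s₀, μ {ω | s < X ω ^ (-b)}
        ≤ ENNReal.ofReal (C * s ^ (-(a/b))) := by
      intro s hs
      simp only [Set.mem_Ioi] at hs
      have hspos : 0 < s := hs₀pos.trans hs
      set x : ℝ := s ^ (-(1/b)) with hx
      have hxpos : 0 < x := Real.rpow_pos_of_pos hspos _
      have hxle : x ≤ x₀ := by
        rw [hx]
        have : x₀ = s₀ ^ (-(1/b)) := by
          rw [hs₀, ← Real.rpow_mul hx₀.le]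
          have : (-b) * (-(1/b)) = 1 := by field_simp
          rw [this, Real.rpow_one]
        rw [this]
        exact Real.rpow_le_rpow_of_nonpos hs₀pos hs.le (neg_nonpos.2 (by positivity))
      have hincl : {ω | s < X ω ^ (-b)} ≤ᵐ[μ] {ω | X ω ≤ x} := by
        filter_upwards [hXpos] with ω hω hmem
        have hmem' : s < X ω ^ (-b) := hmem
        show X ω ≤ x
        have h1 : X ω = (X ω ^ (-b)) ^ (-(1/b)) := by
          rw [← Real.rpow_mul hω.le]
          have : (-b) * (-(1/b)) = 1 := by field_simp
          rw [this, Real.rpow_one]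
        rw [h1, hx]
        exact Real.rpow_le_rpow_of_nonpos hspos hmem'.le (neg_nonpos.2 (by positivity))
      have hxa : x ^ a = s ^ (-(a/b)) := by
        rw [hx, ← Real.rpow_mul hspos.le]
        congr 1
        field_simp
      calc μ {ω | s < X ω ^ (-b)} ≤ μ {ω | X ω ≤ x} := measure_mono_ae hincl
        _ = ENNReal.ofReal ((μ {ω | X ω ≤ x}).toReal) :=
            (ENNReal.ofReal_toReal (measure_ne_top μ _)).symm
        _ ≤ ENNReal.ofReal (C * s ^ (-(a/b))) := by
            apply ENNReal.ofReal_le_ofReal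
            rw [← hxa]
            exact h3 x hxpos hxle
    calc ∫⁻ s in Set.Ioi s₀, μ {ω | s < X ω ^ (-b)}
        ≤ ∫⁻ s in Set.Ioi s₀, ENNReal.ofReal (C * s ^ (-(a/b))) :=
          setLIntegral_mono (ENNReal.measurable_ofReal.comp (by fun_prop)) hpt
      _ < ⊤ := hint.lintegral_lt_top -- name guess


/-- **Lemma 5.2** (Liu 1999, Lemma 4.4). For a strictly positive random variable `X` and
`0 < a < ∞`, with
(i) `E[X^{-a}] < ∞`,
(ii) `E[e^{-tX}] = O(t^{-a})` as `t → ∞`,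
(iii) `P(X ≤ x) = O(x^a)` as `x → 0`,
(iv) `∀ b ∈ (0,a), E[X^{-b}] < ∞`,
one has (i) ⟹ (ii), (ii) ⟺ (iii) and (iii) ⟹ (iv). -/
theorem harmonic_moment_equivalences
    {Ω : Type*} [MeasurableSpace Ω] (μ : Measure Ω) [IsProbabilityMeasure μ]
    (X : Ω → ℝ) (hXmeas : Measurable X) (hXpos : ∀ᵐ ω ∂μ, 0 < X ω)
    (a : ℝ) (ha : 0 < a) :
    (((∫⁻ ω, ENNReal.ofReal (X ω ^ (-a)) ∂μ) < ⊤) →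
      (∃ C > 0, ∃ t₀ > 0, ∀ t : ℝ, t₀ ≤ t →
        ∫ ω, Real.exp (-(t * X ω)) ∂μ ≤ C * t ^ (-a))) ∧
    ((∃ C > 0, ∃ t₀ > 0, ∀ t : ℝ, t₀ ≤ t →
        ∫ ω, Real.exp (-(t * X ω)) ∂μ ≤ C * t ^ (-a)) ↔
      (∃ C > 0, ∃ x₀ > 0, ∀ x : ℝ, 0 < x → x ≤ x₀ →
        (μ {ω | X ω ≤ x}).toReal ≤ C * x ^ a)) ∧
    ((∃ C > 0, ∃ x₀ > 0, ∀ x : ℝ, 0 < x → x ≤ x₀ →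
        (μ {ω | X ω ≤ x}).toReal ≤ C * x ^ a) →
      (∀ b : ℝ, 0 < b → b < a → (∫⁻ ω, ENNReal.ofReal (X ω ^ (-b)) ∂μ) < ⊤)) := by
  refine ⟨part_i_ii μ hXmeas hXpos ha,
    ⟨fun h => part_ii_iii μ hXmeas hXpos ha h, fun h => part_iii_ii μ hXmeas hXpos ha h⟩,
    fun h b hb hba => part_iii_iv μ hXmeas hXpos ha h hb hba⟩
end

section
/- Let p ≥ 1 be an integer, λ > 0, k ≥ 1, and let A_1, …, A_k be independent, identically distributed p×p random matrices with entries in [0,∞), each distributed as A = (a_{ij}). Then for every nonzero t ∈ [0,∞)^p: E[‖t A_1 A_2 ⋯ A_k‖^{−λ}] ≤ ‖t‖^{−λ} · (E[(min_{1≤i≤p} Σ_{j=1}^p a_{ij})^{−λ}])^k. -/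
open MeasureTheory ProbabilityTheory Filter

/-- antitonicity of negative rpow on ℝ≥0∞ -/
lemma aux_rpow_anti {lam : ℝ} (hlam : 0 < lam) {x y : ENNReal} (h : x ≤ y) :
    y ^ (-lam) ≤ x ^ (-lam) := by
  rw [ENNReal.rpow_neg, ENNReal.rpow_neg]
  exact ENNReal.inv_le_inv.2 (ENNReal.rpow_le_rpow h hlam.le)

/-- key deterministic lemma: `‖t · L.prod‖ ≥ ‖t‖ · ∏ m(B)` for nonnegative data. -/
lemma aux_vecMul_prod {p : ℕ} (hp : 0 < p) :
    ∀ (L : List (Matrix (Fin p) (Fin p) ℝ)), (∀ B ∈ L, ∀ i j, 0 ≤ B i j) →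
    ∀ (t : Fin p → ℝ), (∀ j, 0 ≤ t j) →
      (∀ j, 0 ≤ Matrix.vecMul t L.prod j) ∧
      (∑ j, t j) * (L.map (fun B => ⨅ i, ∑ j, B i j)).prod
        ≤ ∑ j, Matrix.vecMul t L.prod j := by
  haveI : Nonempty (Fin p) := ⟨⟨0, hp⟩⟩
  intro L
  induction L with
  | nil =>
      intro _ t ht
      constructor
      · intro j; simpa [Matrix.vecMul_one] using ht j
      · simp [Matrix.vecMul_one]
  | cons B L ih =>
      intro hL t ht
      have hB : ∀ i j, 0 ≤ B i j := hL B (List.mem_cons_self (a := B) (l := L))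
      set t' : Fin p → ℝ := Matrix.vecMul t B with ht'def
      have ht' : ∀ j, 0 ≤ t' j := by
        intro j
        simp only [ht'def, Matrix.vecMul, dotProduct]
        apply Finset.sum_nonneg
        intro i _
        exact mul_nonneg (ht i) (hB i j)
      have hLrest : ∀ B' ∈ L, ∀ i j, 0 ≤ B' i j :=
        fun B' hB' => hL B' (List.mem_cons_of_mem B hB')
      obtain ⟨h1, h2⟩ := ih hLrest t' ht'
      have hprodeq : Matrix.vecMul t (B :: L).prod = Matrix.vecMul t' L.prod := by
        rw [List.prod_cons, ← Matrix.vecMul_vecMul]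
      constructor
      · intro j; rw [hprodeq]; exact h1 j
      · rw [hprodeq]
        set m : ℝ := ⨅ i, ∑ j, B i j with hm
        have hm0 : 0 ≤ m := by
          apply le_ciInf
          intro i
          exact Finset.sum_nonneg fun j _ => hB i j
        have hmle : ∀ i, m ≤ ∑ j, B i j := fun i =>
          ciInf_le (Set.Finite.bddBelow (Set.finite_range _)) i
        have hsum : ∑ j, t' j = ∑ i, t i * (∑ j, B i j) := by
          simp only [ht'def, Matrix.vecMul, dotProduct]
          rw [Finset.sum_comm]
          simp [Finset.mul_sum]
        have hstep : (∑ j, t j) * m ≤ ∑ j, t' j := by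
          rw [hsum, Finset.sum_mul]
          apply Finset.sum_le_sum
          intro i _
          exact mul_le_mul_of_nonneg_left (hmle i) (ht i)
        have hP0 : 0 ≤ (L.map (fun B => ⨅ i, ∑ j, B i j)).prod := by
          apply List.prod_nonneg
          intro a ha
          obtain ⟨B', hB', rfl⟩ := List.mem_map.1 ha
          exact le_ciInf fun i => Finset.sum_nonneg fun j _ => hLrest B' hB' i j
        calc (∑ j, t j) * ((B :: L).map (fun B => ⨅ i, ∑ j, B i j)).prod
            = ((∑ j, t j) * m) * (L.map (fun B => ⨅ i, ∑ j, B i j)).prod := by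
              rw [List.map_cons, List.prod_cons, ← hm]; ring
          _ ≤ (∑ j, t' j) * (L.map (fun B => ⨅ i, ∑ j, B i j)).prod :=
              mul_le_mul_of_nonneg_right hstep hP0
          _ ≤ ∑ j, Matrix.vecMul t' L.prod j := h2

/-- independence gives product formula for lintegrals. -/
lemma aux_lintegral_prod {Ω ι : Type*} [MeasurableSpace Ω] {μ : Measure Ω}
    [IsProbabilityMeasure μ] (f : ι → Ω → ENNReal) (hmeas : ∀ i, Measurable (f i))
    (hindep : iIndepFun f μ) (s : Finset ι) :
    ∫⁻ ω, ∏ i ∈ s, f i ω ∂μ = ∏ i ∈ s, ∫⁻ ω, f i ω ∂μ := by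
  classical
  induction s using Finset.induction_on with
  | empty => simp
  | insert a s hi ih =>
      have hindepa : IndepFun (∏ j ∈ s, f j) (f a) μ :=
        hindep.indepFun_finsetProd_of_notMem hmeas hi
      have hprodmeas : Measurable (∏ j ∈ s, f j) := by
        rw [show (∏ j ∈ s, f j) = fun ω => ∏ j ∈ s, f j ω from funext fun ω => by simp]
        exact Finset.measurable_prod _ fun i _ => hmeas i
      have hmul := lintegral_mul_eq_lintegral_mul_lintegral_of_indepFun
        hprodmeas (hmeas a) hindepa
      have hfun : ∀ ω, ((∏ j ∈ s, f j) * f a) ω = ∏ i ∈ insert a s, f i ω := by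
        intro ω
        simp [Finset.prod_insert hi, mul_comm]
      rw [show (∫⁻ ω, ∏ i ∈ insert a s, f i ω ∂μ)
            = ∫⁻ ω, ((∏ j ∈ s, f j) * f a) ω ∂μ from by
          congr 1; funext ω; rw [hfun ω]]
      rw [hmul, Finset.prod_insert hi, mul_comm]
      congr 1
      rw [← ih]
      congr 1
      funext ω
      simp

/-- **Inequality (5.4).** If `A_1, …, A_k` are i.i.d. nonnegative `p×p` random matrices
distributed as `A = (a_{ij})`, then for every nonzero `t ∈ [0,∞)^p`,
`E[‖t A_1 ⋯ A_k‖^{-λ}] ≤ ‖t‖^{-λ} (E[(min_i Σ_j a_{ij})^{-λ}])^k`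
(with the convention `0^{-λ} = ∞`). -/
theorem vecMul_chain_neg_moment
    {Ω : Type*} [MeasurableSpace Ω] (μ : Measure Ω) [IsProbabilityMeasure μ]
    {p : ℕ} (hp : 0 < p) (lam : ℝ) (hlam : 0 < lam)
    {k : ℕ} (hk : 1 ≤ k)
    (A : Fin k → Ω → Fin p → Fin p → ℝ)
    (hApos : ∀ l ω i j, 0 ≤ A l ω i j)
    (hAmeas : ∀ l, Measurable (A l))
    (hindep : iIndepFun A μ)
    (hident : ∀ l, μ.map (A l) = μ.map (A ⟨0, hk⟩))
    (t : Fin p → ℝ) (ht : ∀ j, 0 ≤ t j) (ht0 : t ≠ 0) :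
    (∫⁻ ω, (ENNReal.ofReal (∑ j, Matrix.vecMul t
        ((List.ofFn fun l => Matrix.of (A l ω)).prod) j)) ^ (-lam) ∂μ)
      ≤ (ENNReal.ofReal (∑ j, t j)) ^ (-lam) *
        (∫⁻ ω, (ENNReal.ofReal (⨅ i, ∑ j, A ⟨0, hk⟩ ω i j)) ^ (-lam) ∂μ) ^ k := by
  haveI : Nonempty (Fin p) := ⟨⟨0, hp⟩⟩
  classical
  set g : (Fin p → Fin p → ℝ) → ENNReal :=
    fun M => (ENNReal.ofReal (⨅ i, ∑ j, M i j)) ^ (-lam) with hgdef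
  have hgmeas : Measurable g := by
    apply (ENNReal.continuous_rpow_const.measurable).comp
    apply ENNReal.measurable_ofReal.comp
    exact Measurable.iInf fun i => Finset.measurable_sum _
      fun j _ => (measurable_pi_apply j).comp (measurable_pi_apply i)
  set c : ENNReal := (ENNReal.ofReal (∑ j, t j)) ^ (-lam) with hcdef
  -- pointwise bound
  have hpt : ∀ ω, (ENNReal.ofReal (∑ j, Matrix.vecMul t
      ((List.ofFn fun l => Matrix.of (A l ω)).prod) j)) ^ (-lam)
      ≤ c * ∏ l : Fin k, g (A l ω) := by
    intro ω
    set L : List (Matrix (Fin p) (Fin p) ℝ) := List.ofFn fun l => Matrix.of (A l ω) with hLdef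
    have hL : ∀ B ∈ L, ∀ i j, 0 ≤ B i j := by
      intro B hB i j
      rw [hLdef, List.mem_ofFn] at hB
      obtain ⟨l, rfl⟩ := hB
      exact hApos l ω i j
    obtain ⟨hpos, hle⟩ := aux_vecMul_prod hp L hL t ht
    have hmap : (L.map (fun B => ⨅ i, ∑ j, B i j)).prod
        = ∏ l : Fin k, (⨅ i, ∑ j, A l ω i j) := by
      rw [hLdef, List.map_ofFn, List.prod_ofFn]
      rfl
    have hmnn : ∀ l : Fin k, 0 ≤ ⨅ i, ∑ j, A l ω i j := fun l =>
      le_ciInf fun i => Finset.sum_nonneg fun j _ => hApos l ω i j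
    have key : ENNReal.ofReal ((∑ j, t j) * ∏ l : Fin k, (⨅ i, ∑ j, A l ω i j))
        ≤ ENNReal.ofReal (∑ j, Matrix.vecMul t L.prod j) := by
      apply ENNReal.ofReal_le_ofReal
      rw [← hmap]
      exact hle
    refine le_trans (aux_rpow_anti hlam key) ?_
    rw [ENNReal.ofReal_mul (Finset.sum_nonneg fun j _ => ht j),
      ENNReal.ofReal_prod_of_nonneg (fun l _ => hmnn l),
      ENNReal.mul_rpow_of_ne_top ENNReal.ofReal_ne_top
        (ENNReal.prod_ne_top fun l _ => ENNReal.ofReal_ne_top),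
      ENNReal.prod_rpow_of_ne_top (fun l _ => ENNReal.ofReal_ne_top)]
  -- independence of the composed functions
  have hgindep : iIndepFun (fun l ω => g (A l ω)) μ :=
    hindep.comp (fun _ => g) (fun _ => hgmeas)
  have hgAmeas : ∀ l : Fin k, Measurable (fun ω => g (A l ω)) := fun l => hgmeas.comp (hAmeas l)
  have hprodmeas : Measurable fun ω => ∏ l : Fin k, g (A l ω) :=
    Finset.measurable_prod _ fun l _ => hgmeas.comp (hAmeas l)
  have hident' : ∀ l : Fin k, (∫⁻ ω, g (A l ω) ∂μ) = ∫⁻ ω, g (A ⟨0, hk⟩ ω) ∂μ := by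
    intro l
    rw [← lintegral_map hgmeas (hAmeas l), hident l, lintegral_map hgmeas (hAmeas ⟨0, hk⟩)]
  calc (∫⁻ ω, (ENNReal.ofReal (∑ j, Matrix.vecMul t
        ((List.ofFn fun l => Matrix.of (A l ω)).prod) j)) ^ (-lam) ∂μ)
      ≤ ∫⁻ ω, c * ∏ l : Fin k, g (A l ω) ∂μ := lintegral_mono hpt
    _ = c * ∫⁻ ω, ∏ l : Fin k, g (A l ω) ∂μ := lintegral_const_mul c hprodmeas
    _ = c * ∏ l : Fin k, ∫⁻ ω, g (A l ω) ∂μ := by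
        rw [aux_lintegral_prod (fun l ω => g (A l ω)) hgAmeas hgindep Finset.univ]
    _ = c * ∏ _l : Fin k, ∫⁻ ω, g (A ⟨0, hk⟩ ω) ∂μ := by
        congr 1
        exact Finset.prod_congr rfl fun l _ => hident' l
    _ = c * (∫⁻ ω, g (A ⟨0, hk⟩ ω) ∂μ) ^ k := by
        rw [Finset.prod_const, Finset.card_univ, Fintype.card_fin]
    _ = _ := rfl
end

section
/- Let m̲ ≥ 1 be an integer with N ≥ m̲ almost surely, and let a̲ > 0 be a constant such that (A_k)_{ij} ≥ a̲ almost surely for all i, j ∈ {1,…,p} and all 1 ≤ k ≤ m̲. Then for every t ∈ [0,∞)^p and every integer k ≥ 1: φ(t) ≤ [φ(a̲^k p^{k−1} ‖t‖ e)]^{m̲^k}, where e = (1,1,…,1) ∈ ℝ^p. In particular (k = 1), φ(t) ≤ [φ(a̲ ‖t‖ e)]^{m̲}. -/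
open MeasureTheory ProbabilityTheory Filter

/-- **The iteration inequality (5.9).** Suppose `N ≥ m̲ ≥ 1` a.s. and
`(A_k)_{ij} ≥ a̲ > 0` a.s. for all `i,j` and `1 ≤ k ≤ m̲`.  Then for every `t ∈ [0,∞)^p`
and every integer `k ≥ 1`, `φ(t) ≤ [φ(a̲^k p^{k-1} ‖t‖ e)]^{m̲^k}` where `e = (1,…,1)`;
in particular (`k = 1`), `φ(t) ≤ [φ(a̲ ‖t‖ e)]^{m̲}`. -/
theorem laplace_iteration_inequality
    {Ω : Type*} [MeasurableSpace Ω] (μ : Measure Ω) [IsProbabilityMeasure μ]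
    {p : ℕ} (hp : 0 < p)
    (N : Ω → ℕ) (hN : ∀ ω, 1 ≤ N ω) (hNmeas : Measurable N)
    (A : ℕ → Ω → Fin p → Fin p → ℝ) (hApos : ∀ k ω i j, 0 ≤ A k ω i j)
    (hAmeas : ∀ k, Measurable (A k))
    (Z : Ω → Fin p → ℝ) (hZmeas : Measurable Z)
    (hZpos : ∀ᵐ ω ∂μ, ∀ j, 0 < Z ω j)
    (φ : (Fin p → ℝ) → ℝ)
    (hφ : ∀ t : Fin p → ℝ, φ t = ∫ ω, Real.exp (-(∑ j, t j * Z ω j)) ∂μ)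
    (hfe : ∀ t : Fin p → ℝ, (∀ j, 0 ≤ t j) →
      φ t = ∫ ω, ∏ k ∈ Finset.Icc 1 (N ω), φ (fun j => ∑ i, t i * A k ω i j) ∂μ)
    (m : ℕ) (hm : 1 ≤ m) (hNm : ∀ᵐ ω ∂μ, m ≤ N ω)
    (a : ℝ) (ha : 0 < a)
    (hAa : ∀ᵐ ω ∂μ, ∀ k, 1 ≤ k → k ≤ m → ∀ i j, a ≤ A k ω i j) :
    (∀ t : Fin p → ℝ, (∀ j, 0 ≤ t j) → ∀ k : ℕ, 1 ≤ k →
      φ t ≤ (φ (fun _ => a ^ k * (p : ℝ) ^ (k - 1) * ∑ j, t j)) ^ (m ^ k)) ∧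
    (∀ t : Fin p → ℝ, (∀ j, 0 ≤ t j) →
      φ t ≤ (φ (fun _ => a * ∑ j, t j)) ^ m) := by
  -- φ is nonnegative
  have hφ_nonneg : ∀ t : Fin p → ℝ, 0 ≤ φ t := by
    intro t
    rw [hφ]
    exact integral_nonneg fun ω => (Real.exp_pos _).le
  have hZnn : ∀ᵐ ω ∂μ, ∀ j, 0 ≤ Z ω j := hZpos.mono fun ω h j => (h j).le
  have hexp_meas : ∀ t : Fin p → ℝ,
      Measurable fun ω => Real.exp (-(∑ j, t j * Z ω j)) := by
    intro t
    apply Measurable.exp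
    apply Measurable.neg
    exact Finset.measurable_sum _ fun j _ =>
      measurable_const.mul ((measurable_pi_apply j).comp hZmeas)
  have hexp_int : ∀ t : Fin p → ℝ, (∀ j, 0 ≤ t j) →
      Integrable (fun ω => Real.exp (-(∑ j, t j * Z ω j))) μ := by
    intro t ht
    refine Integrable.mono' (integrable_const (1:ℝ))
      (hexp_meas t).aestronglyMeasurable ?_
    filter_upwards [hZnn] with ω hZ
    rw [Real.norm_eq_abs, abs_of_pos (Real.exp_pos _)]
    rw [Real.exp_le_one_iff, neg_nonpos]
    exact Finset.sum_nonneg fun j _ => mul_nonneg (ht j) (hZ j)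
  -- antitonicity
  have hanti : ∀ s t : Fin p → ℝ, (∀ j, 0 ≤ s j) → (∀ j, s j ≤ t j) → φ t ≤ φ s := by
    intro s t hs hst
    rw [hφ, hφ]
    apply integral_mono_of_nonneg
    · exact Filter.Eventually.of_forall fun ω => (Real.exp_pos _).le
    · exact hexp_int s hs
    · filter_upwards [hZnn] with ω hZ
      apply Real.exp_le_exp.2
      apply neg_le_neg
      exact Finset.sum_le_sum fun j _ => mul_le_mul_of_nonneg_right (hst j) (hZ j)
  -- φ ≤ 1 on nonneg vectors
  have hφ_le_one : ∀ t : Fin p → ℝ, (∀ j, 0 ≤ t j) → φ t ≤ 1 := by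
    intro t ht
    rw [hφ]
    calc ∫ ω, Real.exp (-(∑ j, t j * Z ω j)) ∂μ
        ≤ ∫ _, (1:ℝ) ∂μ := by
          apply integral_mono_of_nonneg
          · exact Filter.Eventually.of_forall fun ω => (Real.exp_pos _).le
          · exact integrable_const _
          · filter_upwards [hZnn] with ω hZ
            rw [Real.exp_le_one_iff, neg_nonpos]
            exact Finset.sum_nonneg fun j _ => mul_nonneg (ht j) (hZ j)
      _ = 1 := by simp
  -- the key one-step inequality
  have key : ∀ t : Fin p → ℝ, (∀ j, 0 ≤ t j) →
      φ t ≤ (φ (fun _ => a * ∑ j, t j)) ^ m := by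
    intro t ht
    have hsum0 : 0 ≤ ∑ j, t j := Finset.sum_nonneg fun j _ => ht j
    have hc0 : 0 ≤ φ (fun _ => a * ∑ j, t j) := hφ_nonneg _
    rw [hfe t ht]
    calc ∫ ω, ∏ k ∈ Finset.Icc 1 (N ω), φ (fun j => ∑ i, t i * A k ω i j) ∂μ
        ≤ ∫ _, (φ (fun _ => a * ∑ j, t j)) ^ m ∂μ := by
          apply integral_mono_of_nonneg
          · exact Filter.Eventually.of_forall fun ω =>
              Finset.prod_nonneg fun k _ => hφ_nonneg _
          · exact integrable_const _
          · filter_upwards [hNm, hAa] with ω hNω hAω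
            have hsub : Finset.Icc 1 m ⊆ Finset.Icc 1 (N ω) :=
              Finset.Icc_subset_Icc le_rfl hNω
            have h1 : ∏ k ∈ Finset.Icc 1 (N ω), φ (fun j => ∑ i, t i * A k ω i j)
                ≤ ∏ k ∈ Finset.Icc 1 m, φ (fun j => ∑ i, t i * A k ω i j) := by
              rw [← Finset.prod_sdiff hsub]
              apply mul_le_of_le_one_left
              · exact Finset.prod_nonneg fun k _ => hφ_nonneg _
              · apply Finset.prod_le_one
                · exact fun k _ => hφ_nonneg _
                · intro k _
                  apply hφ_le_one
                  intro j
                  exact Finset.sum_nonneg fun i _ =>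
                    mul_nonneg (ht i) (hApos k ω i j)
            have h2 : ∏ k ∈ Finset.Icc 1 m, φ (fun j => ∑ i, t i * A k ω i j)
                ≤ (φ (fun _ => a * ∑ j, t j)) ^ m := by
              have : ∏ k ∈ Finset.Icc 1 m, φ (fun j => ∑ i, t i * A k ω i j)
                  ≤ ∏ _k ∈ Finset.Icc 1 m, φ (fun _ => a * ∑ j, t j) := by
                apply Finset.prod_le_prod
                · exact fun k _ => hφ_nonneg _
                · intro k hk
                  rw [Finset.mem_Icc] at hk
                  apply hanti
                  · intro j
                    exact mul_nonneg ha.le hsum0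
                  · intro j
                    calc a * ∑ i, t i = ∑ i, t i * a := by
                          rw [Finset.mul_sum]
                          exact Finset.sum_congr rfl fun i _ => mul_comm _ _
                      _ ≤ ∑ i, t i * A k ω i j :=
                          Finset.sum_le_sum fun i _ =>
                            mul_le_mul_of_nonneg_left (hAω k hk.1 hk.2 i j) (ht i)
              simpa [Nat.card_Icc] using this
            exact h1.trans h2
      _ = (φ (fun _ => a * ∑ j, t j)) ^ m := by simp
  -- the iterated inequality
  have main : ∀ t : Fin p → ℝ, (∀ j, 0 ≤ t j) → ∀ k : ℕ, 1 ≤ k →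
      φ t ≤ (φ (fun _ => a ^ k * (p : ℝ) ^ (k - 1) * ∑ j, t j)) ^ (m ^ k) := by
    intro t ht k hk
    induction k with
    | zero => omega
    | succ k ih =>
      rcases Nat.eq_zero_or_pos k with hk0 | hk1
      · subst hk0
        simpa using key t ht
      · have ih' := ih hk1
        set s : ℝ := ∑ j, t j with hs
        have hsum0 : 0 ≤ s := Finset.sum_nonneg fun j _ => ht j
        set t' : Fin p → ℝ := fun _ => a ^ k * (p : ℝ) ^ (k - 1) * s with ht'
        have ht'nn : ∀ j, 0 ≤ t' j := fun j =>
          mul_nonneg (mul_nonneg (pow_nonneg ha.le _) (pow_nonneg (Nat.cast_nonneg p) _)) hsum0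
        have hstep := key t' ht'nn
        have hsumeq : (fun _ : Fin p => a * ∑ j, t' j)
            = fun _ : Fin p => a ^ (k+1) * (p : ℝ) ^ (k + 1 - 1) * s := by
          funext i
          have h1 : ∑ j : Fin p, t' j = (p : ℝ) * (a ^ k * (p : ℝ) ^ (k - 1) * s) := by
            simp [ht', Finset.sum_const, mul_comm]
          rw [h1]
          have h2 : (p : ℝ) ^ (k + 1 - 1) = (p : ℝ) ^ (k - 1) * p := by
            rw [← pow_succ]
            congr 1
            omega
          rw [h2, pow_succ]
          ring
        rw [hsumeq] at hstep
        calc φ t ≤ (φ t') ^ (m ^ k) := ih'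
          _ ≤ ((φ (fun _ => a ^ (k+1) * (p : ℝ) ^ (k + 1 - 1) * s)) ^ m) ^ (m ^ k) :=
              pow_le_pow_left₀ (hφ_nonneg t') hstep _
          _ = (φ (fun _ => a ^ (k+1) * (p : ℝ) ^ (k + 1 - 1) * s)) ^ (m ^ (k+1)) := by
              rw [← pow_mul, ← pow_succ']
  exact ⟨main, key⟩
end

section
/- Let p ≥ 1 and n ≥ 1 be integers, let t ≥ 1 be a real number, and let B_1, …, B_n be p×p matrices with entries in [0,∞). Then for all indices i, j ∈ {1,…,p}: (B_1^{(t)} B_2^{(t)} ⋯ B_n^{(t)})_{ij} ≤ ((B_1 B_2 ⋯ B_n)_{ij})^t ≤ p^{(t−1)(n−1)} (B_1^{(t)} B_2^{(t)} ⋯ B_n^{(t)})_{ij}. -/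
open Matrix

private lemma real_add_rpow_le {a b t : ℝ} (ha : 0 ≤ a) (hb : 0 ≤ b) (ht : 1 ≤ t) :
    a ^ t + b ^ t ≤ (a + b) ^ t := by
  lift a to NNReal using ha
  lift b to NNReal using hb
  have := NNReal.add_rpow_le_rpow_add a b ht
  exact_mod_cast this

private lemma sum_rpow_le_rpow_sum' {ι : Type*} {t : ℝ} (ht : 1 ≤ t) (s : Finset ι) (f : ι → ℝ)
    (hf : ∀ i ∈ s, 0 ≤ f i) : ∑ i ∈ s, f i ^ t ≤ (∑ i ∈ s, f i) ^ t := by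
  induction s using Finset.cons_induction with
  | empty => simp [Real.zero_rpow (by linarith : t ≠ 0)]
  | cons a s ha ih =>
    rw [Finset.sum_cons, Finset.sum_cons]
    have h1 : 0 ≤ f a := hf a (Finset.mem_cons_self _ _)
    have h2 : ∀ i ∈ s, 0 ≤ f i := fun i hi => hf i (Finset.mem_cons_of_mem hi)
    calc f a ^ t + ∑ i ∈ s, f i ^ t ≤ f a ^ t + (∑ i ∈ s, f i) ^ t :=
          add_le_add (le_refl _) (ih h2)
      _ ≤ (f a + ∑ i ∈ s, f i) ^ t := real_add_rpow_le h1 (Finset.sum_nonneg h2) ht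

private lemma list_prod_entry_nonneg {p : ℕ} (L : List (Matrix (Fin p) (Fin p) ℝ))
    (hL : ∀ A ∈ L, ∀ i j, 0 ≤ A i j) : ∀ i j, 0 ≤ L.prod i j := by
  induction L with
  | nil =>
    intro i j
    rw [List.prod_nil]
    by_cases h : i = j <;> simp [Matrix.one_apply, h]
  | cons A M ih =>
    intro i j
    rw [List.prod_cons, Matrix.mul_apply]
    refine Finset.sum_nonneg fun k _ => mul_nonneg (hL A (List.mem_cons_self) i k) ?_
    exact ih (fun A' hA' => hL A' (List.mem_cons_of_mem _ hA')) k j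

private lemma aux_bounds {p : ℕ} (hp : 0 < p) {t : ℝ} (ht : 1 ≤ t)
    (L : List (Matrix (Fin p) (Fin p) ℝ)) :
    L ≠ [] → (∀ A ∈ L, ∀ i j, 0 ≤ A i j) → ∀ i j,
    (L.map (fun A => A.map (fun x => x ^ t))).prod i j ≤ (L.prod i j) ^ t ∧
    (L.prod i j) ^ t ≤ (p : ℝ) ^ ((t - 1) * ((L.length : ℝ) - 1)) *
      (L.map (fun A => A.map (fun x => x ^ t))).prod i j := by
  induction L with
  | nil => intro h; exact absurd rfl h
  | cons A M ih =>
    intro _ hL i j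
    have hA : ∀ i j, 0 ≤ A i j := hL A (List.mem_cons_self)
    rcases eq_or_ne M [] with rfl | hM
    · constructor
      · simp [Matrix.map_apply]
      · simp [Matrix.map_apply]
    · have hMnn : ∀ A' ∈ M, ∀ i j, 0 ≤ A' i j :=
        fun A' hA' => hL A' (List.mem_cons_of_mem _ hA')
      have hC : ∀ k j, 0 ≤ M.prod k j := list_prod_entry_nonneg M hMnn
      have hCf : ∀ k j, 0 ≤ (M.map (fun A => A.map (fun x => x ^ t))).prod k j := by
        refine list_prod_entry_nonneg _ ?_
        intro A' hA' i j
        rcases List.mem_map.1 hA' with ⟨A'', hA'', rfl⟩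
        exact Real.rpow_nonneg (hMnn A'' hA'' i j) t
      have hterm : ∀ k : Fin p, 0 ≤ A i k * M.prod k j :=
        fun k => mul_nonneg (hA i k) (hC k j)
      have prodL : (A :: M).prod i j = ∑ k, A i k * M.prod k j := by
        rw [List.prod_cons, Matrix.mul_apply]
      have prodLf : ((A :: M).map (fun A => A.map (fun x => x ^ t))).prod i j
          = ∑ k, (A i k) ^ t * (M.map (fun A => A.map (fun x => x ^ t))).prod k j := by
        rw [List.map_cons, List.prod_cons, Matrix.mul_apply]
        simp [Matrix.map_apply]
      constructor
      · rw [prodL, prodLf]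
        calc ∑ k, (A i k) ^ t * (M.map (fun A => A.map (fun x => x ^ t))).prod k j
            ≤ ∑ k, (A i k) ^ t * (M.prod k j) ^ t := by
              refine Finset.sum_le_sum fun k _ => ?_
              exact mul_le_mul_of_nonneg_left ((ih hM hMnn k j).1)
                (Real.rpow_nonneg (hA i k) t)
          _ = ∑ k, (A i k * M.prod k j) ^ t := by
              refine Finset.sum_congr rfl fun k _ => ?_
              rw [Real.mul_rpow (hA i k) (hC k j)]
          _ ≤ (∑ k, A i k * M.prod k j) ^ t :=
              sum_rpow_le_rpow_sum' ht _ _ fun k _ => hterm k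
      · rw [prodL, prodLf]
        have step1 : (∑ k, A i k * M.prod k j) ^ t
            ≤ (p : ℝ) ^ (t - 1) * ∑ k, (A i k * M.prod k j) ^ t := by
          have := Real.rpow_sum_le_const_mul_sum_rpow_of_nonneg (Finset.univ)
            (f := fun k => A i k * M.prod k j) ht (fun k _ => hterm k)
          simpa using this
        have step2 : ∑ k, (A i k * M.prod k j) ^ t
            ≤ (p : ℝ) ^ ((t - 1) * ((M.length : ℝ) - 1)) *
              ∑ k, (A i k) ^ t * (M.map (fun A => A.map (fun x => x ^ t))).prod k j := by
          rw [Finset.mul_sum]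
          refine Finset.sum_le_sum fun k _ => ?_
          rw [Real.mul_rpow (hA i k) (hC k j)]
          calc (A i k) ^ t * (M.prod k j) ^ t
              ≤ (A i k) ^ t * ((p : ℝ) ^ ((t - 1) * ((M.length : ℝ) - 1)) *
                (M.map (fun A => A.map (fun x => x ^ t))).prod k j) :=
                mul_le_mul_of_nonneg_left ((ih hM hMnn k j).2) (Real.rpow_nonneg (hA i k) t)
            _ = (p : ℝ) ^ ((t - 1) * ((M.length : ℝ) - 1)) *
                ((A i k) ^ t * (M.map (fun A => A.map (fun x => x ^ t))).prod k j) := by ring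
        have hppos : (0 : ℝ) < p := by exact_mod_cast hp
        calc (∑ k, A i k * M.prod k j) ^ t
            ≤ (p : ℝ) ^ (t - 1) * ∑ k, (A i k * M.prod k j) ^ t := step1
          _ ≤ (p : ℝ) ^ (t - 1) * ((p : ℝ) ^ ((t - 1) * ((M.length : ℝ) - 1)) *
              ∑ k, (A i k) ^ t * (M.map (fun A => A.map (fun x => x ^ t))).prod k j) :=
              mul_le_mul_of_nonneg_left step2 (Real.rpow_nonneg hppos.le _)
          _ = (p : ℝ) ^ ((t - 1) * (((A :: M).length : ℝ) - 1)) *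
              ∑ k, (A i k) ^ t * (M.map (fun A => A.map (fun x => x ^ t))).prod k j := by
              rw [← mul_assoc, ← Real.rpow_add hppos]
              congr 2
              simp only [List.length_cons]
              push_cast
              ring

/-- **Inequality (3.5).** For nonnegative `p×p` matrices `B_1, …, B_n` and `t ≥ 1`, writing
`B^{(t)}` for the entrywise `t`-th power, one has, entrywise,
`(B_1^{(t)} ⋯ B_n^{(t)})_{ij} ≤ ((B_1 ⋯ B_n)_{ij})^t ≤ p^{(t-1)(n-1)} (B_1^{(t)} ⋯ B_n^{(t)})_{ij}`. -/
theorem entrywise_power_prod_bounds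
    {p n : ℕ} (hp : 0 < p) (hn : 1 ≤ n) (t : ℝ) (ht : 1 ≤ t)
    (B : Fin n → Matrix (Fin p) (Fin p) ℝ) (hB : ∀ l i j, 0 ≤ B l i j)
    (i j : Fin p) :
    ((List.ofFn fun l => (B l).map (fun x => x ^ t)).prod) i j
        ≤ ((List.ofFn B).prod i j) ^ t ∧
    ((List.ofFn B).prod i j) ^ t
        ≤ (p : ℝ) ^ ((t - 1) * ((n : ℝ) - 1)) *
          ((List.ofFn fun l => (B l).map (fun x => x ^ t)).prod) i j := by
  have hmap : (List.ofFn fun l => (B l).map (fun x => x ^ t))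
      = (List.ofFn B).map (fun A => A.map (fun x => x ^ t)) := by
    rw [List.map_ofFn]
    rfl
  have hne : List.ofFn B ≠ [] := by
    simp [← List.length_pos_iff, hn]
    omega
  have hnn : ∀ A ∈ List.ofFn B, ∀ i j, 0 ≤ A i j := by
    intro A hA
    rcases List.mem_ofFn.1 hA with ⟨l, rfl⟩
    exact hB l
  have := aux_bounds hp ht (List.ofFn B) hne hnn i j
  rw [hmap]
  simpa using this
end
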